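/- arXiv:math/0208133 — 5 statements merged into one kernel-verified Lean document; each statement's English description precedes it below -/
import Mathlib

section
/- Let K : ℝ → ℝ be continuous and periodic with period 1 (the curvature along a closed geodesic of length 1, lifted to the universal cover). Then the following are equivalent: (i) for every C¹ function f : ℝ → ℝ with f(t+1) = f(t) for all t, ∫₀¹ K f² ≤ ∫₀¹ (f')²; (ii) for every C¹ function f : ℝ → ℝ with compact support, ∫_ℝ K f² ≤ ∫_ℝ (f')². (A closed geodesic is stable if and only if its universal cover is stable.) -/
open MeasureTheory

private lemma perInt {K : ℝ → ℝ} (hper : ∀ t, K (t + 1) = K t) (n : ℤ) (t : ℝ) :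
    K (t + n) = K t := by
  have h : Function.Periodic K 1 := hper
  simpa using (h.int_mul n) t

/-- Universal-cover (compactly supported) stability implies closed-geodesic stability,
via smooth cutoffs of the periodic test function. -/
private lemma backward (K : ℝ → ℝ) (hK : Continuous K) (hper : ∀ t, K (t + 1) = K t)
    (H : ∀ f : ℝ → ℝ, ContDiff ℝ 1 f → HasCompactSupport f →
        (∫ t, K t * (f t) ^ 2) ≤ ∫ t, (deriv f t) ^ 2)
    (f : ℝ → ℝ) (hf : ContDiff ℝ 1 f) (hfper : ∀ t, f (t + 1) = f t) :
    (∫ t in (0:ℝ)..1, K t * (f t) ^ 2) ≤ ∫ t in (0:ℝ)..1, (deriv f t) ^ 2 := by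
  classical
  have hfc : Continuous f := hf.continuous
  have hf'c : Continuous (deriv f) := hf.continuous_deriv le_rfl
  have hfint : ∀ (n : ℤ) (t : ℝ), f (t + n) = f t := by
    intro n t
    have h : Function.Periodic f 1 := hfper
    simpa using (h.int_mul n) t
  have hf'per : ∀ t, deriv f (t + 1) = deriv f t := by
    intro t
    have h1 : HasDerivAt (fun s : ℝ => f (s + 1)) (deriv f (t + 1) * 1) t :=
      ((hf.differentiable one_ne_zero (t + 1)).hasDerivAt).comp t ((hasDerivAt_id t).add_const 1)
    have h2 : HasDerivAt f (deriv f (t + 1)) t := by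
      have he : (fun s : ℝ => f (s + 1)) = f := funext hfper
      simpa [he] using h1
    exact h2.deriv.symm
  set p := Real.smoothTransition with hp
  have hpc : ContDiff ℝ 1 p := Real.smoothTransition.contDiff
  set h₁ : ℝ → ℝ := fun t => f t * p (t + 1) with hh₁
  set h₂ : ℝ → ℝ := fun s => f s * p (1 - s) with hh₂
  have hh₁c : ContDiff ℝ 1 h₁ := hf.mul (hpc.comp (contDiff_id.add contDiff_const))
  have hh₂c : ContDiff ℝ 1 h₂ := hf.mul (hpc.comp (contDiff_const.sub contDiff_id))
  set IK := ∫ t in (0:ℝ)..1, K t * f t ^ 2 with hIK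
  set ID := ∫ t in (0:ℝ)..1, (deriv f t) ^ 2 with hID
  set A₁ := ∫ t in (-2:ℝ)..0, K t * h₁ t ^ 2 with hA₁
  set A₂ := ∫ t in (0:ℝ)..2, K t * h₂ t ^ 2 with hA₂
  set D₁ := ∫ t in (-2:ℝ)..0, (deriv h₁ t) ^ 2 with hD₁
  set D₂ := ∫ t in (0:ℝ)..2, (deriv h₂ t) ^ 2 with hD₂
  have key : ∀ n : ℕ, 1 ≤ n → A₁ + (n : ℝ) * IK + A₂ ≤ D₁ + (n : ℝ) * ID + D₂ := by
    intro n hn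
    have hn1 : (1 : ℝ) ≤ (n : ℝ) := by exact_mod_cast hn
    set g : ℝ → ℝ := fun t => f t * (p (t + 1) * p ((n : ℝ) + 1 - t)) with hg
    have hgc : ContDiff ℝ 1 g :=
      hf.mul ((hpc.comp (contDiff_id.add contDiff_const)).mul
        (hpc.comp (contDiff_const.sub contDiff_id)))
    have hg0 : ∀ x : ℝ, x ∉ Set.Icc (-1 : ℝ) ((n : ℝ) + 1) → g x = 0 := by
      intro x hx
      rw [Set.mem_Icc, not_and_or] at hx
      rcases hx with hx | hx
      · push_neg at hx
        have hz : p (x + 1) = 0 := Real.smoothTransition.zero_of_nonpos (by linarith)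
        simp [hg, hz]
      · push_neg at hx
        have hz : p ((n : ℝ) + 1 - x) = 0 := Real.smoothTransition.zero_of_nonpos (by linarith)
        simp [hg, hz]
    have hgsupp : HasCompactSupport g := HasCompactSupport.intro isCompact_Icc hg0
    have hgts : tsupport g ⊆ Set.Icc (-1 : ℝ) ((n : ℝ) + 1) :=
      closure_minimal (Function.support_subset_iff'.2 hg0) isClosed_Icc
    have hgcont : Continuous g := hgc.continuous
    have hg'c : Continuous (deriv g) := hgc.continuous_deriv le_rfl
    have heq1 : ∀ t : ℝ, t < 1 → g t = h₁ t := by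
      intro t ht
      have h1 : p ((n : ℝ) + 1 - t) = 1 := Real.smoothTransition.one_of_one_le (by linarith)
      simp [hg, hh₁, h1]
    have heq2 : ∀ t : ℝ, 0 < t → g t = h₂ (t - (n : ℝ)) := by
      intro t ht
      have h1 : p (t + 1) = 1 := Real.smoothTransition.one_of_one_le (by linarith)
      have h2 : f (t - (n : ℝ)) = f t := by
        have h3 := hfint (n:ℤ) (t - (n : ℝ))
        push_cast at h3
        rw [sub_add_cancel] at h3
        exact h3.symm
      show f t * (p (t + 1) * p ((n : ℝ) + 1 - t)) = f (t - (n : ℝ)) * p (1 - (t - (n : ℝ)))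
      rw [h1, one_mul, h2]
      congr 2
      ring
    have heq3 : ∀ t : ℝ, 0 ≤ t → t ≤ (n : ℝ) → g t = f t := by
      intro t ht1 ht2
      have h1 : p (t + 1) = 1 := Real.smoothTransition.one_of_one_le (by linarith)
      have h2 : p ((n : ℝ) + 1 - t) = 1 := Real.smoothTransition.one_of_one_le (by linarith)
      simp [hg, h1, h2]
    have hd1 : ∀ t : ℝ, t < 1 → deriv g t = deriv h₁ t := by
      intro t ht
      apply Filter.EventuallyEq.deriv_eq
      filter_upwards [Iio_mem_nhds ht] with s hs
      exact heq1 s hs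
    have hd2 : ∀ t : ℝ, 0 < t → deriv g t = deriv h₂ (t - (n : ℝ)) := by
      intro t ht
      have e : deriv g t = deriv (fun s => h₂ (s - (n : ℝ))) t := by
        apply Filter.EventuallyEq.deriv_eq
        filter_upwards [Ioi_mem_nhds ht] with s hs
        exact heq2 s hs
      rw [e, deriv_comp_sub_const]
    have hd3 : ∀ t : ℝ, 0 < t → t < (n : ℝ) → deriv g t = deriv f t := by
      intro t ht1 ht2
      apply Filter.EventuallyEq.deriv_eq
      filter_upwards [Ioo_mem_nhds ht1 ht2] with s hs
      exact heq3 s hs.1.le hs.2.le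
    -- reduce the whole-line integrals to [-2, n+2]
    have hKgc : Continuous (fun t => K t * g t ^ 2) := hK.mul (hgcont.pow 2)
    have hKfc : Continuous (fun t => K t * f t ^ 2) := hK.mul (hfc.pow 2)
    have hIg : (∫ t, K t * g t ^ 2) = ∫ t in (-2:ℝ)..((n:ℝ)+2), K t * g t ^ 2 := by
      rw [intervalIntegral.integral_of_le (by linarith)]
      symm
      apply setIntegral_eq_integral_of_forall_compl_eq_zero
      intro x hx
      rw [Set.mem_Ioc, not_and_or] at hx
      have hgz : g x = 0 := by
        apply hg0
        rw [Set.mem_Icc, not_and_or]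
        rcases hx with hx | hx
        · push_neg at hx; left; push_neg; linarith
        · push_neg at hx; right; push_neg; linarith
      simp [hgz]
    have hIg' : (∫ t, (deriv g t) ^ 2) = ∫ t in (-2:ℝ)..((n:ℝ)+2), (deriv g t) ^ 2 := by
      rw [intervalIntegral.integral_of_le (by linarith)]
      symm
      apply setIntegral_eq_integral_of_forall_compl_eq_zero
      intro x hx
      rw [Set.mem_Ioc, not_and_or] at hx
      have hxts : x ∉ tsupport g := by
        intro hmem
        have hmem' := hgts hmem
        rw [Set.mem_Icc] at hmem'
        rcases hx with hx | hx <;> push_neg at hx <;> linarith [hmem'.1, hmem'.2]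
      have hdz : deriv g x = 0 :=
        Function.notMem_support.mp (fun hs => hxts (support_deriv_subset hs))
      simp [hdz]
    have hsplit : ∀ F : ℝ → ℝ, Continuous F →
        (∫ t in (-2:ℝ)..((n:ℝ)+2), F t) =
          (∫ t in (-2:ℝ)..0, F t) + (∫ t in (0:ℝ)..(n:ℝ), F t)
            + ∫ t in ((n:ℝ))..((n:ℝ)+2), F t := by
      intro F hF
      rw [intervalIntegral.integral_add_adjacent_intervals (hF.intervalIntegrable _ _)
        (hF.intervalIntegrable _ _), intervalIntegral.integral_add_adjacent_intervals
        (hF.intervalIntegrable _ _) (hF.intervalIntegrable _ _)]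
    -- the three pieces, K-side
    have hK1 : (∫ t in (-2:ℝ)..0, K t * g t ^ 2) = A₁ := by
      apply intervalIntegral.integral_congr
      intro x hx
      rw [Set.uIcc_of_le (by norm_num)] at hx
      simp only [heq1 x (by linarith [hx.2] : x < 1)]
    have hK2 : (∫ t in (0:ℝ)..(n:ℝ), K t * g t ^ 2) = (n : ℝ) * IK := by
      have e1 : (∫ t in (0:ℝ)..(n:ℝ), K t * g t ^ 2) = ∫ t in (0:ℝ)..(n:ℝ), K t * f t ^ 2 := by
        apply intervalIntegral.integral_congr
        intro x hx
        rw [Set.uIcc_of_le (by linarith)] at hx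
        simp only [heq3 x hx.1 hx.2]
      rw [e1]
      have hperKf : Function.Periodic (fun t => K t * f t ^ 2) 1 := by
        intro t; simp [hper t, hfper t]
      have h := hperKf.intervalIntegral_add_zsmul_eq (n : ℤ) 0
        (fun t₁ t₂ => hKfc.intervalIntegrable _ _)
      simpa [hIK] using h
    have hK3 : (∫ t in ((n:ℝ))..((n:ℝ)+2), K t * g t ^ 2) = A₂ := by
      calc (∫ t in ((n:ℝ))..((n:ℝ)+2), K t * g t ^ 2)
          = ∫ t in ((n:ℝ))..((n:ℝ)+2), (fun u => K (u + (n:ℝ)) * h₂ u ^ 2) (t - (n:ℝ)) := by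
            apply intervalIntegral.integral_congr
            intro x hx
            rw [Set.uIcc_of_le (by linarith)] at hx
            have hx0 : (0:ℝ) < x := by linarith [hx.1]
            show K x * g x ^ 2 = K (x - (n:ℝ) + (n:ℝ)) * h₂ (x - (n:ℝ)) ^ 2
            rw [heq2 x hx0, sub_add_cancel]
        _ = ∫ u in ((n:ℝ) - (n:ℝ))..((n:ℝ)+2 - (n:ℝ)), K (u + (n:ℝ)) * h₂ u ^ 2 :=
            intervalIntegral.integral_comp_sub_right (fun u => K (u + (n:ℝ)) * h₂ u ^ 2) ((n:ℝ))
        _ = A₂ := by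
            rw [sub_self, add_sub_cancel_left]
            apply intervalIntegral.integral_congr
            intro x _
            have e2 : K (x + (n:ℝ)) = K x := by
              have h3 := perInt hper (n:ℤ) x
              push_cast at h3
              exact h3
            simp only [e2]
    -- the three pieces, derivative side
    have hD1 : (∫ t in (-2:ℝ)..0, (deriv g t) ^ 2) = D₁ := by
      apply intervalIntegral.integral_congr
      intro x hx
      rw [Set.uIcc_of_le (by norm_num)] at hx
      simp only [hd1 x (by linarith [hx.2] : x < 1)]
    have hD2 : (∫ t in (0:ℝ)..(n:ℝ), (deriv g t) ^ 2) = (n : ℝ) * ID := by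
      have e1 : (∫ t in (0:ℝ)..(n:ℝ), (deriv g t) ^ 2)
          = ∫ t in (0:ℝ)..(n:ℝ), (deriv f t) ^ 2 := by
        apply intervalIntegral.integral_congr_ae
        have hns : (volume : Measure ℝ) {(n:ℝ)} = 0 := measure_singleton _
        filter_upwards [compl_mem_ae_iff.mpr hns] with x hx hxmem
        rw [Set.uIoc_of_le (by linarith : (0:ℝ) ≤ (n:ℝ))] at hxmem
        have hxn : x ≠ (n:ℝ) := hx
        rw [hd3 x hxmem.1 (lt_of_le_of_ne hxmem.2 hxn)]
      rw [e1]
      have hperD : Function.Periodic (fun t => (deriv f t) ^ 2) 1 := by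
        intro t; simp [hf'per t]
      have h := hperD.intervalIntegral_add_zsmul_eq (n : ℤ) 0
        (fun t₁ t₂ => (hf'c.pow 2).intervalIntegrable _ _)
      simpa [hID] using h
    have hD3 : (∫ t in ((n:ℝ))..((n:ℝ)+2), (deriv g t) ^ 2) = D₂ := by
      calc (∫ t in ((n:ℝ))..((n:ℝ)+2), (deriv g t) ^ 2)
          = ∫ t in ((n:ℝ))..((n:ℝ)+2), (fun u => (deriv h₂ u) ^ 2) (t - (n:ℝ)) := by
            apply intervalIntegral.integral_congr
            intro x hx
            rw [Set.uIcc_of_le (by linarith)] at hx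
            have hx0 : (0:ℝ) < x := by linarith [hx.1]
            show (deriv g x) ^ 2 = (deriv h₂ (x - (n:ℝ))) ^ 2
            rw [hd2 x hx0]
        _ = ∫ u in ((n:ℝ) - (n:ℝ))..((n:ℝ)+2 - (n:ℝ)), (deriv h₂ u) ^ 2 :=
            intervalIntegral.integral_comp_sub_right (fun u => (deriv h₂ u) ^ 2) ((n:ℝ))
        _ = D₂ := by rw [sub_self, add_sub_cancel_left]
    have hmain := H g hgc hgsupp
    rw [hIg, hIg', hsplit _ hKgc, hsplit (fun t => deriv g t ^ 2) (hg'c.pow 2), hK1, hK2, hK3, hD1, hD2, hD3] at hmain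
    exact hmain
  -- conclude by letting n → ∞
  by_contra hcon
  push_neg at hcon
  obtain ⟨n, hn⟩ := exists_nat_gt (max 1 ((D₁ + D₂ - A₁ - A₂) / (IK - ID)))
  have hn1 : 1 ≤ n := by
    have h1 : (1:ℝ) < (n:ℝ) := lt_of_le_of_lt (le_max_left _ _) hn
    exact_mod_cast h1.le
  have hk := key n hn1
  have hpos : (0:ℝ) < IK - ID := by simp only [hIK, hID] at *; linarith
  have h2 : (D₁ + D₂ - A₁ - A₂) / (IK - ID) < (n:ℝ) := lt_of_le_of_lt (le_max_right _ _) hn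
  have h3 : D₁ + D₂ - A₁ - A₂ < (n:ℝ) * (IK - ID) := by
    rw [div_lt_iff₀ hpos] at h2
    linarith
  nlinarith [hk, h3]

/-- Closed-geodesic stability implies universal-cover stability, via the
periodization `t ↦ √(ε² + ∑ₖ f(t+k)²)` of a compactly supported test function. -/
private lemma forward (K : ℝ → ℝ) (hK : Continuous K) (hper : ∀ t, K (t + 1) = K t)
    (H : ∀ f : ℝ → ℝ, ContDiff ℝ 1 f → (∀ t, f (t + 1) = f t) →
        (∫ t in (0:ℝ)..1, K t * (f t) ^ 2) ≤ ∫ t in (0:ℝ)..1, (deriv f t) ^ 2)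
    (f : ℝ → ℝ) (hf : ContDiff ℝ 1 f) (hsupp : HasCompactSupport f) :
    (∫ t, K t * (f t) ^ 2) ≤ ∫ t, (deriv f t) ^ 2 := by
  classical
  have hfc : Continuous f := hf.continuous
  have hf'c : Continuous (deriv f) := hf.continuous_deriv le_rfl
  have hdiff : Differentiable ℝ f := hf.differentiable one_ne_zero
  obtain ⟨r, hr⟩ := hsupp.isBounded.subset_closedBall 0
  obtain ⟨m, hm⟩ := exists_nat_ge r
  have hts : tsupport f ⊆ Set.Icc (-(m:ℝ)) (m:ℝ) := by
    intro x hx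
    have h1 := hr hx
    rw [Real.closedBall_eq_Icc] at h1
    constructor
    · linarith [h1.1]
    · linarith [h1.2]
  have hf0 : ∀ x : ℝ, ((m:ℝ) < x ∨ x < -(m:ℝ)) → f x = 0 := by
    intro x hx
    apply image_eq_zero_of_notMem_tsupport
    intro hmem
    have h1 := hts hmem
    rcases hx with h | h
    · linarith [h1.2]
    · linarith [h1.1]
  have hf'0 : ∀ x : ℝ, ((m:ℝ) < x ∨ x < -(m:ℝ)) → deriv f x = 0 := by
    intro x hx
    apply Function.notMem_support.mp
    intro hs
    have h1 := hts (support_deriv_subset hs)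
    rcases hx with h | h
    · linarith [h1.2]
    · linarith [h1.1]
  set N : ℕ := m + 3 with hN
  have hNm : (m:ℝ) + 3 = (N:ℝ) := by rw [hN]; push_cast; ring
  set F₀ : Finset ℤ := Finset.image (fun i : ℕ => (i : ℤ) - (N : ℤ)) (Finset.range (2 * N + 1))
    with hF₀
  have hF₀mem : ∀ k : ℤ, k ∈ F₀ ↔ -(N:ℤ) ≤ k ∧ k ≤ (N:ℤ) := by
    intro k
    simp only [hF₀, Finset.mem_image, Finset.mem_range]
    constructor
    · rintro ⟨i, hi, rfl⟩; omega
    · rintro ⟨hk1, hk2⟩; exact ⟨(k + N).toNat, by omega, by omega⟩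
  set S : ℝ → ℝ := fun t => ∑' k : ℤ, f (t + (k:ℝ)) ^ 2 with hS
  have hSnn : ∀ t, 0 ≤ S t := fun t => tsum_nonneg fun k => sq_nonneg _
  have hSloc : ∀ t₀ : ℝ, ∀ t ∈ Set.Ioo (t₀ - 1) (t₀ + 1),
      S t = ∑ k ∈ Finset.Icc (⌈-(m:ℝ) - t₀⌉ - 2) (⌊(m:ℝ) - t₀⌋ + 2), f (t + (k:ℝ)) ^ 2 := by
    intro t₀ t ht
    apply tsum_eq_sum
    intro k hk
    rw [Finset.mem_Icc, not_and_or] at hk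
    have hz : f (t + (k:ℝ)) = 0 := by
      apply hf0
      rcases hk with hk | hk
      · push_neg at hk
        right
        have hk' : (k:ℝ) ≤ (⌈-(m:ℝ) - t₀⌉ : ℝ) - 3 := by
          have : k ≤ ⌈-(m:ℝ) - t₀⌉ - 3 := by omega
          exact_mod_cast this
        have hc := Int.ceil_lt_add_one (-(m:ℝ) - t₀)
        have ht2 := ht.2
        linarith
      · push_neg at hk
        left
        have hk' : (⌊(m:ℝ) - t₀⌋ : ℝ) + 3 ≤ (k:ℝ) := by
          have : ⌊(m:ℝ) - t₀⌋ + 3 ≤ k := by omega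
          exact_mod_cast this
        have hc := Int.sub_one_lt_floor ((m:ℝ) - t₀)
        have ht1 := ht.1
        linarith
    simp [hz]
  have hSloc0 : ∀ t ∈ Set.Ioo (-1:ℝ) 2, S t = ∑ k ∈ F₀, f (t + (k:ℝ)) ^ 2 := by
    intro t ht
    apply tsum_eq_sum
    intro k hk
    rw [hF₀mem, not_and_or] at hk
    have hz : f (t + (k:ℝ)) = 0 := by
      apply hf0
      rcases hk with hk | hk
      · push_neg at hk
        right
        have hk' : (k:ℝ) ≤ -(N:ℝ) - 1 := by
          have : k ≤ -(N:ℤ) - 1 := by omega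
          exact_mod_cast this
        have ht2 := ht.2
        linarith [hNm]
      · push_neg at hk
        left
        have hk' : (N:ℝ) + 1 ≤ (k:ℝ) := by
          have : (N:ℤ) + 1 ≤ k := by omega
          exact_mod_cast this
        have ht1 := ht.1
        linarith [hNm]
    simp [hz]
  have hScd : ContDiff ℝ 1 S := by
    rw [contDiff_iff_contDiffAt]
    intro t₀
    have hfin : ContDiffAt ℝ 1
        (fun t => ∑ k ∈ Finset.Icc (⌈-(m:ℝ) - t₀⌉ - 2) (⌊(m:ℝ) - t₀⌋ + 2), f (t + (k:ℝ)) ^ 2)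
        t₀ := by
      apply ContDiff.contDiffAt
      apply ContDiff.sum
      intro k _
      exact (hf.comp (contDiff_id.add contDiff_const)).pow 2
    apply hfin.congr_of_eventuallyEq
    filter_upwards [Ioo_mem_nhds (show t₀ - 1 < t₀ by linarith) (show t₀ < t₀ + 1 by linarith)]
      with t ht
    exact hSloc t₀ t ht
  have hSper : ∀ t, S (t + 1) = S t := by
    intro t
    have h1 : S (t + 1) = ∑' k : ℤ, f (t + ((k + 1 : ℤ) : ℝ)) ^ 2 := by
      apply tsum_congr
      intro k
      congr 2
      push_cast
      ring
    rw [h1]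
    exact (Equiv.addRight (1:ℤ)).tsum_eq (fun k : ℤ => f (t + (k:ℝ)) ^ 2)
  -- auxiliary integral identities
  have adj : ∀ F : ℝ → ℝ, Continuous F →
      (∑ k ∈ F₀, ∫ s in ((k:ℝ))..((k:ℝ)+1), F s) = ∫ s in (-(N:ℝ))..((N:ℝ)+1), F s := by
    intro F hF
    rw [hF₀, Finset.sum_image (by intro a _ b _ h; simp only at h; omega)]
    have h1 : ∀ i : ℕ, i ∈ Finset.range (2 * N + 1) →
        (∫ s in ((((i:ℤ) - (N:ℤ)) : ℤ):ℝ)..(((((i:ℤ) - (N:ℤ)) : ℤ):ℝ) + 1), F s)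
          = ∫ s in ((i:ℝ) - (N:ℝ))..(((i+1:ℕ):ℝ) - (N:ℝ)), F s := by
      intro i _
      congr 1
      · push_cast; ring
      · push_cast; ring
    rw [Finset.sum_congr rfl h1]
    have h2 := intervalIntegral.sum_integral_adjacent_intervals
      (a := fun i : ℕ => (i:ℝ) - (N:ℝ)) (n := 2 * N + 1) (f := F) (μ := volume)
      (fun k _ => hF.intervalIntegrable _ _)
    rw [h2]
    congr 1
    · push_cast; ring
    · push_cast; ring
  have whole : ∀ F : ℝ → ℝ, (∀ x : ℝ, ((m:ℝ) < x ∨ x < -(m:ℝ)) → F x = 0) →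
      (∫ s in (-(N:ℝ))..((N:ℝ)+1), F s) = ∫ s, F s := by
    intro F hF0
    rw [intervalIntegral.integral_of_le (by linarith [hNm, Nat.cast_nonneg (α := ℝ) m] :
      -(N:ℝ) ≤ (N:ℝ) + 1)]
    apply setIntegral_eq_integral_of_forall_compl_eq_zero
    intro x hx
    rw [Set.mem_Ioc, not_and_or] at hx
    apply hF0
    rcases hx with hx | hx
    · push_neg at hx; right; linarith [hNm]
    · push_neg at hx; left; linarith [hNm]
  -- main estimate for each ε > 0
  have main : ∀ ε : ℝ, 0 < ε →
      (∫ t, K t * f t ^ 2) + ε ^ 2 * (∫ t in (0:ℝ)..1, K t) ≤ ∫ t, (deriv f t) ^ 2 := by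
    intro ε hε
    set g : ℝ → ℝ := fun t => Real.sqrt (ε ^ 2 + S t) with hg
    have hpos : ∀ t, 0 < ε ^ 2 + S t := fun t => by nlinarith [hSnn t]
    have hgcd : ContDiff ℝ 1 g := by
      rw [contDiff_iff_contDiffAt]
      intro t
      exact (Real.contDiffAt_sqrt (ne_of_gt (hpos t))).comp t
        ((contDiff_const.add hScd).contDiffAt)
    have hgper : ∀ t, g (t + 1) = g t := by
      intro t
      simp only [hg, hSper t]
    have hg'c : Continuous (deriv g) := hgcd.continuous_deriv le_rfl
    have hkey : ∀ t ∈ Set.Ioo (-1:ℝ) 2,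
        (deriv g t) ^ 2 ≤ ∑ k ∈ F₀, (deriv f (t + (k:ℝ))) ^ 2 := by
      intro t ht
      have hSd : HasDerivAt S (∑ k ∈ F₀, 2 * (f (t + (k:ℝ)) * deriv f (t + (k:ℝ)))) t := by
        have hsum : HasDerivAt (fun s => ∑ k ∈ F₀, f (s + (k:ℝ)) ^ 2)
            (∑ k ∈ F₀, 2 * (f (t + (k:ℝ)) * deriv f (t + (k:ℝ)))) t := by
          apply HasDerivAt.fun_sum
          intro k _
          have h1 : HasDerivAt (fun s : ℝ => f (s + (k:ℝ))) (deriv f (t + (k:ℝ))) t := by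
            simpa [Function.comp_def] using ((hdiff (t + (k:ℝ))).hasDerivAt).comp t ((hasDerivAt_id t).add_const (k:ℝ))
          have h2 := h1.fun_pow 2
          simpa [pow_one, mul_assoc] using h2
        apply hsum.congr_of_eventuallyEq
        filter_upwards [Ioo_mem_nhds ht.1 ht.2] with s hs
        exact hSloc0 s hs
      have hgd : HasDerivAt g ((1 / (2 * Real.sqrt (ε ^ 2 + S t))) *
          (∑ k ∈ F₀, 2 * (f (t + (k:ℝ)) * deriv f (t + (k:ℝ))))) t := by
        have hin : HasDerivAt (fun s => ε ^ 2 + S s)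
            (∑ k ∈ F₀, 2 * (f (t + (k:ℝ)) * deriv f (t + (k:ℝ)))) t := by
          exact hSd.const_add (ε ^ 2)
        exact (Real.hasDerivAt_sqrt (ne_of_gt (hpos t))).comp t hin
      set A := ∑ k ∈ F₀, f (t + (k:ℝ)) ^ 2 with hA
      set B := ∑ k ∈ F₀, (deriv f (t + (k:ℝ))) ^ 2 with hB
      set C := ∑ k ∈ F₀, f (t + (k:ℝ)) * deriv f (t + (k:ℝ)) with hC
      have hAnn : 0 ≤ A := Finset.sum_nonneg fun k _ => sq_nonneg _
      have hBnn : 0 ≤ B := Finset.sum_nonneg fun k _ => sq_nonneg _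
      have hCS : C ^ 2 ≤ A * B := Finset.sum_mul_sq_le_sq_mul_sq F₀ _ _
      have hSA : S t = A := hSloc0 t ht
      have hposA : 0 < ε ^ 2 + A := by rw [← hSA]; exact hpos t
      have hsqpos : 0 < Real.sqrt (ε ^ 2 + A) := Real.sqrt_pos.mpr hposA
      have hderiv : deriv g t = C / Real.sqrt (ε ^ 2 + A) := by
        rw [hgd.deriv, hSA]
        rw [show (∑ k ∈ F₀, 2 * (f (t + (k:ℝ)) * deriv f (t + (k:ℝ)))) = 2 * C by
          rw [hC, Finset.mul_sum]]
        field_simp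
      have hsq : Real.sqrt (ε ^ 2 + A) ^ 2 = ε ^ 2 + A := Real.sq_sqrt hposA.le
      rw [hderiv, div_pow, hsq, div_le_iff₀ hposA]
      nlinarith [hCS, mul_nonneg hBnn (sq_nonneg ε)]
    have hsumc : Continuous (fun t => ∑ k ∈ F₀, (deriv f (t + (k:ℝ))) ^ 2) := by
      apply continuous_finset_sum
      intro k _
      exact (hf'c.comp (continuous_id.add continuous_const)).pow 2
    have step1 := H g hgcd hgper
    have step2 : (∫ t in (0:ℝ)..1, (deriv g t) ^ 2)
        ≤ ∫ t in (0:ℝ)..1, ∑ k ∈ F₀, (deriv f (t + (k:ℝ))) ^ 2 := by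
      apply intervalIntegral.integral_mono_on (by norm_num)
        ((hg'c.pow 2).intervalIntegrable _ _) (hsumc.intervalIntegrable _ _)
      intro x hx
      exact hkey x ⟨by linarith [hx.1], by linarith [hx.2]⟩
    have step3 : (∫ t in (0:ℝ)..1, ∑ k ∈ F₀, (deriv f (t + (k:ℝ))) ^ 2)
        = ∑ k ∈ F₀, ∫ t in (0:ℝ)..1, (deriv f (t + (k:ℝ))) ^ 2 :=
      intervalIntegral.integral_finset_sum (fun k _ =>
        ((hf'c.comp (continuous_id.add continuous_const)).pow 2).intervalIntegrable _ _)
    have step4 : ∀ k : ℤ, (∫ t in (0:ℝ)..1, (deriv f (t + (k:ℝ))) ^ 2)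
        = ∫ s in ((k:ℝ))..((k:ℝ)+1), (deriv f s) ^ 2 := by
      intro k
      have h1 := intervalIntegral.integral_comp_add_right (a := (0:ℝ)) (b := 1)
        (fun s => (deriv f s) ^ 2) ((k:ℝ))
      rw [h1, zero_add, add_comm 1 ((k:ℝ))]
    have stepK : ∀ k : ℤ, (∫ t in (0:ℝ)..1, K t * f (t + (k:ℝ)) ^ 2)
        = ∫ s in ((k:ℝ))..((k:ℝ)+1), K s * f s ^ 2 := by
      intro k
      calc (∫ t in (0:ℝ)..1, K t * f (t + (k:ℝ)) ^ 2)
          = ∫ t in (0:ℝ)..1, (fun s => K (s - (k:ℝ)) * f s ^ 2) (t + (k:ℝ)) := by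
            apply intervalIntegral.integral_congr
            intro x _
            show K x * f (x + (k:ℝ)) ^ 2 = K (x + (k:ℝ) - (k:ℝ)) * f (x + (k:ℝ)) ^ 2
            rw [add_sub_cancel_right]
        _ = ∫ s in ((0:ℝ) + (k:ℝ))..((1:ℝ) + (k:ℝ)), K (s - (k:ℝ)) * f s ^ 2 :=
            intervalIntegral.integral_comp_add_right (fun s => K (s - (k:ℝ)) * f s ^ 2) ((k:ℝ))
        _ = ∫ s in ((k:ℝ))..((k:ℝ)+1), K s * f s ^ 2 := by
            rw [zero_add, add_comm 1 ((k:ℝ))]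
            apply intervalIntegral.integral_congr
            intro x _
            have e2 : K (x - (k:ℝ)) = K x := by
              have h3 := perInt hper (-k) x
              push_cast at h3
              simpa [sub_eq_add_neg] using h3
            simp only [e2]
    have hKg : (∫ t in (0:ℝ)..1, K t * g t ^ 2)
        = ε ^ 2 * (∫ t in (0:ℝ)..1, K t)
          + ∑ k ∈ F₀, ∫ t in (0:ℝ)..1, K t * f (t + (k:ℝ)) ^ 2 := by
      have e1 : (∫ t in (0:ℝ)..1, K t * g t ^ 2)
          = ∫ t in (0:ℝ)..1, (K t * ε ^ 2 + ∑ k ∈ F₀, K t * f (t + (k:ℝ)) ^ 2) := by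
        apply intervalIntegral.integral_congr
        intro x hx
        rw [Set.uIcc_of_le (by norm_num)] at hx
        have hx' : x ∈ Set.Ioo (-1:ℝ) 2 := ⟨by linarith [hx.1], by linarith [hx.2]⟩
        have e2 : g x ^ 2 = ε ^ 2 + S x := Real.sq_sqrt (hpos x).le
        show K x * g x ^ 2 = K x * ε ^ 2 + ∑ k ∈ F₀, K x * f (x + (k:ℝ)) ^ 2
        rw [e2, hSloc0 x hx', mul_add, Finset.mul_sum]
      have hc1 : Continuous (fun t => K t * ε ^ 2) := hK.mul continuous_const
      have hc2 : Continuous (fun t => ∑ k ∈ F₀, K t * f (t + (k:ℝ)) ^ 2) := by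
        apply continuous_finset_sum
        intro k _
        exact hK.mul ((hfc.comp (continuous_id.add continuous_const)).pow 2)
      rw [e1, intervalIntegral.integral_add (hc1.intervalIntegrable _ _)
        (hc2.intervalIntegrable _ _)]
      congr 1
      · rw [intervalIntegral.integral_mul_const, mul_comm]
      · exact intervalIntegral.integral_finset_sum (fun k _ =>
          (hK.mul ((hfc.comp (continuous_id.add continuous_const)).pow 2)).intervalIntegrable _ _)
    have sumK : (∑ k ∈ F₀, ∫ t in (0:ℝ)..1, K t * f (t + (k:ℝ)) ^ 2) = ∫ t, K t * f t ^ 2 := by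
      rw [Finset.sum_congr rfl (fun k _ => stepK k), adj (fun s => K s * f s ^ 2) (hK.mul (hfc.pow 2))]
      exact whole _ (fun x hx => by rw [hf0 x hx]; ring)
    have sumD : (∑ k ∈ F₀, ∫ t in (0:ℝ)..1, (deriv f (t + (k:ℝ))) ^ 2)
        = ∫ t, (deriv f t) ^ 2 := by
      rw [Finset.sum_congr rfl (fun k _ => step4 k), adj (fun s => deriv f s ^ 2) (hf'c.pow 2)]
      exact whole _ (fun x hx => by rw [hf'0 x hx]; ring)
    calc (∫ t, K t * f t ^ 2) + ε ^ 2 * (∫ t in (0:ℝ)..1, K t)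
        = ∫ t in (0:ℝ)..1, K t * g t ^ 2 := by rw [hKg, sumK]; ring
      _ ≤ ∫ t in (0:ℝ)..1, (deriv g t) ^ 2 := step1
      _ ≤ ∫ t in (0:ℝ)..1, ∑ k ∈ F₀, (deriv f (t + (k:ℝ))) ^ 2 := step2
      _ = ∫ t, (deriv f t) ^ 2 := by rw [step3, sumD]
  -- conclude by letting ε → 0
  set c := ∫ t in (0:ℝ)..1, K t with hc
  by_contra hcon
  push_neg at hcon
  set δ := (∫ t, K t * f t ^ 2) - ∫ t, (deriv f t) ^ 2 with hδ
  have hδpos : 0 < δ := by rw [hδ]; linarith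
  have habs : -|c| ≤ c := neg_abs_le c
  have hcnn : (0:ℝ) ≤ |c| := abs_nonneg c
  have hd : (0:ℝ) < |c| + 1 := by linarith
  have hεpos : (0:ℝ) < Real.sqrt (δ / (|c| + 1)) := Real.sqrt_pos.mpr (by positivity)
  have h1 := main _ hεpos
  rw [Real.sq_sqrt (by positivity : (0:ℝ) ≤ δ / (|c| + 1))] at h1
  have h4 : (δ / (|c| + 1)) * c ≤ -δ := by
    rw [hδ] at hδpos ⊢
    linarith [h1]
  have h5 : δ * c ≤ -δ * (|c| + 1) := by
    rw [div_mul_eq_mul_div] at h4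
    rw [div_le_iff₀ hd] at h4
    linarith [h4]
  have h6 : δ * (-|c|) ≤ δ * c := mul_le_mul_of_nonneg_left habs hδpos.le
  nlinarith [h5, h6, hδpos, hcnn]

/-- A closed geodesic is stable iff its universal cover is stable. -/
theorem stmt1 (K : ℝ → ℝ) (hK : Continuous K) (hper : ∀ t, K (t + 1) = K t) :
    (∀ f : ℝ → ℝ, ContDiff ℝ 1 f → (∀ t, f (t + 1) = f t) →
        (∫ t in (0:ℝ)..1, K t * (f t) ^ 2) ≤ ∫ t in (0:ℝ)..1, (deriv f t) ^ 2) ↔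
    (∀ f : ℝ → ℝ, ContDiff ℝ 1 f → HasCompactSupport f →
        (∫ t, K t * (f t) ^ 2) ≤ ∫ t, (deriv f t) ^ 2) := by
  constructor
  · intro H f hfc hfs
    exact forward K hK hper H f hfc hfs
  · intro H f hfc hfp
    exact backward K hK hper H f hfc hfp
end

section
/- Let K : ℝ → ℝ be continuous with K(t+1) = K(t) for all t, and let M be the linear Poincaré map, i.e. the 2×2 real matrix such that every solution u of u'' + K u = 0 satisfies (u(t+1), u'(t+1)) = M · (u(t), u'(t)). If M has no positive real eigenvalue, then every solution u that is not identically zero has infinitely many zeros: for every T ∈ ℝ there exists t > T with u(t) = 0. In particular there is a Jacobi field with at least two zeros. -/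
open Set Filter Topology

lemma mvt_lower' (f df : ℝ → ℝ) (a b c : ℝ)
    (hd : ∀ t ∈ Set.Icc a b, HasDerivAt f (df t) t)
    (hc : ∀ t ∈ Set.Icc a b, c ≤ df t) (hab : a ≤ b) : c * (b - a) ≤ f b - f a := by
  have mono : MonotoneOn (fun t => f t - c * t) (Set.Icc a b) := by
    apply monotoneOn_of_deriv_nonneg (convex_Icc a b)
    · exact fun t ht => ((hd t ht).continuousAt.sub
        ((continuous_const.mul continuous_id).continuousAt)).continuousWithinAt
    · intro t ht
      rw [interior_Icc] at ht
      exact (((hd t (Set.Ioo_subset_Icc_self ht)).sub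
        ((hasDerivAt_id t).const_mul c)).differentiableAt).differentiableWithinAt
    · intro t ht
      rw [interior_Icc] at ht
      have hg : HasDerivAt (fun x => f x - c * x) (df t - c) t :=
        (hd t (Set.Ioo_subset_Icc_self ht)).sub (by simpa using (hasDerivAt_id t).const_mul c)
      rw [hg.deriv]
      have := hc t (Set.Ioo_subset_Icc_self ht)
      linarith
  have h2 := mono (Set.left_mem_Icc.2 hab) (Set.right_mem_Icc.2 hab) hab
  simp only at h2
  nlinarith

lemma noUpcross (v dv : ℝ → ℝ) (a b : ℝ)
    (hd : ∀ t ∈ Set.Icc a b, HasDerivAt v (dv t) t)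
    (ha : v a ≤ 0) (hz : ∀ t ∈ Set.Icc a b, v t = 0 → dv t < 0) :
    ∀ t ∈ Set.Icc a b, v t ≤ 0 := by
  by_contra hcon
  push_neg at hcon
  obtain ⟨b', hb', hvb'⟩ := hcon
  have hab' : a ≤ b' := hb'.1
  have hcont : ContinuousOn v (Set.Icc a b') := fun t ht =>
    (hd t ⟨ht.1, le_trans ht.2 hb'.2⟩).continuousAt.continuousWithinAt
  set S := {τ ∈ Set.Icc a b' | v τ ≤ 0} with hS
  have hSne : S.Nonempty := ⟨a, Set.left_mem_Icc.2 hab', ha⟩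
  have hSbdd : BddAbove S := ⟨b', fun τ hτ => hτ.1.2⟩
  have hSclosed : IsClosed S := by
    have hEq : S = Set.Icc a b' ∩ v ⁻¹' Set.Iic 0 := by
      ext τ; simp [hS, Set.mem_sep_iff]
    rw [hEq]
    exact hcont.preimage_isClosed_of_isClosed isClosed_Icc isClosed_Iic
  set s' := sSup S
  have hs'S : s' ∈ S := hSclosed.csSup_mem hSne hSbdd
  have hs'mem : s' ∈ Set.Icc a b := ⟨hs'S.1.1, le_trans hs'S.1.2 hb'.2⟩
  have hs'lt : s' < b' := lt_of_le_of_ne hs'S.1.2 (fun h => absurd hs'S.2 (by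
    rw [h]; exact not_le.2 hvb'))
  have hpos' : ∀ τ, s' < τ → τ ≤ b' → 0 < v τ := by
    intro τ h1 h2
    by_contra hle; push_neg at hle
    have hmem : τ ∈ S := ⟨⟨le_trans hs'S.1.1 h1.le, h2⟩, hle⟩
    exact absurd (le_csSup hSbdd hmem) (not_le.2 h1)
  have hvs0 : v s' = 0 := by
    refine le_antisymm hs'S.2 ?_
    have htend : Tendsto v (𝓝[>] s') (𝓝 (v s')) :=
      (hd s' hs'mem).continuousAt.continuousWithinAt
    refine ge_of_tendsto htend ?_
    filter_upwards [Ioc_mem_nhdsGT_of_mem ⟨le_refl s', hs'lt⟩] with τ hτ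
    exact (hpos' τ hτ.1 hτ.2).le
  have hdneg : dv s' < 0 := hz s' hs'mem hvs0
  have hder : HasDerivWithinAt v (dv s') (Set.Ioi s') s' :=
    (hd s' hs'mem).hasDerivWithinAt
  rw [hasDerivWithinAt_iff_tendsto_slope] at hder
  rw [Set.diff_singleton_eq_self (by simp)] at hder
  have : (0:ℝ) ≤ dv s' := by
    refine ge_of_tendsto hder ?_
    filter_upwards [Ioc_mem_nhdsGT_of_mem ⟨le_refl s', hs'lt⟩] with τ hτ
    have h1 : 0 < v τ := hpos' τ hτ.1 hτ.2
    have h2 : 0 < τ - s' := sub_pos.2 hτ.1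
    rw [slope_def_field, hvs0]
    apply div_nonneg <;> linarith
  linarith

lemma key (K : ℝ → ℝ) (hK : Continuous K) (hper : ∀ t, K (t + 1) = K t)
    (M : Matrix (Fin 2) (Fin 2) ℝ)
    (hM : ∀ u : ℝ → ℝ, ContDiff ℝ 2 u → (∀ t, deriv (deriv u) t + K t * u t = 0) →
      ∀ t, ![u (t + 1), deriv u (t + 1)] = M.mulVec ![u t, deriv u t])
    (heig : ¬ ∃ (lam : ℝ) (v : Fin 2 → ℝ), 0 < lam ∧ v ≠ 0 ∧ M.mulVec v = lam • v)
    (u : ℝ → ℝ) (hu : ContDiff ℝ 2 u) (hode : ∀ t, deriv (deriv u) t + K t * u t = 0)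
    (T : ℝ) (hpos : ∀ t, T < t → 0 < u t) : False := by
  -- global bound on K
  obtain ⟨C, hC0⟩ := (isCompact_Icc (a := (0:ℝ)) (b := 1)).exists_bound_of_continuousOn
    hK.continuousOn
  have hCK : ∀ t, |K t| ≤ C := by
    intro t
    have hfr : Function.Periodic K 1 := hper
    have h1 : K t = K (Int.fract t) := by
      conv_lhs => rw [← Int.fract_add_floor t]
      have h2 := (hfr.int_mul ⌊t⌋) (Int.fract t)
      simpa using h2
    rw [h1]
    have h3 := hC0 (Int.fract t) ⟨Int.fract_nonneg t, (Int.fract_lt_one t).le⟩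
    simpa [Real.norm_eq_abs] using h3
  have hCpos : 0 ≤ C := le_trans (abs_nonneg _) (hCK 0)
  -- differentiability facts
  have hu2 : ContDiff ℝ (1 + 1) u := by norm_num; exact hu
  have hud : Differentiable ℝ u := hu.differentiable (by norm_num)
  have hu1 : ContDiff ℝ 1 (deriv u) := (contDiff_succ_iff_deriv.mp hu2).2.2
  have hudd : Differentiable ℝ (deriv u) := hu1.differentiable one_ne_zero
  -- the Riccati variable
  set r : ℝ → ℝ := fun t => deriv u t / u t with hrdef
  have hr_deriv : ∀ t ∈ Set.Ioi T, HasDerivAt r (-K t - r t ^ 2) t := by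
    intro t ht
    have hut : u t ≠ 0 := ne_of_gt (hpos t ht)
    have h1 : HasDerivAt u (deriv u t) t := (hud t).hasDerivAt
    have h2 : HasDerivAt (deriv u) (deriv (deriv u) t) t := (hudd t).hasDerivAt
    have h3 := h2.div h1 hut
    refine h3.congr_deriv ?_
    have h4 : deriv (deriv u) t = -(K t * u t) := by linarith [hode t]
    rw [h4, hrdef]
    field_simp
  -- matrix rows
  have hrow : ∀ t : ℝ, u (t + 1) = M 0 0 * u t + M 0 1 * deriv u t ∧
      deriv u (t + 1) = M 1 0 * u t + M 1 1 * deriv u t := by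
    intro t
    have h := hM u hu hode t
    constructor
    · have := congrFun h 0
      simpa [Matrix.mulVec, dotProduct, Fin.sum_univ_two] using this
    · have := congrFun h 1
      simpa [Matrix.mulVec, dotProduct, Fin.sum_univ_two] using this
  set B : ℝ := Real.sqrt (2 * C + 2) with hBdef
  have hB2 : B ^ 2 = 2 * C + 2 := Real.sq_sqrt (by linarith)
  have hBpos : 0 < B := Real.sqrt_pos.2 (by linarith)
  have hB1 : 1 ≤ B := by nlinarith
  -- blow-up : r cannot stay of absolute value ≥ B on an interval of length 5
  have blowup : ∀ t0, T < t0 → ¬ (∀ s ∈ Set.Icc t0 (t0 + 5), B ≤ |r s|) := by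
    intro t0 ht0 habs
    have hmem : ∀ s ∈ Set.Icc t0 (t0 + 5), s ∈ Set.Ioi T := fun s hs =>
      lt_of_lt_of_le ht0 hs.1
    have hrne : ∀ s ∈ Set.Icc t0 (t0 + 5), r s ≠ 0 := by
      intro s hs h
      have h1 := habs s hs
      rw [h] at h1; simp at h1; linarith
    have hphi : ∀ s ∈ Set.Icc t0 (t0 + 5),
        HasDerivAt (fun x => (r x)⁻¹) (-(-K s - r s ^ 2) / r s ^ 2) s :=
      fun s hs => (hr_deriv s (hmem s hs)).inv (hrne s hs)
    have hlow : ∀ s ∈ Set.Icc t0 (t0 + 5), (1:ℝ)/2 ≤ -(-K s - r s ^ 2) / r s ^ 2 := by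
      intro s hs
      have h1 := habs s hs
      have h2 : B ^ 2 ≤ r s ^ 2 := by nlinarith [sq_abs (r s), abs_nonneg (r s)]
      have h3 : 0 < r s ^ 2 := by nlinarith
      rw [le_div_iff₀ h3]
      have h4 := abs_le.mp (hCK s)
      nlinarith
    have hmvt := mvt_lower' (fun x => (r x)⁻¹) (fun s => -(-K s - r s ^ 2) / r s ^ 2)
      t0 (t0 + 5) (1/2) hphi hlow (by linarith)
    have hbnd : ∀ s ∈ Set.Icc t0 (t0 + 5), |(r s)⁻¹| ≤ 1 := by
      intro s hs
      rw [abs_inv]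
      have h1 := habs s hs
      have : 1 ≤ |r s| := le_trans hB1 h1
      calc |r s|⁻¹ ≤ 1⁻¹ := by
            apply inv_anti₀ (by norm_num) this
        _ = 1 := by norm_num
    have h5 := abs_le.mp (hbnd t0 ⟨le_refl _, by linarith⟩)
    have h6 := abs_le.mp (hbnd (t0 + 5) ⟨by linarith, le_refl _⟩)
    linarith
  -- global lower bound for r
  have hrlow : ∀ t, T < t → -B ≤ r t := by
    intro t0 ht0
    by_contra hcon
    push_neg at hcon
    have hmem : ∀ s ∈ Set.Icc t0 (t0 + 5), T < s := fun s hs => lt_of_lt_of_le ht0 hs.1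
    have hinv := noUpcross (fun s => deriv u s + B * u s)
      (fun s => -(K s * u s) + B * deriv u s) t0 (t0 + 5)
      (by
        intro s _
        have h2 : HasDerivAt (deriv u) (-(K s * u s)) s := by
          have : -(K s * u s) = deriv (deriv u) s := by linarith [hode s]
          rw [this]; exact (hudd s).hasDerivAt
        exact h2.add (((hud s).hasDerivAt).const_mul B))
      (by
        have h1 : deriv u t0 / u t0 < -B := hcon
        have h2 := hpos t0 ht0
        have h3 := (div_lt_iff₀ h2).mp h1
        nlinarith)
      (by
        intro s hs hz
        have h2 := hpos s (hmem s hs)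
        have h3 : deriv u s = -(B * u s) := by linarith
        have h4 := abs_le.mp (hCK s)
        nlinarith)
    refine blowup t0 ht0 (fun s hs => ?_)
    have h1 := hinv s hs
    have h2 := hpos s (hmem s hs)
    have h3 : r s ≤ -B := by
      rw [hrdef]
      simp only
      rw [div_le_iff₀ h2]
      nlinarith
    calc B ≤ -r s := by linarith
      _ ≤ |r s| := neg_le_abs _
  -- eventually r ≤ B
  obtain ⟨s0, hs0mem, hs0⟩ : ∃ s ∈ Set.Icc (T + 1) (T + 1 + 5), r s ≤ B := by
    by_contra hcon
    push_neg at hcon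
    refine blowup (T + 1) (by linarith) (fun s hs => ?_)
    exact le_trans (hcon s hs).le (le_abs_self _)
  have hs0T : T < s0 := lt_of_lt_of_le (by linarith) hs0mem.1
  have hrup : ∀ t, s0 ≤ t → r t ≤ B := by
    intro t1 ht1
    by_contra hcon
    push_neg at hcon
    have hmem : ∀ s ∈ Set.Icc s0 t1, T < s := fun s hs => lt_of_lt_of_le hs0T hs.1
    have hinv := noUpcross (fun s => deriv u s - B * u s)
      (fun s => -(K s * u s) - B * deriv u s) s0 t1
      (by
        intro s _
        have h2 : HasDerivAt (deriv u) (-(K s * u s)) s := by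
          have : -(K s * u s) = deriv (deriv u) s := by linarith [hode s]
          rw [this]; exact (hudd s).hasDerivAt
        exact h2.sub (((hud s).hasDerivAt).const_mul B))
      (by
        have h1 : deriv u s0 / u s0 ≤ B := hs0
        have h2 := hpos s0 hs0T
        have h3 := (div_le_iff₀ h2).mp h1
        nlinarith)
      (by
        intro s hs hz
        have h2 := hpos s (hmem s hs)
        have h4 := abs_le.mp (hCK s)
        nlinarith)
    have h1 := hinv t1 ⟨ht1, le_refl _⟩
    have h2 := hpos t1 (lt_of_lt_of_le hs0T ht1)
    have h3 : r t1 ≤ B := by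
      rw [hrdef]; simp only
      rw [div_le_iff₀ h2]
      nlinarith
    linarith
  -- r (t+1) is never equal to r t  (else positive eigenvalue)
  have hne1 : ∀ t, T < t → r (t + 1) ≠ r t := by
    intro t ht heq
    have hu1pos : 0 < u (t + 1) := hpos _ (by linarith)
    have hupos' : 0 < u t := hpos t ht
    refine heig ⟨u (t + 1) / u t, ![u t, deriv u t], div_pos hu1pos hupos', ?_, ?_⟩
    · intro h
      have h0 := congrFun h 0
      simp only [Matrix.cons_val_zero, Pi.zero_apply] at h0
      exact ne_of_gt hupos' h0
    · rw [← hM u hu hode t]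
      have hcross : deriv u (t + 1) * u t = deriv u t * u (t + 1) := by
        have := heq
        simp only [hrdef] at this
        field_simp at this
        linarith
      funext i
      fin_cases i
      · simp only [Fin.zero_eta, Matrix.cons_val_zero, Pi.smul_apply, smul_eq_mul]
        field_simp
      · simp only [Fin.mk_one, Matrix.cons_val_one, Matrix.head_cons, Matrix.cons_val_zero, Pi.smul_apply, smul_eq_mul]
        field_simp
        linarith
  -- the step function has constant sign
  have hrcont : ∀ t ∈ Set.Ioi T, ContinuousAt r t := fun t ht => (hr_deriv t ht).continuousAt
  have hsign : (∀ t, T < t → r (t + 1) < r t) ∨ (∀ t, T < t → r t < r (t + 1)) := by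
    by_cases hcase : ∀ t, T < t → r (t + 1) < r t
    · exact Or.inl hcase
    · right
      push_neg at hcase
      obtain ⟨y, hy, hy2⟩ := hcase
      have hy3 : r y < r (y + 1) := lt_of_le_of_ne hy2 (Ne.symm (hne1 y hy))
      intro x hx
      by_contra hcx
      push_neg at hcx
      have hcx2 : r (x + 1) < r x := lt_of_le_of_ne hcx (hne1 x hx)
      have hsub : Set.uIcc x y ⊆ Set.Ioi T := by
        rw [Set.uIcc_eq_union]
        rintro t (ht | ht)
        · exact lt_of_lt_of_le hx ht.1
        · exact lt_of_lt_of_le hy ht.1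
      have hgc : ContinuousOn (fun t => r (t + 1) - r t) (Set.uIcc x y) := by
        intro t ht
        have htT : T < t := hsub ht
        have c1 : ContinuousAt (fun s => r (s + 1)) t := by
          have hc1 : ContinuousAt r (t + 1) := hrcont (t + 1)
            (by simp only [Set.mem_Ioi]; linarith)
          have hc2 : ContinuousAt (fun s : ℝ => s + 1) t :=
            (continuous_id.add continuous_const).continuousAt
          exact ContinuousAt.comp (g := r) (f := fun s : ℝ => s + 1) hc1 hc2
        exact (c1.sub (hrcont t htT)).continuousWithinAt
      have hmem0 : (0:ℝ) ∈ Set.uIcc ((fun t => r (t + 1) - r t) x) ((fun t => r (t + 1) - r t) y) := by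
        simp only
        rw [Set.mem_uIcc]
        left
        constructor <;> linarith
      obtain ⟨z, hz, hz0⟩ := intermediate_value_uIcc hgc hmem0
      exact hne1 z (hsub hz) (by simp only at hz0; linarith)
  -- the sequence of Riccati values at integer translates converges
  have haT : ∀ n : ℕ, T < s0 + n := fun n =>
    lt_of_lt_of_le hs0T (le_add_of_nonneg_right (Nat.cast_nonneg n))
  have hstep : ∀ n : ℕ, r (s0 + (n + 1 : ℕ)) = r ((s0 + n) + 1) := by
    intro n
    congr 1
    push_cast
    ring
  have hlim : ∃ L, Filter.Tendsto (fun n : ℕ => r (s0 + n)) Filter.atTop (𝓝 L) := by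
    rcases hsign with hdec | hinc
    · have hanti : Antitone (fun n : ℕ => r (s0 + n)) := antitone_nat_of_succ_le (fun n => by
        rw [hstep n]
        exact (hdec (s0 + n) (haT n)).le)
      refine ⟨_, tendsto_atTop_ciInf hanti ⟨-B, ?_⟩⟩
      rintro x ⟨n, rfl⟩
      exact hrlow _ (haT n)
    · have hmono : Monotone (fun n : ℕ => r (s0 + n)) := monotone_nat_of_le_succ (fun n => by
        rw [hstep n]
        exact (hinc (s0 + n) (haT n)).le)
      refine ⟨_, tendsto_atTop_ciSup hmono ⟨B, ?_⟩⟩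
      rintro x ⟨n, rfl⟩
      exact hrup _ (le_add_of_nonneg_right (Nat.cast_nonneg n))
  obtain ⟨L, hL⟩ := hlim
  -- the two scalar recurrences
  have hd1 : ∀ n : ℕ, M 0 0 + M 0 1 * r (s0 + n) = u ((s0 + n) + 1) / u (s0 + n) := by
    intro n
    have h := (hrow (s0 + n)).1
    have hup := hpos _ (haT n)
    have hne0 : u (s0 + (n:ℝ)) ≠ 0 := ne_of_gt hup
    simp only [hrdef]
    field_simp
    linarith
  have hd2 : ∀ n : ℕ, M 1 0 + M 1 1 * r (s0 + n) =
      (M 0 0 + M 0 1 * r (s0 + n)) * r (s0 + (n + 1 : ℕ)) := by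
    intro n
    have h := (hrow (s0 + n)).2
    have hup := hpos _ (haT n)
    have hup1 : 0 < u ((s0 + n) + 1) := hpos _ (by linarith [haT n])
    have hne0 : u (s0 + (n:ℝ)) ≠ 0 := ne_of_gt hup
    have hne1' : u ((s0 + (n:ℝ)) + 1) ≠ 0 := ne_of_gt hup1
    rw [hd1 n, hstep n]
    simp only [hrdef]
    have hcan : u ((s0 + (n:ℝ)) + 1) / u (s0 + (n:ℝ)) *
        (deriv u ((s0 + (n:ℝ)) + 1) / u ((s0 + (n:ℝ)) + 1)) =
        deriv u ((s0 + (n:ℝ)) + 1) / u (s0 + (n:ℝ)) := by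
      field_simp
    rw [hcan]
    field_simp
    linarith
  -- pass to the limit
  have hLlim : Filter.Tendsto (fun n : ℕ => r (s0 + (n + 1 : ℕ))) Filter.atTop (𝓝 L) :=
    hL.comp (Filter.tendsto_add_atTop_nat 1)
  have hdlim : Filter.Tendsto (fun n : ℕ => M 0 0 + M 0 1 * r (s0 + n)) Filter.atTop
      (𝓝 (M 0 0 + M 0 1 * L)) := tendsto_const_nhds.add (tendsto_const_nhds.mul hL)
  have hdlow : ∀ n : ℕ, Real.exp (-B) ≤ M 0 0 + M 0 1 * r (s0 + n) := by
    intro n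
    rw [hd1 n]
    have htT : T < s0 + n := haT n
    have hup := hpos _ htT
    have hup1 : 0 < u ((s0 + n) + 1) := hpos _ (by linarith)
    have hlog : ∀ s ∈ Set.Icc (s0 + (n:ℝ)) ((s0 + n) + 1),
        HasDerivAt (fun x => Real.log (u x)) (r s) s := by
      intro s hs
      have hsT : T < s := lt_of_lt_of_le htT hs.1
      have := ((hud s).hasDerivAt).log (ne_of_gt (hpos s hsT))
      simpa [hrdef] using this
    have hmvt := mvt_lower' (fun x => Real.log (u x)) r (s0 + n) ((s0 + n) + 1) (-B) hlog
      (fun s hs => hrlow s (lt_of_lt_of_le htT hs.1)) (by linarith)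
    have hexp : Real.exp (-B) ≤ Real.exp (Real.log (u ((s0 + n) + 1)) - Real.log (u (s0 + n))) := by
      apply Real.exp_le_exp.2
      linarith
    rwa [Real.exp_sub, Real.exp_log hup1, Real.exp_log hup] at hexp
  have hlampos : 0 < M 0 0 + M 0 1 * L :=
    lt_of_lt_of_le (Real.exp_pos _) (ge_of_tendsto hdlim (Filter.Eventually.of_forall hdlow))
  have heq2 : M 1 0 + M 1 1 * L = (M 0 0 + M 0 1 * L) * L := by
    have h1 : Filter.Tendsto (fun n : ℕ => M 1 0 + M 1 1 * r (s0 + n)) Filter.atTop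
        (𝓝 (M 1 0 + M 1 1 * L)) := tendsto_const_nhds.add (tendsto_const_nhds.mul hL)
    have h2 : Filter.Tendsto (fun n : ℕ => (M 0 0 + M 0 1 * r (s0 + n)) * r (s0 + (n + 1 : ℕ)))
        Filter.atTop (𝓝 ((M 0 0 + M 0 1 * L) * L)) := hdlim.mul hLlim
    have h3 : (fun n : ℕ => M 1 0 + M 1 1 * r (s0 + n)) =
        fun n : ℕ => (M 0 0 + M 0 1 * r (s0 + n)) * r (s0 + (n + 1 : ℕ)) := funext hd2
    rw [h3] at h1
    exact tendsto_nhds_unique h1 h2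
  refine heig ⟨M 0 0 + M 0 1 * L, ![1, L], hlampos, ?_, ?_⟩
  · intro h
    have h0 := congrFun h 0
    simp at h0
  · funext i
    fin_cases i
    · simp [Matrix.mulVec, dotProduct, Fin.sum_univ_two]
    · simp only [Matrix.mulVec, dotProduct, Fin.sum_univ_two, Matrix.cons_val_one,
        Matrix.head_cons, Matrix.cons_val_zero, Pi.smul_apply, smul_eq_mul]
      show M 1 0 * 1 + M 1 1 * L = (M 0 0 + M 0 1 * L) * L
      linarith [heq2]

/-- If the linear Poincaré map of a closed geodesic has no positive real eigenvalue,
then every nontrivial Jacobi field has infinitely many zeros. -/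
theorem stmt5 (K : ℝ → ℝ) (hK : Continuous K) (hper : ∀ t, K (t + 1) = K t)
    (M : Matrix (Fin 2) (Fin 2) ℝ)
    (hM : ∀ u : ℝ → ℝ, ContDiff ℝ 2 u → (∀ t, deriv (deriv u) t + K t * u t = 0) →
      ∀ t, ![u (t + 1), deriv u (t + 1)] = M.mulVec ![u t, deriv u t])
    (heig : ¬ ∃ (lam : ℝ) (v : Fin 2 → ℝ), 0 < lam ∧ v ≠ 0 ∧ M.mulVec v = lam • v) :
    ∀ u : ℝ → ℝ, ContDiff ℝ 2 u → (∀ t, deriv (deriv u) t + K t * u t = 0) →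
      u ≠ 0 → ∀ T : ℝ, ∃ t > T, u t = 0 := by
  intro u hu hode _hne T
  by_contra hcon
  push_neg at hcon
  have hT1 : u (T + 1) ≠ 0 := hcon (T + 1) (by linarith)
  have hucont : Continuous u := hu.continuous
  have hivt : ∀ t, T < t → u (T + 1) < 0 → 0 < u t → False := by
    intro t ht h1 h2
    have hc : ContinuousOn u (Set.uIcc (T + 1) t) := hucont.continuousOn
    have h0 : (0:ℝ) ∈ Set.uIcc (u (T + 1)) (u t) := Set.mem_uIcc.2 (Or.inl ⟨h1.le, h2.le⟩)
    obtain ⟨z, hz, hz0⟩ := intermediate_value_uIcc hc h0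
    have hzT : T < z := by
      rw [Set.uIcc_eq_union] at hz
      rcases hz with hz | hz
      · linarith [hz.1]
      · linarith [hz.1]
    exact hcon z hzT hz0
  have hivt' : ∀ t, T < t → 0 < u (T + 1) → u t < 0 → False := by
    intro t ht h1 h2
    have hc : ContinuousOn u (Set.uIcc (T + 1) t) := hucont.continuousOn
    have h0 : (0:ℝ) ∈ Set.uIcc (u (T + 1)) (u t) := Set.mem_uIcc.2 (Or.inr ⟨h2.le, h1.le⟩)
    obtain ⟨z, hz, hz0⟩ := intermediate_value_uIcc hc h0
    have hzT : T < z := by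
      rw [Set.uIcc_eq_union] at hz
      rcases hz with hz | hz
      · linarith [hz.1]
      · linarith [hz.1]
    exact hcon z hzT hz0
  rcases hT1.lt_or_gt with hneg | hposx
  · -- u (T+1) < 0 : apply key to -u
    have hode' : ∀ t, deriv (deriv (fun s => -u s)) t + K t * (fun s => -u s) t = 0 := by
      intro t
      have hderiv : deriv (fun s => -u s) = fun s => -deriv u s := by
        funext s; exact deriv.neg
      rw [hderiv]
      have h2 : deriv (fun s => -deriv u s) t = -deriv (deriv u) t := deriv.neg
      rw [h2]
      have := hode t
      simp only
      linarith
    refine key K hK hper M hM heig (fun s => -u s) hu.neg hode' T ?_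
    intro t ht
    rcases (hcon t ht).lt_or_gt with h | h
    · linarith
    · exact absurd (hivt t ht hneg h) not_false
  · -- u (T+1) > 0
    refine key K hK hper M hM heig u hu hode T ?_
    intro t ht
    rcases (hcon t ht).lt_or_gt with h | h
    · exact absurd (hivt' t ht hposx h) not_false
    · exact h
end

section
/- Let K : ℝ → ℝ be continuous with K(t+1) = K(t) for all t, and suppose the closed geodesic is strictly stable: there exists δ > 0 such that every 1-periodic C¹ function f : ℝ → ℝ satisfies ∫₀¹ (f')² − ∫₀¹ K f² ≥ δ ∫₀¹ f². Then the linear Poincaré map M (the 2×2 matrix with (u(t+1), u'(t+1)) = M · (u(t), u'(t)) for all solutions u of u'' + K u = 0) has two real eigenvalues λ and 1/λ with 0 < λ < 1; in particular M is hyperbolic and has a basis of eigenvectors. -/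
open MeasureTheory

open Set intervalIntegral
open scoped NNReal

noncomputable section StmtAux

/-- vector field of the system u' = v, v' = -k u -/
def vf (k : ℝ → ℝ) : ℝ → ℝ × ℝ → ℝ × ℝ := fun t p => (p.2, -(k t * p.1))

lemma vf_lip {k : ℝ → ℝ} {L : ℝ} (hL : 1 ≤ L) (hk : ∀ t, |k t| ≤ L) (t : ℝ) :
    LipschitzWith (Real.toNNReal L) (vf k t) := by
  apply LipschitzWith.of_dist_le_mul
  intro p q
  rw [Prod.dist_eq]
  have hcoe : ((Real.toNNReal L : ℝ≥0) : ℝ) = L := Real.coe_toNNReal _ (by linarith)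
  rw [hcoe, Prod.dist_eq]
  simp only [vf, Real.dist_eq]
  have h1 : |p.2 - q.2| ≤ L * max |p.1 - q.1| |p.2 - q.2| := by
    calc |p.2 - q.2| ≤ max |p.1 - q.1| |p.2 - q.2| := le_max_right _ _
    _ ≤ L * max |p.1 - q.1| |p.2 - q.2| := by nlinarith [abs_nonneg (p.1 - q.1), abs_nonneg (p.2 - q.2), le_max_left |p.1 - q.1| |p.2 - q.2|]
  have h2 : |(-(k t * p.1)) - (-(k t * q.1))| ≤ L * max |p.1 - q.1| |p.2 - q.2| := by
    have : (-(k t * p.1)) - (-(k t * q.1)) = k t * (q.1 - p.1) := by ring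
    rw [this, abs_mul]
    calc |k t| * |q.1 - p.1| ≤ L * |q.1 - p.1| := by
          apply mul_le_mul_of_nonneg_right (hk t) (abs_nonneg _)
    _ ≤ L * max |p.1 - q.1| |p.2 - q.2| := by
          apply mul_le_mul_of_nonneg_left _ (by linarith)
          rw [abs_sub_comm]
          exact le_max_left _ _
  exact max_le h1 h2

lemma vf_norm_le {k : ℝ → ℝ} {L : ℝ} (hL : 1 ≤ L) (hk : ∀ t, |k t| ≤ L) (t : ℝ) (p : ℝ × ℝ) :
    ‖vf k t p‖ ≤ L * ‖p‖ := by
  simp only [Prod.norm_def, vf, Real.norm_eq_abs]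
  have hp1 : |p.1| ≤ max |p.1| |p.2| := le_max_left _ _
  have hp2 : |p.2| ≤ max |p.1| |p.2| := le_max_right _ _
  have h0 : (0:ℝ) ≤ max |p.1| |p.2| := le_trans (abs_nonneg _) hp1
  apply max_le
  · nlinarith
  · rw [abs_neg, abs_mul]
    nlinarith [abs_nonneg (k t), hk t]

/-- local existence with uniform step 1/(2 max 1 C) -/
lemma localSol {k : ℝ → ℝ} (hk : Continuous k) {C : ℝ} (hC : ∀ t, |k t| ≤ C)
    (t₀ : ℝ) (x₀ : ℝ × ℝ) :
    ∃ x : ℝ → ℝ × ℝ, x t₀ = x₀ ∧ ∀ t ∈ Icc (t₀ - 1/(2 * max 1 C)) (t₀ + 1/(2 * max 1 C)),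
      HasDerivWithinAt x (vf k t (x t)) (Icc (t₀ - 1/(2 * max 1 C)) (t₀ + 1/(2 * max 1 C))) t := by
  set L : ℝ := max 1 C with hLdef
  have hL1 : 1 ≤ L := le_max_left _ _
  have hL0 : 0 < L := lt_of_lt_of_le one_pos hL1
  have hkL : ∀ t, |k t| ≤ L := fun t => le_trans (hC t) (le_max_right _ _)
  set h : ℝ := 1/(2 * L) with hhdef
  have hh0 : 0 < h := by positivity
  have hpl : IsPicardLindelof (vf k) (tmin := t₀ - h) (tmax := t₀ + h)
      ⟨t₀, by constructor <;> linarith⟩ x₀ (Real.toNNReal (‖x₀‖ + 1)) 0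
      (Real.toNNReal (L * (2 * ‖x₀‖ + 1))) (Real.toNNReal L) := by
    have ca : ((Real.toNNReal (‖x₀‖ + 1) : ℝ≥0) : ℝ) = ‖x₀‖ + 1 :=
      Real.coe_toNNReal _ (by positivity)
    have cb : ((Real.toNNReal (L * (2 * ‖x₀‖ + 1)) : ℝ≥0) : ℝ) = L * (2 * ‖x₀‖ + 1) :=
      Real.coe_toNNReal _ (by positivity)
    constructor
    · intro t _
      exact (vf_lip hL1 hkL t).lipschitzOnWith
    · intro p _
      apply Continuous.continuousOn
      exact (continuous_const.prodMk ((continuous_neg.comp (hk.mul continuous_const)))).comp continuous_id |>.congr (fun t => rfl)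
    · intro t _ p hp
      rw [cb]
      calc ‖vf k t p‖ ≤ L * ‖p‖ := vf_norm_le hL1 hkL t p
      _ ≤ L * (2 * ‖x₀‖ + 1) := by
          apply mul_le_mul_of_nonneg_left _ hL0.le
          have := mem_closedBall_iff_norm.mp hp
          rw [ca] at this
          have h2 : ‖p‖ - ‖x₀‖ ≤ ‖p - x₀‖ := norm_sub_norm_le _ _
          linarith
    · have : max (t₀ + h - t₀) (t₀ - (t₀ - h)) = h := by
        simp
      simp only [NNReal.coe_zero, sub_zero, ca, cb]
      rw [this]
      rw [hhdef]
      rw [mul_one_div]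
      rw [div_le_iff₀ (by positivity)]
      ring_nf
      nlinarith [norm_nonneg x₀]
  obtain ⟨x, hx0, hxd⟩ := hpl.exists_eq_forall_mem_Icc_hasDerivWithinAt₀
  exact ⟨x, hx0, hxd⟩

end StmtAux

section P2
variable {E : Type*} [NormedAddCommGroup E] [NormedSpace ℝ E]

lemma hasDerivWithinAt_of_nmem_closure' {f : ℝ → E} {f' : E} {s : Set ℝ} {x : ℝ}
    (h : x ∉ closure s) : HasDerivWithinAt f f' s x :=
  HasFDerivWithinAt.of_notMem_closure h

/-- glue two solutions matching at the junction -/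
lemma glueSol {F : ℝ → E → E} {x y : ℝ → E} {a b c : ℝ} (hab : a ≤ b) (hbc : b ≤ c)
    (hx : ∀ t ∈ Icc a b, HasDerivWithinAt x (F t (x t)) (Icc a b) t)
    (hy : ∀ t ∈ Icc b c, HasDerivWithinAt y (F t (y t)) (Icc b c) t)
    (hxy : x b = y b) :
    ∃ z : ℝ → E, (∀ t, t ≤ b → z t = x t) ∧ (∀ t, b ≤ t → z t = y t) ∧
      ∀ t ∈ Icc a c, HasDerivWithinAt z (F t (z t)) (Icc a c) t := by
  classical
  refine ⟨fun t => if t ≤ b then x t else y t, fun t ht => if_pos ht, ?_, ?_⟩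
  · intro t ht
    by_cases h : t ≤ b
    · have : t = b := le_antisymm h ht
      simp [this, hxy]
    · exact if_neg h
  set z : ℝ → E := fun t => if t ≤ b then x t else y t with hz
  have hzx : ∀ t ∈ Icc a b, z t = x t := fun t ht => if_pos ht.2
  have hzy : ∀ t ∈ Icc b c, z t = y t := by
    intro t ht
    by_cases h : t ≤ b
    · have : t = b := le_antisymm h ht.1
      simp [hz, this, hxy]
    · exact if_neg h
  have hz1 : ∀ t ∈ Icc a b, HasDerivWithinAt z (F t (z t)) (Icc a b) t := by
    intro t ht
    rw [hzx t ht]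
    exact (hx t ht).congr hzx (hzx t ht)
  have hz2 : ∀ t ∈ Icc b c, HasDerivWithinAt z (F t (z t)) (Icc b c) t := by
    intro t ht
    rw [hzy t ht]
    exact (hy t ht).congr hzy (hzy t ht)
  intro t ht
  rw [← Icc_union_Icc_eq_Icc hab hbc]
  rcases lt_trichotomy t b with h | h | h
  · apply HasDerivWithinAt.union (hz1 t ⟨ht.1, h.le⟩)
    apply hasDerivWithinAt_of_nmem_closure'
    rw [closure_Icc]
    intro hmem
    exact absurd hmem.1 (not_le.mpr h)
  · exact (hz1 t ⟨ht.1, h.le⟩).union (hz2 t ⟨h.ge, ht.2⟩)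
  · refine HasDerivWithinAt.union ?_ (hz2 t ⟨h.le, ht.2⟩)
    apply hasDerivWithinAt_of_nmem_closure'
    rw [closure_Icc]
    intro hmem
    exact absurd hmem.2 (not_le.mpr h)

end P2

noncomputable section P3

lemma globalUniq {k : ℝ → ℝ} {C : ℝ} (hC : ∀ t, |k t| ≤ C) {x y : ℝ → ℝ × ℝ}
    (hx : ∀ t, HasDerivAt x (vf k t (x t)) t) (hy : ∀ t, HasDerivAt y (vf k t (y t)) t)
    {t₀ : ℝ} (h0 : x t₀ = y t₀) : x = y := by
  funext t
  have hL1 : (1:ℝ) ≤ max 1 C := le_max_left _ _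
  have hkL : ∀ s, |k s| ≤ max 1 C := fun s => le_trans (hC s) (le_max_right _ _)
  have hv : ∀ s, LipschitzOnWith (Real.toNNReal (max 1 C)) (vf k s) univ :=
    fun s => (vf_lip hL1 hkL s).lipschitzOnWith
  set a := min t₀ t - 1 with ha
  set b := max t₀ t + 1 with hb
  have hmem : t₀ ∈ Ioo a b := by
    constructor
    · have := min_le_left t₀ t; simp only [ha]; linarith
    · have := le_max_left t₀ t; simp only [hb]; linarith
  have := ODE_solution_unique_of_mem_Icc (v := vf k) (s := fun _ => univ) (fun s _ => hv s) hmem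
    (fun s _ => (hx s).continuousAt.continuousWithinAt)
    (fun s _ => hx s) (fun _ _ => trivial)
    (fun s _ => (hy s).continuousAt.continuousWithinAt)
    (fun s _ => hy s) (fun _ _ => trivial) h0
  apply this
  constructor
  · have := min_le_right t₀ t; simp only [ha]; linarith
  · have := le_max_right t₀ t; simp only [hb]; linarith

lemma globalSol {k : ℝ → ℝ} (hk : Continuous k) {C : ℝ} (hC : ∀ t, |k t| ≤ C) (x₀ : ℝ × ℝ) :
    ∃ x : ℝ → ℝ × ℝ, x 0 = x₀ ∧ ∀ t, HasDerivAt x (vf k t (x t)) t := by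
  set h : ℝ := 1/(2 * max 1 C) with hhdef
  have hL1 : (1:ℝ) ≤ max 1 C := le_max_left _ _
  have hh0 : 0 < h := by
    rw [hhdef]; positivity
  have key : ∀ n : ℕ, ∃ x : ℝ → ℝ × ℝ, x 0 = x₀ ∧
      ∀ t ∈ Icc (-(((n:ℝ)+1)*h)) (((n:ℝ)+1)*h),
        HasDerivWithinAt x (vf k t (x t)) (Icc (-(((n:ℝ)+1)*h)) (((n:ℝ)+1)*h)) t := by
    intro n
    induction n with
    | zero =>
      obtain ⟨x, hx0, hxd⟩ := localSol hk hC 0 x₀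
      have e1 : (0:ℝ) - h = -(((0:ℕ):ℝ)+1)*h := by push_cast; ring
      have e2 : (0:ℝ) + h = (((0:ℕ):ℝ)+1)*h := by push_cast; ring
      refine ⟨x, hx0, ?_⟩
      rw [show -((((0:ℕ):ℝ)+1)*h) = 0 - h by push_cast; ring,
          show (((0:ℕ):ℝ)+1)*h = 0 + h by push_cast; ring]
      exact hxd
    | succ n ih =>
      obtain ⟨x, hx0, hxd⟩ := ih
      set m : ℝ := (n:ℝ) + 1 with hm
      have hm0 : 0 ≤ m*h := by positivity
      -- extend right
      obtain ⟨y, hy0, hyd⟩ := localSol hk hC (m*h) (x (m*h))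
      have hysub : Icc (m*h) (m*h + h) ⊆ Icc (m*h - h) (m*h + h) :=
        Icc_subset_Icc (by linarith) le_rfl
      have hyd' : ∀ t ∈ Icc (m*h) (m*h + h),
          HasDerivWithinAt y (vf k t (y t)) (Icc (m*h) (m*h + h)) t :=
        fun t ht => (hyd t (hysub ht)).mono hysub
      obtain ⟨z₁, hz₁x, hz₁y, hz₁d⟩ := glueSol (by linarith) (by linarith) hxd hyd' (by rw [hy0])
      -- extend left
      obtain ⟨w, hw0, hwd⟩ := localSol hk hC (-(m*h)) (x (-(m*h)))
      have hwsub : Icc (-(m*h) - h) (-(m*h)) ⊆ Icc (-(m*h) - h) (-(m*h) + h) :=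
        Icc_subset_Icc le_rfl (by linarith)
      have hwd' : ∀ t ∈ Icc (-(m*h) - h) (-(m*h)),
          HasDerivWithinAt w (vf k t (w t)) (Icc (-(m*h) - h) (-(m*h))) t :=
        fun t ht => (hwd t (hwsub ht)).mono hwsub
      have hwz : w (-(m*h)) = z₁ (-(m*h)) := by
        rw [hw0, hz₁x _ (by linarith)]
      obtain ⟨z, hzw, hzz₁, hzd⟩ := glueSol (by linarith) (by linarith) hwd' hz₁d hwz
      refine ⟨z, ?_, ?_⟩
      · rw [hzz₁ 0 (by linarith), hz₁x 0 (by linarith), hx0]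
      · have e1 : -((((n+1:ℕ):ℝ)+1)*h) = -(m*h) - h := by push_cast [hm]; ring
        have e2 : (((n+1:ℕ):ℝ)+1)*h = m*h + h := by push_cast [hm]; ring
        rw [e1, e2]
        exact hzd
  choose X hX0 hXd using key
  have hP : ∀ t : ℝ, ∃ n : ℕ, |t| < ((n:ℝ)+1)*h := by
    intro t
    obtain ⟨n, hn⟩ := exists_nat_gt (|t|/h)
    refine ⟨n, ?_⟩
    rw [div_lt_iff₀ hh0] at hn
    nlinarith
  set u : ℝ → ℝ × ℝ := fun t => X ((hP t).choose) t with hu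
  have hLip : ∀ s, LipschitzOnWith (Real.toNNReal (max 1 C)) (vf k s) univ :=
    fun s => (vf_lip hL1 (fun s => le_trans (hC s) (le_max_right _ _)) s).lipschitzOnWith
  have huniq : ∀ (p q : ℕ) (t : ℝ), t ∈ Icc (-(((p:ℝ)+1)*h)) (((p:ℝ)+1)*h) →
      t ∈ Icc (-(((q:ℝ)+1)*h)) (((q:ℝ)+1)*h) → X p t = X q t := by
    intro p q t htp htq
    set r : ℝ := min (((p:ℝ)+1)*h) (((q:ℝ)+1)*h) with hr
    have hr0 : 0 < r := lt_min (by positivity) (by positivity)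
    have hrp : r ≤ ((p:ℝ)+1)*h := min_le_left _ _
    have hrq : r ≤ ((q:ℝ)+1)*h := min_le_right _ _
    have hsubp : Icc (-r) r ⊆ Icc (-(((p:ℝ)+1)*h)) (((p:ℝ)+1)*h) :=
      Icc_subset_Icc (by linarith) hrp
    have hsubq : Icc (-r) r ⊆ Icc (-(((q:ℝ)+1)*h)) (((q:ℝ)+1)*h) :=
      Icc_subset_Icc (by linarith) hrq
    have hder : ∀ (j : ℕ), r ≤ ((j:ℝ)+1)*h → ∀ s ∈ Ioo (-r) r, HasDerivAt (X j) (vf k s (X j s)) s := by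
      intro j hj s hs
      have hmem : s ∈ Icc (-(((j:ℝ)+1)*h)) (((j:ℝ)+1)*h) :=
        ⟨by cases hs with | intro h1 h2 => linarith, by cases hs with | intro h1 h2 => linarith⟩
      apply (hXd j s hmem).hasDerivAt
      apply Icc_mem_nhds
      · cases hs with | intro h1 h2 => linarith
      · cases hs with | intro h1 h2 => linarith
    have := ODE_solution_unique_of_mem_Icc (v := vf k) (s := fun _ => univ) (fun s _ => hLip s)
      (show (0:ℝ) ∈ Ioo (-r) r by constructor <;> linarith)
      (fun s hs => ((hXd p s (hsubp hs)).mono hsubp).continuousWithinAt)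
      (hder p hrp) (fun _ _ => trivial)
      (fun s hs => ((hXd q s (hsubq hs)).mono hsubq).continuousWithinAt)
      (hder q hrq) (fun _ _ => trivial)
      (by rw [hX0 p, hX0 q])
    apply this
    exact ⟨by cases htp with | intro h1 h2 => cases htq with | intro h3 h4 =>
            simp only [hr, le_min_iff, neg_le]; constructor <;> [linarith; linarith],
           le_min htp.2 htq.2⟩
  have humem : ∀ t : ℝ, t ∈ Icc (-((((hP t).choose:ℝ)+1)*h)) ((((hP t).choose:ℝ)+1)*h) := by
    intro t
    have := (hP t).choose_spec
    rw [abs_lt] at this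
    exact ⟨this.1.le, this.2.le⟩
  have hueq : ∀ (n : ℕ) (t : ℝ), t ∈ Icc (-(((n:ℝ)+1)*h)) (((n:ℝ)+1)*h) → u t = X n t :=
    fun n t ht => huniq _ n t (humem t) ht
  refine ⟨u, ?_, ?_⟩
  · rw [hu]; simp only; rw [hX0]
  · intro t
    obtain ⟨n, hn⟩ := hP t
    rw [abs_lt] at hn
    have hmem : t ∈ Icc (-(((n:ℝ)+1)*h)) (((n:ℝ)+1)*h) := ⟨hn.1.le, hn.2.le⟩
    have hX : HasDerivAt (X n) (vf k t (X n t)) t := by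
      apply (hXd n t hmem).hasDerivAt
      exact Icc_mem_nhds hn.1 hn.2
    have hev : u =ᶠ[nhds t] X n := by
      apply Filter.eventuallyEq_of_mem (Ioo_mem_nhds hn.1 hn.2)
      intro s hs
      exact hueq n s (Ioo_subset_Icc_self hs)
    rw [hueq n t hmem]
    exact hX.congr_of_eventuallyEq hev

end P3

noncomputable section P4

/-- `u` is a Jacobi field for curvature-type function `k` -/
def IsJac (k : ℝ → ℝ) (u : ℝ → ℝ) : Prop :=
  ContDiff ℝ 2 u ∧ ∀ t, deriv (deriv u) t = -(k t * u t)

namespace IsJac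

variable {k u : ℝ → ℝ}

lemma diff (h : IsJac k u) : Differentiable ℝ u :=
  h.1.differentiable (by norm_num)

lemma contDiffDeriv (h : IsJac k u) : ContDiff ℝ 1 (deriv u) := by
  have := (contDiff_succ_iff_deriv (n := 1)).mp (by exact_mod_cast h.1)
  exact this.2.2

lemma diffDeriv (h : IsJac k u) : Differentiable ℝ (deriv u) :=
  h.contDiffDeriv.differentiable (by norm_num)

lemma du (h : IsJac k u) (t : ℝ) : HasDerivAt u (deriv u t) t :=
  (h.diff t).hasDerivAt

lemma ddu (h : IsJac k u) (t : ℝ) : HasDerivAt (deriv u) (-(k t * u t)) t := by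
  have := (h.diffDeriv t).hasDerivAt
  rwa [h.2 t] at this

lemma cont (h : IsJac k u) : Continuous u := h.diff.continuous

lemma cont' (h : IsJac k u) : Continuous (deriv u) := h.diffDeriv.continuous

lemma pair (h : IsJac k u) (t : ℝ) :
    HasDerivAt (fun s => (u s, deriv u s)) (vf k t (u t, deriv u t)) t :=
  (h.du t).prodMk (h.ddu t)

end IsJac

/-- existence of global Jacobi fields -/
lemma existsJac {k : ℝ → ℝ} (hk : Continuous k) {C : ℝ} (hC : ∀ t, |k t| ≤ C) (a b : ℝ) :
    ∃ u : ℝ → ℝ, IsJac k u ∧ u 0 = a ∧ deriv u 0 = b := by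
  obtain ⟨x, hx0, hxd⟩ := globalSol hk hC (a, b)
  set u : ℝ → ℝ := fun t => (x t).1 with hu
  set q : ℝ → ℝ := fun t => (x t).2 with hq
  have hud : ∀ t, HasDerivAt u (q t) t := by
    intro t
    have := (hxd t).fst
    exact this
  have hqd : ∀ t, HasDerivAt q (-(k t * u t)) t := by
    intro t
    have := (hxd t).snd
    exact this
  have hderiv : deriv u = q := funext fun t => (hud t).deriv
  have hdiff : Differentiable ℝ u := fun t => (hud t).differentiableAt
  have hdiffq : Differentiable ℝ q := fun t => (hqd t).differentiableAt
  have hderiv2 : ∀ t, deriv (deriv u) t = -(k t * u t) := by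
    intro t
    rw [hderiv]
    exact (hqd t).deriv
  have hcd : ContDiff ℝ 2 u := by
    rw [show (2 : WithTop ℕ∞) = 1 + 1 by norm_num, contDiff_succ_iff_deriv]
    refine ⟨hdiff, by simp, ?_⟩
    rw [contDiff_one_iff_deriv]
    refine ⟨by rw [hderiv]; exact hdiffq, ?_⟩
    have : deriv (deriv u) = fun t => -(k t * u t) := funext hderiv2
    rw [this]
    exact (hk.mul hdiff.continuous).neg
  refine ⟨u, ⟨hcd, hderiv2⟩, by rw [hu]; simp [hx0], by rw [hderiv, hq]; simp [hx0]⟩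

/-- uniqueness of Jacobi fields -/
lemma jacUniq {k : ℝ → ℝ} {C : ℝ} (hC : ∀ t, |k t| ≤ C) {u w : ℝ → ℝ}
    (hu : IsJac k u) (hw : IsJac k w) {t₀ : ℝ}
    (h0 : u t₀ = w t₀) (h0' : deriv u t₀ = deriv w t₀) : u = w := by
  have hx : ∀ t, HasDerivAt (fun s => (u s, deriv u s)) (vf k t (u t, deriv u t)) t := hu.pair
  have hy : ∀ t, HasDerivAt (fun s => (w s, deriv w s)) (vf k t (w t, deriv w t)) t := hw.pair
  have := globalUniq hC hx hy (t₀ := t₀) (by rw [h0, h0'])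
  funext t
  have := congrFun this t
  exact (Prod.mk.injEq _ _ _ _ ▸ this).1

end P4

noncomputable section P5

variable {k k₁ k₂ u w : ℝ → ℝ}

/-- builder for IsJac -/
lemma isJac_of (hk : Continuous k) {u q : ℝ → ℝ} (hu : ∀ t, HasDerivAt u (q t) t)
    (hq : ∀ t, HasDerivAt q (-(k t * u t)) t) : IsJac k u := by
  have hderiv : deriv u = q := funext fun t => (hu t).deriv
  have hdiff : Differentiable ℝ u := fun t => (hu t).differentiableAt
  have hdiffq : Differentiable ℝ q := fun t => (hq t).differentiableAt
  have hderiv2 : ∀ t, deriv (deriv u) t = -(k t * u t) := by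
    intro t; rw [hderiv]; exact (hq t).deriv
  refine ⟨?_, hderiv2⟩
  rw [show (2 : WithTop ℕ∞) = 1 + 1 by norm_num, contDiff_succ_iff_deriv]
  refine ⟨hdiff, by simp, ?_⟩
  rw [contDiff_one_iff_deriv]
  refine ⟨by rw [hderiv]; exact hdiffq, ?_⟩
  have : deriv (deriv u) = fun t => -(k t * u t) := funext hderiv2
  rw [this]
  exact (hk.mul hdiff.continuous).neg

/-- Gronwall self bound on [0,1] -/
lemma gronSelf (h : IsJac k u) {L : ℝ} (hL : 1 ≤ L) (hk : ∀ t, |k t| ≤ L) :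
    ∀ t ∈ Icc (0:ℝ) 1, |u t| ≤ (|u 0| + |deriv u 0|) * Real.exp L := by
  set f : ℝ → ℝ × ℝ := fun t => (u t, deriv u t) with hf
  have hbound := norm_le_gronwallBound_of_norm_deriv_right_le (f := f)
    (f' := fun t => vf k t (f t)) (δ := ‖f 0‖) (K := L) (ε := 0) (a := 0) (b := 1)
    (Continuous.continuousOn (by
      exact (h.cont.prodMk h.cont')))
    (fun t _ => (h.pair t).hasDerivWithinAt)
    le_rfl
    (fun t _ => by rw [add_zero]; exact vf_norm_le hL hk t (f t))
  intro t ht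
  have h1 := hbound t ht
  rw [sub_zero, gronwallBound_ε0] at h1
  have h2 : |u t| ≤ ‖f t‖ := by
    have := norm_fst_le (f t)
    simpa [hf] using this
  have h3 : ‖f 0‖ ≤ |u 0| + |deriv u 0| := by
    rw [hf, Prod.norm_def]
    simp only [Real.norm_eq_abs]
    exact max_le (le_add_of_nonneg_right (abs_nonneg _)) (le_add_of_nonneg_left (abs_nonneg _))
  have hexp : Real.exp (L * t) ≤ Real.exp L := by
    apply Real.exp_le_exp.mpr
    nlinarith [ht.1, ht.2]
  have h0 : (0:ℝ) ≤ ‖f 0‖ := norm_nonneg _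
  calc |u t| ≤ ‖f t‖ := h2
  _ ≤ ‖f 0‖ * Real.exp (L * t) := h1
  _ ≤ ‖f 0‖ * Real.exp L := by nlinarith [Real.exp_pos (L*t)]
  _ ≤ (|u 0| + |deriv u 0|) * Real.exp L := by nlinarith [Real.exp_pos L]

/-- Gronwall difference bound on [0,1] -/
lemma gronDiff (h1 : IsJac k₁ u) (h2 : IsJac k₂ w)
    (hu0 : u 0 = w 0) (hu0' : deriv u 0 = deriv w 0) {L ε : ℝ}
    (hL : 1 ≤ L) (hk2 : ∀ t, |k₂ t| ≤ L) (hε : 0 ≤ ε)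
    (hpert : ∀ t ∈ Icc (0:ℝ) 1, |k₁ t - k₂ t| * |u t| ≤ ε) :
    ∀ t ∈ Icc (0:ℝ) 1, |u t - w t| ≤ ε * Real.exp L ∧
      |deriv u t - deriv w t| ≤ ε * Real.exp L := by
  set d : ℝ → ℝ × ℝ := fun t => (u t - w t, deriv u t - deriv w t) with hd
  set d' : ℝ → ℝ × ℝ := fun t =>
    (deriv u t - deriv w t, -(k₂ t * (u t - w t)) - (k₁ t - k₂ t) * u t) with hd'
  have hder : ∀ t, HasDerivAt d (d' t) t := by
    intro t
    apply HasDerivAt.prodMk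
    · exact (h1.du t).sub (h2.du t)
    · have := (h1.ddu t).sub (h2.ddu t)
      exact this.congr_deriv (by ring)
  have hbound := norm_le_gronwallBound_of_norm_deriv_right_le (f := d)
    (f' := d') (δ := 0) (K := L) (ε := ε) (a := 0) (b := 1)
    (Continuous.continuousOn (by
      exact ((h1.cont.sub h2.cont).prodMk (h1.cont'.sub h2.cont'))))
    (fun t _ => (hder t).hasDerivWithinAt)
    (by rw [hd]; simp [hu0, hu0'])
    ?_
  · intro t ht
    have hb := hbound t ht
    rw [sub_zero] at hb
    have hgb : gronwallBound 0 L ε t ≤ ε * Real.exp L := by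
      rw [gronwallBound_of_K_ne_0 (by linarith : L ≠ 0)]
      simp only [zero_mul, zero_add]
      have hLt : Real.exp (L * t) ≤ Real.exp L := by
        apply Real.exp_le_exp.mpr
        nlinarith [ht.1, ht.2]
      have hεL : ε / L ≤ ε := by
        apply div_le_self hε (by linarith)
      have e1 : (0:ℝ) < Real.exp (L * t) := Real.exp_pos _
      have e2 : (0:ℝ) < Real.exp L := Real.exp_pos _
      have h3 : Real.exp (L * t) - 1 ≤ Real.exp L := by linarith
      have h4 : (0:ℝ) ≤ Real.exp (L*t) - 1 := by
        have : Real.exp 0 ≤ Real.exp (L * t) := Real.exp_le_exp.mpr (by nlinarith [ht.1])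
        simpa using this
      have h5 : ε / L * (Real.exp (L * t) - 1) ≤ ε * (Real.exp (L*t) - 1) :=
        mul_le_mul_of_nonneg_right hεL h4
      calc ε / L * (Real.exp (L * t) - 1) ≤ ε * (Real.exp (L*t) - 1) := h5
      _ ≤ ε * Real.exp L := by nlinarith
    constructor
    · have := norm_fst_le (d t)
      simp only [hd, Real.norm_eq_abs] at this
      exact le_trans this (le_trans hb hgb)
    · have := norm_snd_le (d t)
      simp only [hd, Real.norm_eq_abs] at this
      exact le_trans this (le_trans hb hgb)
  · intro t ht
    have ht' : t ∈ Icc (0:ℝ) 1 := ⟨ht.1, ht.2.le⟩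
    rw [hd', Prod.norm_def]
    simp only [Real.norm_eq_abs]
    have c1 : |deriv u t - deriv w t| ≤ ‖d t‖ := by
      have := norm_snd_le (d t); simpa [hd] using this
    have c0 : |u t - w t| ≤ ‖d t‖ := by
      have := norm_fst_le (d t); simpa [hd] using this
    have hdn : (0:ℝ) ≤ ‖d t‖ := norm_nonneg _
    apply max_le
    · have : ‖d t‖ ≤ L * ‖d t‖ := by nlinarith
      linarith [c1]
    · have e1 : |(-(k₂ t * (u t - w t)) - (k₁ t - k₂ t) * u t)| ≤
          |k₂ t| * |u t - w t| + |k₁ t - k₂ t| * |u t| := by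
        calc |(-(k₂ t * (u t - w t)) - (k₁ t - k₂ t) * u t)|
            ≤ |(-(k₂ t * (u t - w t)))| + |(k₁ t - k₂ t) * u t| := abs_sub _ _
        _ = |k₂ t| * |u t - w t| + |k₁ t - k₂ t| * |u t| := by
            rw [abs_neg, abs_mul, abs_mul]
      have e2 : |k₂ t| * |u t - w t| ≤ L * ‖d t‖ := by
        apply mul_le_mul (hk2 t) c0 (abs_nonneg _) (by linarith)
      linarith [hpert t ht', e1]

/-- the Wronskian of two Jacobi fields is constant -/
lemma wronskian (h1 : IsJac k u) (h2 : IsJac k w) (t : ℝ) :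
    u t * deriv w t - w t * deriv u t = u 0 * deriv w 0 - w 0 * deriv u 0 := by
  set W : ℝ → ℝ := fun s => u s * deriv w s - w s * deriv u s with hW
  have hder : ∀ s, HasDerivAt W 0 s := by
    intro s
    have h' : HasDerivAt W
        (deriv u s * deriv w s + u s * -(k s * w s) +
          -(-(k s * u s) * w s + deriv u s * deriv w s)) s := by
      have heq : W = fun y => u y * deriv w y + -(deriv u y * w y) := by
        funext y; rw [hW]; ring
      rw [heq]
      exact ((h1.du s).mul (h2.ddu s)).add (((h1.ddu s).mul (h2.du s)).neg)
    convert h' using 1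
    ring
  have hc := is_const_of_deriv_eq_zero (𝕜 := ℝ) (f := W)
    (fun s => (hder s).differentiableAt) (fun s => (hder s).deriv) t 0
  exact hc

/-- linear combinations of Jacobi fields -/
lemma jacComb (hk : Continuous k) (h1 : IsJac k u) (h2 : IsJac k w) (a b : ℝ) :
    IsJac k (fun t => a * u t + b * w t) ∧
      (∀ t, deriv (fun t => a * u t + b * w t) t = a * deriv u t + b * deriv w t) := by
  have hu : ∀ t, HasDerivAt (fun s => a * u s + b * w s) (a * deriv u t + b * deriv w t) t :=
    fun t => ((h1.du t).const_mul a).add ((h2.du t).const_mul b)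
  have hq : ∀ t, HasDerivAt (fun s => a * deriv u s + b * deriv w s)
      (-(k t * (a * u t + b * w t))) t := by
    intro t
    have := ((h1.ddu t).const_mul a).add ((h2.ddu t).const_mul b)
    exact this.congr_deriv (by ring)
  exact ⟨isJac_of hk hu hq, fun t => (hu t).deriv⟩

/-- time shift of a Jacobi field for a periodic curvature -/
lemma jacShift (hk : Continuous k) (hper : ∀ t, k (t + 1) = k t) (h : IsJac k u) :
    IsJac k (fun t => u (t + 1)) ∧
      (∀ t, deriv (fun t => u (t + 1)) t = deriv u (t + 1)) := by
  have hu : ∀ t, HasDerivAt (fun s => u (s + 1)) (deriv u (t + 1)) t := by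
    intro t
    have h' := HasDerivAt.comp t (h.du (t + 1)) ((hasDerivAt_id t).add_const 1)
    exact h'.congr_deriv (mul_one _)
  have hq : ∀ t, HasDerivAt (fun s => deriv u (s + 1)) (-(k t * u (t + 1))) t := by
    intro t
    have h' := HasDerivAt.comp t (h.ddu (t + 1)) ((hasDerivAt_id t).add_const 1)
    simp only [Function.comp, mul_one] at h'
    rw [hper t] at h'
    exact h'
  exact ⟨isJac_of hk hu hq, fun t => (hu t).deriv⟩

end P5

noncomputable section P6

/-- comparison: for nonpositive curvature, solutions with nonneg data grow -/
lemma compPos {k u : ℝ → ℝ} (h : IsJac k u) (hk : ∀ t, k t ≤ 0) {a b : ℝ}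
    (ha : 0 ≤ a) (hb : 0 ≤ b) (hab : 0 < a ∨ 0 < b)
    (h0 : u 0 = a) (h0' : deriv u 0 = b) :
    ∀ t ∈ Icc (0:ℝ) 1, a ≤ u t ∧ b ≤ deriv u t := by
  by_contra hcon
  push_neg at hcon
  set s : Set ℝ := {t ∈ Icc (0:ℝ) 1 | u t < a ∨ deriv u t < b} with hs
  have hsne : s.Nonempty := by
    obtain ⟨t, ht, hbad⟩ := hcon
    refine ⟨t, ht, ?_⟩
    by_cases h1 : a ≤ u t
    · exact Or.inr (hbad h1)
    · exact Or.inl (not_le.mp h1)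
  have hsbdd : BddBelow s := ⟨0, fun t ht => ht.1.1⟩
  set T : ℝ := sInf s with hT
  have hT0 : 0 ≤ T := le_csInf hsne (fun t ht => ht.1.1)
  have hT1 : T ≤ 1 := by
    obtain ⟨t, ht⟩ := hsne
    exact le_trans (csInf_le hsbdd ht) ht.1.2
  -- before T everything is fine
  have hbefore : ∀ τ, 0 ≤ τ → τ < T → a ≤ u τ ∧ b ≤ deriv u τ := by
    intro τ hτ0 hτT
    have hτn : τ ∉ s := notMem_of_lt_csInf hτT hsbdd
    rw [hs] at hτn
    simp only [mem_setOf_eq, mem_Icc, not_and, not_or, not_lt, and_imp] at hτn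
    exact hτn hτ0 (by linarith)
  -- at T
  have hstar : a ≤ u T ∧ b ≤ deriv u T := by
    rcases eq_or_lt_of_le hT0 with hT0' | hT0'
    · rw [← hT0']
      rw [h0, h0']
      exact ⟨le_rfl, le_rfl⟩
    · have hclosed : IsClosed {τ : ℝ | a ≤ u τ ∧ b ≤ deriv u τ} :=
        (isClosed_le continuous_const h.cont).inter (isClosed_le continuous_const h.cont')
      have hsub : Ico (0:ℝ) T ⊆ {τ : ℝ | a ≤ u τ ∧ b ≤ deriv u τ} :=
        fun τ hτ => hbefore τ hτ.1 hτ.2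
      have := hclosed.closure_subset ((closure_mono hsub).trans subset_rfl <| by
        rw [closure_Ico (ne_of_lt hT0')]
        exact ⟨hT0, le_rfl⟩)
      exact this
  -- persistence beyond T
  have hpersist : ∃ ε > 0, ∀ τ ∈ Icc T (T + ε), a ≤ u τ ∧ b ≤ deriv u τ := by
    have key : ∀ ε > 0, (∀ τ ∈ Icc T (T + ε), 0 ≤ u τ) →
        ∀ τ ∈ Icc T (T + ε), a ≤ u τ ∧ b ≤ deriv u τ := by
      intro ε hε hupos
      set J : Set ℝ := Icc T (T + ε) with hJ
      have hJconv : Convex ℝ J := convex_Icc _ _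
      have hmono' : MonotoneOn (deriv u) J := by
        apply monotoneOn_of_deriv_nonneg hJconv (h.cont'.continuousOn)
          (h.diffDeriv.differentiableOn)
        intro x hx
        rw [interior_Icc] at hx
        rw [h.2 x]
        have := hupos x ⟨hx.1.le, hx.2.le⟩
        nlinarith [hk x]
      have hderge : ∀ τ ∈ J, b ≤ deriv u τ := by
        intro τ hτ
        calc b ≤ deriv u T := hstar.2
        _ ≤ deriv u τ := hmono' ⟨le_rfl, by linarith [hτ.2, hε]⟩ hτ hτ.1
      have humono : MonotoneOn u J := by
        apply monotoneOn_of_deriv_nonneg hJconv (h.cont.continuousOn)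
          (h.diff.differentiableOn)
        intro x hx
        rw [interior_Icc] at hx
        have := hderge x ⟨hx.1.le, hx.2.le⟩
        linarith
      intro τ hτ
      refine ⟨?_, hderge τ hτ⟩
      calc a ≤ u T := hstar.1
      _ ≤ u τ := humono ⟨le_rfl, by linarith [hτ.2, hε]⟩ hτ hτ.1
    rcases hab with ha' | hb'
    · -- u T ≥ a > 0, find ε with u > 0 near T
      have huT : 0 < u T := lt_of_lt_of_le ha' hstar.1
      have hca : ContinuousAt u T := h.cont.continuousAt
      obtain ⟨ε, hε0, hε⟩ := Metric.continuousAt_iff.mp hca (u T) huT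
      refine ⟨ε/2, by positivity, key (ε/2) (by positivity) ?_⟩
      intro τ hτ
      have : dist τ T < ε := by
        rw [Real.dist_eq, abs_lt]
        constructor <;> [linarith [hτ.1]; linarith [hτ.2]]
      have := hε this
      rw [Real.dist_eq, abs_lt] at this
      linarith [this.1]
    · -- deriv u T ≥ b > 0
      have huT : 0 < deriv u T := lt_of_lt_of_le hb' hstar.2
      have hca : ContinuousAt (deriv u) T := h.cont'.continuousAt
      obtain ⟨ε, hε0, hε⟩ := Metric.continuousAt_iff.mp hca (deriv u T) huT
      have hderpos : ∀ τ ∈ Icc T (T + ε/2), 0 < deriv u τ := by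
        intro τ hτ
        have : dist τ T < ε := by
          rw [Real.dist_eq, abs_lt]
          constructor <;> [linarith [hτ.1]; linarith [hτ.2]]
        have := hε this
        rw [Real.dist_eq, abs_lt] at this
        linarith [this.1]
      -- u is monotone on this interval, so u ≥ u T ≥ a ≥ 0
      have humono : MonotoneOn u (Icc T (T + ε/2)) := by
        apply monotoneOn_of_deriv_nonneg (convex_Icc _ _) (h.cont.continuousOn)
          (h.diff.differentiableOn)
        intro x hx
        rw [interior_Icc] at hx
        exact (hderpos x ⟨hx.1.le, hx.2.le⟩).le
      refine ⟨ε/2, by positivity, key (ε/2) (by positivity) ?_⟩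
      intro τ hτ
      calc (0:ℝ) ≤ a := ha
      _ ≤ u T := hstar.1
      _ ≤ u τ := humono ⟨le_rfl, by linarith [hτ.2, hε0]⟩ hτ hτ.1
  obtain ⟨ε, hε0, hgood⟩ := hpersist
  have : T < T + ε := by linarith
  obtain ⟨σ, hσs, hσlt⟩ := exists_lt_of_csInf_lt hsne this
  have hσT : T ≤ σ := csInf_le hsbdd hσs
  have := hgood σ ⟨hσT, hσlt.le⟩
  rcases hσs.2 with hbad | hbad
  · linarith [this.1]
  · linarith [this.2]

end P6

noncomputable section P7

variable {k u : ℝ → ℝ}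

/-- energy identity for solutions with periodic boundary data -/
lemma energyId (hk : Continuous k) (h : IsJac k u) (hb : u 1 = u 0) (hb' : deriv u 1 = deriv u 0) :
    ∫ t in (0:ℝ)..1, (deriv u t)^2 = ∫ t in (0:ℝ)..1, k t * (u t)^2 := by
  have hF : ∀ t, HasDerivAt (fun s => u s * deriv u s) ((deriv u t)^2 - k t * (u t)^2) t := by
    intro t
    have := (h.du t).mul (h.ddu t)
    exact this.congr_deriv (by ring)
  have hcont1 : Continuous fun t => (deriv u t)^2 := h.cont'.pow 2
  have hcont2 : Continuous fun t => k t * (u t)^2 := hk.mul (h.cont.pow 2)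
  have hint := integral_eq_sub_of_hasDerivAt (f := fun s => u s * deriv u s)
    (f' := fun t => (deriv u t)^2 - k t * (u t)^2) (a := (0:ℝ)) (b := 1)
    (fun t _ => hF t) ((hcont1.sub hcont2).intervalIntegrable (μ := volume) _ _)
  have hint' : ∫ t in (0:ℝ)..1, ((deriv u t)^2 - k t * (u t)^2)
      = u 1 * deriv u 1 - u 0 * deriv u 0 := hint
  rw [hb, hb', sub_self] at hint'
  have hsub := integral_sub (hcont1.intervalIntegrable (μ := volume) (0:ℝ) 1) (hcont2.intervalIntegrable (μ := volume) (0:ℝ) 1)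
  rw [hsub] at hint'
  linarith

/-- a Jacobi field with nontrivial data has positive L² norm on [0,1] -/
lemma intPos (hk : Continuous k) {C : ℝ} (hC : ∀ t, |k t| ≤ C) (h : IsJac k u)
    (hnz : ¬(u 0 = 0 ∧ deriv u 0 = 0)) :
    0 < ∫ t in (0:ℝ)..1, (u t)^2 := by
  -- first find an interior point where u ≠ 0
  have hex : ∃ t₀ ∈ Ioo (0:ℝ) 1, u t₀ ≠ 0 := by
    by_contra hzero
    push_neg at hzero
    have hz : IsJac k (fun _ : ℝ => (0:ℝ)) := by
      apply isJac_of hk (q := fun _ => (0:ℝ)) (fun t => hasDerivAt_const t 0)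
      intro t
      simpa using hasDerivAt_const t (0:ℝ)
    have hev : u =ᶠ[nhds (1/2 : ℝ)] (fun _ => (0:ℝ)) := by
      apply Filter.eventuallyEq_of_mem (Ioo_mem_nhds (by norm_num) (by norm_num) :
        Ioo (0:ℝ) 1 ∈ nhds (1/2:ℝ))
      intro s hs
      exact hzero s hs
    have hueq : u = fun _ => (0:ℝ) := by
      apply jacUniq hC h hz (t₀ := (1/2:ℝ))
      · exact hzero _ ⟨by norm_num, by norm_num⟩
      · exact hev.deriv_eq
    rw [hueq] at hnz
    simp at hnz
  obtain ⟨t₀, ht₀, hu₀⟩ := hex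
  obtain ⟨ε, hε0, hε⟩ := Metric.continuousAt_iff.mp (h.cont.continuousAt (x := t₀)) |u t₀| (abs_pos.mpr hu₀)
  set ε' : ℝ := min (ε/2) (min (t₀/2) ((1 - t₀)/2)) with hε'
  have hε'0 : 0 < ε' := by
    apply lt_min (by positivity)
    apply lt_min (by cases ht₀ with | intro h1 h2 => positivity)
    cases ht₀ with | intro h1 h2 => 
    have : 0 < 1 - t₀ := by linarith
    positivity
  set aa : ℝ := t₀ - ε' with haa
  set bb : ℝ := t₀ + ε' with hbb
  have haa0 : 0 ≤ aa := by
    have h1 : ε' ≤ t₀/2 := le_trans (min_le_right _ _) (min_le_left _ _)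
    have := ht₀.1
    simp only [haa]; linarith
  have hbb1 : bb ≤ 1 := by
    have h1 : ε' ≤ (1 - t₀)/2 := le_trans (min_le_right _ _) (min_le_right _ _)
    have := ht₀.2
    simp only [hbb]; linarith
  have hne : ∀ τ ∈ Icc aa bb, u τ ≠ 0 := by
    intro τ hτ
    have hd : dist τ t₀ < ε := by
      rw [Real.dist_eq, abs_lt]
      have h1 : ε' ≤ ε/2 := min_le_left _ _
      constructor
      · simp only [haa] at hτ; linarith [hτ.1]
      · simp only [hbb] at hτ; linarith [hτ.2]
    have := hε hd
    rw [Real.dist_eq] at this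
    intro hzero
    rw [hzero] at this
    simp at this
  have hposmid : 0 < ∫ τ in aa..bb, (u τ)^2 := by
    apply intervalIntegral_pos_of_pos_on ((h.cont.pow 2).intervalIntegrable (μ := volume) _ _)
    · intro τ hτ
      exact pow_two_pos_of_ne_zero (hne τ ⟨hτ.1.le, hτ.2.le⟩)
    · simp only [haa, hbb]; linarith
  have hsq : Continuous fun τ => (u τ)^2 := h.cont.pow 2
  have hsplit1 : (∫ τ in (0:ℝ)..aa, (u τ)^2) + ∫ τ in aa..bb, (u τ)^2
      = ∫ τ in (0:ℝ)..bb, (u τ)^2 :=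
    integral_add_adjacent_intervals (a := (0:ℝ)) (b := aa) (c := bb)
      (hsq.intervalIntegrable (μ := volume) _ _) (hsq.intervalIntegrable (μ := volume) _ _)
  have hsplit2 : (∫ τ in (0:ℝ)..bb, (u τ)^2) + ∫ τ in bb..1, (u τ)^2
      = ∫ τ in (0:ℝ)..1, (u τ)^2 :=
    integral_add_adjacent_intervals (a := (0:ℝ)) (b := bb) (c := 1)
      (hsq.intervalIntegrable (μ := volume) _ _) (hsq.intervalIntegrable (μ := volume) _ _)
  have hn1 : 0 ≤ ∫ τ in (0:ℝ)..aa, (u τ)^2 :=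
    intervalIntegral.integral_nonneg haa0 (fun τ _ => sq_nonneg _)
  have hn2 : 0 ≤ ∫ τ in bb..1, (u τ)^2 :=
    intervalIntegral.integral_nonneg hbb1 (fun τ _ => sq_nonneg _)
  linarith

/-- eigenvector construction for 2×2 systems -/
lemma solve2 {p q r s lam : ℝ} (h : (p - lam) * (s - lam) - q * r = 0) :
    ∃ v₀ v₁ : ℝ, (v₀ ≠ 0 ∨ v₁ ≠ 0) ∧ p * v₀ + q * v₁ = lam * v₀ ∧ r * v₀ + s * v₁ = lam * v₁ := by
  by_cases hq : q ≠ 0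
  · exact ⟨q, lam - p, Or.inl hq, by ring, by linear_combination -h⟩
  by_cases hr : r ≠ 0
  · exact ⟨lam - s, r, Or.inr hr, by linear_combination -h, by ring⟩
  push_neg at hq hr
  rw [hq, hr] at h
  simp only [mul_zero, sub_zero, zero_mul] at h
  rcases mul_eq_zero.mp h with h1 | h1
  · refine ⟨1, 0, Or.inl one_ne_zero, ?_, ?_⟩
    · rw [hq]; linarith
    · rw [hr]; ring
  · refine ⟨0, 1, Or.inr one_ne_zero, ?_, ?_⟩
    · rw [hq]; ring
    · rw [hr]; linarith

end P7

noncomputable section P8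

/-- periodic continuous functions are bounded -/
lemma periodicBound {K : ℝ → ℝ} (hK : Continuous K) (hper : ∀ t, K (t + 1) = K t) :
    ∃ C : ℝ, 0 ≤ C ∧ ∀ t, |K t| ≤ C := by
  obtain ⟨C, hC⟩ := (isCompact_Icc (a := (0:ℝ)) (b := 1)).exists_bound_of_continuousOn
    hK.continuousOn
  refine ⟨max C 0, le_max_right _ _, ?_⟩
  intro t
  have hper' : Function.Periodic K 1 := hper
  have hfr : K (Int.fract t) = K t := by
    rw [Int.fract]
    have := hper'.sub_int_mul_eq (x := t) ⌊t⌋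
    rwa [mul_one] at this
  rw [← hfr]
  have h1 : Int.fract t ∈ Icc (0:ℝ) 1 := ⟨Int.fract_nonneg t, (Int.fract_lt_one t).le⟩
  calc |K (Int.fract t)| = ‖K (Int.fract t)‖ := rfl
  _ ≤ C := hC _ h1
  _ ≤ max C 0 := le_max_left _ _

/-- The main analytic step: strict stability forces the discriminant above 2. -/
theorem discriminant_gt {K : ℝ → ℝ} (hK : Continuous K) (hper : ∀ t, K (t + 1) = K t)
    {δ : ℝ} (hδ : 0 < δ)
    (hstab : ∀ f : ℝ → ℝ, ContDiff ℝ 1 f → (∀ t, f (t + 1) = f t) →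
      δ * ∫ t in (0:ℝ)..1, (f t) ^ 2 ≤
        (∫ t in (0:ℝ)..1, (deriv f t) ^ 2) - ∫ t in (0:ℝ)..1, K t * (f t) ^ 2)
    {u1 u2 : ℝ → ℝ} (h1 : IsJac K u1) (h2 : IsJac K u2)
    (h10 : u1 0 = 1) (h10' : deriv u1 0 = 0) (h20 : u2 0 = 0) (h20' : deriv u2 0 = 1) :
    2 < u1 1 + deriv u2 1 := by
  obtain ⟨CK, hCK0, hCK⟩ := periodicBound hK hper
  by_contra htr
  push_neg at htr
  set μ₀ : ℝ := -CK - 1 with hμ₀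
  have hμ₀neg : μ₀ < 0 := by rw [hμ₀]; linarith
  set L : ℝ := CK - μ₀ with hLdef
  have hL1 : (1:ℝ) ≤ L := by rw [hLdef, hμ₀]; linarith
  have hbnd : ∀ μ ∈ Icc μ₀ (0:ℝ), ∀ t, |K t + μ| ≤ L := by
    intro μ hμ t
    have := hCK t
    rw [abs_le] at this ⊢
    cases hμ with | intro hm1 hm2 =>
    constructor
    · rw [hLdef]; linarith
    · rw [hLdef]; linarith
  -- choose solution families
  have hexist1 : ∀ μ : ℝ, ∃ w : ℝ → ℝ, IsJac (fun t => K t + μ) w ∧ w 0 = 1 ∧ deriv w 0 = 0 :=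
    fun μ => existsJac (hK.add continuous_const) (C := CK + |μ|)
      (fun t => (abs_add_le _ _).trans (add_le_add (hCK t) le_rfl)) 1 0
  have hexist2 : ∀ μ : ℝ, ∃ w : ℝ → ℝ, IsJac (fun t => K t + μ) w ∧ w 0 = 0 ∧ deriv w 0 = 1 :=
    fun μ => existsJac (hK.add continuous_const) (C := CK + |μ|)
      (fun t => (abs_add_le _ _).trans (add_le_add (hCK t) le_rfl)) 0 1
  choose W1 hW1 hW110 hW110' using hexist1
  choose W2 hW2 hW220 hW220' using hexist2
  set Δ : ℝ → ℝ := fun μ => W1 μ 1 + deriv (W2 μ) 1 with hΔ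
  -- Δ 0 is the discriminant of K
  have hKeq : (fun t => K t + (0:ℝ)) = K := by funext t; ring
  have hΔ0 : Δ 0 = u1 1 + deriv u2 1 := by
    have e1 : W1 0 = u1 := by
      apply jacUniq (k := fun t => K t + (0:ℝ)) (C := CK)
        (by simpa using hCK) (hW1 0) (by rw [hKeq]; exact h1) (t₀ := 0)
      · rw [hW110, h10]
      · rw [hW110', h10']
    have e2 : W2 0 = u2 := by
      apply jacUniq (k := fun t => K t + (0:ℝ)) (C := CK)
        (by simpa using hCK) (hW2 0) (by rw [hKeq]; exact h2) (t₀ := 0)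
      · rw [hW220, h20]
      · rw [hW220', h20']
    rw [hΔ]
    simp only
    rw [e1, e2]
  -- Δ μ₀ ≥ 2 by comparison
  have hΔμ₀ : 2 ≤ Δ μ₀ := by
    have hknonpos : ∀ t, K t + μ₀ ≤ 0 := by
      intro t
      have := (abs_le.mp (hCK t)).2
      rw [hμ₀]; linarith
    have c1 := compPos (hW1 μ₀) hknonpos (a := 1) (b := 0) zero_le_one le_rfl
      (Or.inl one_pos) (hW110 μ₀) (hW110' μ₀) 1 ⟨zero_le_one, le_rfl⟩
    have c2 := compPos (hW2 μ₀) hknonpos (a := 0) (b := 1) le_rfl zero_le_one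
      (Or.inr one_pos) (hW220 μ₀) (hW220' μ₀) 1 ⟨zero_le_one, le_rfl⟩
    rw [hΔ]
    simp only
    linarith [c1.1, c2.2]
  -- Δ is continuous on [μ₀, 0]
  have hΔcont : ContinuousOn Δ (Icc μ₀ 0) := by
    apply LipschitzOnWith.continuousOn (K := Real.toNNReal (2 * Real.exp L * Real.exp L))
    rw [lipschitzOnWith_iff_dist_le_mul]
    intro μ hμ ν hν
    have hcoe : ((Real.toNNReal (2 * Real.exp L * Real.exp L) : ℝ≥0) : ℝ)
        = 2 * Real.exp L * Real.exp L := Real.coe_toNNReal _ (by positivity)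
    rw [hcoe, Real.dist_eq, Real.dist_eq]
    have hself1 : ∀ t ∈ Icc (0:ℝ) 1, |W1 μ t| ≤ Real.exp L := by
      intro t ht
      have := gronSelf (hW1 μ) hL1 (hbnd μ hμ) t ht
      rw [hW110, hW110'] at this
      simpa using this
    have hself2 : ∀ t ∈ Icc (0:ℝ) 1, |W2 μ t| ≤ Real.exp L := by
      intro t ht
      have := gronSelf (hW2 μ) hL1 (hbnd μ hμ) t ht
      rw [hW220, hW220'] at this
      simpa using this
    have hd1 := gronDiff (hW1 μ) (hW1 ν)
      (by rw [hW110, hW110]) (by rw [hW110', hW110']) hL1 (hbnd ν hν)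
      (ε := |μ - ν| * Real.exp L) (by positivity) ?_ 1 ⟨zero_le_one, le_rfl⟩
    · have hd2 := gronDiff (hW2 μ) (hW2 ν)
        (by rw [hW220, hW220]) (by rw [hW220', hW220']) hL1 (hbnd ν hν)
        (ε := |μ - ν| * Real.exp L) (by positivity) ?_ 1 ⟨zero_le_one, le_rfl⟩
      · rw [hΔ]
        simp only
        have t1 := hd1.1
        have t2 := hd2.2
        calc |W1 μ 1 + deriv (W2 μ) 1 - (W1 ν 1 + deriv (W2 ν) 1)|
            ≤ |W1 μ 1 - W1 ν 1| + |deriv (W2 μ) 1 - deriv (W2 ν) 1| := by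
              have := abs_add_le (W1 μ 1 - W1 ν 1) (deriv (W2 μ) 1 - deriv (W2 ν) 1)
              have e : W1 μ 1 + deriv (W2 μ) 1 - (W1 ν 1 + deriv (W2 ν) 1)
                  = (W1 μ 1 - W1 ν 1) + (deriv (W2 μ) 1 - deriv (W2 ν) 1) := by ring
              rw [e]
              exact this
        _ ≤ |μ - ν| * Real.exp L * Real.exp L + |μ - ν| * Real.exp L * Real.exp L := by
              exact add_le_add t1 t2
        _ = 2 * Real.exp L * Real.exp L * |μ - ν| := by ring
      · intro t ht
        have e : (fun t => K t + μ) t - (fun t => K t + ν) t = μ - ν := by simp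
        rw [e]
        exact mul_le_mul_of_nonneg_left (hself2 t ht) (abs_nonneg _)
    · intro t ht
      have e : (fun t => K t + μ) t - (fun t => K t + ν) t = μ - ν := by simp
      rw [e]
      exact mul_le_mul_of_nonneg_left (hself1 t ht) (abs_nonneg _)
  -- IVT
  have hmem : (2:ℝ) ∈ Icc (Δ 0) (Δ μ₀) := ⟨by rw [hΔ0]; exact htr, hΔμ₀⟩
  obtain ⟨μs, hμs, hΔμs⟩ := intermediate_value_Icc' hμ₀neg.le hΔcont hmem
  -- the monodromy at μs has a fixed vector
  set p : ℝ := W1 μs 1 with hp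
  set q : ℝ := W2 μs 1 with hq
  set r : ℝ := deriv (W1 μs) 1 with hr
  set s : ℝ := deriv (W2 μs) 1 with hsdef
  have htrace : p + s = 2 := hΔμs
  have hdet : p * s - q * r = 1 := by
    have := wronskian (hW1 μs) (hW2 μs) 1
    rw [hW110, hW110', hW220, hW220'] at this
    rw [hp, hq, hr, hsdef]
    linarith [this]
  obtain ⟨v₀, v₁, hv, hfix1, hfix2⟩ := solve2 (p := p) (q := q) (r := r) (s := s) (lam := 1)
    (by linear_combination hdet - htrace)
  -- build the periodic Jacobi field
  set kk : ℝ → ℝ := fun t => K t + μs with hkk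
  have hkkc : Continuous kk := hK.add continuous_const
  have hkkbnd : ∀ t, |kk t| ≤ L := hbnd μs hμs
  obtain ⟨hu, hud⟩ := jacComb hkkc (hW1 μs) (hW2 μs) v₀ v₁
  set u : ℝ → ℝ := fun t => v₀ * W1 μs t + v₁ * W2 μs t with husol
  have hu0 : u 0 = v₀ := by rw [husol]; simp [hW110, hW220]
  have hu0' : deriv u 0 = v₁ := by
    rw [husol] at hud ⊢
    rw [hud 0, hW110' , hW220']
    ring
  have hu1 : u 1 = v₀ := by
    rw [husol]
    simp only
    rw [← hp, ← hq]
    linarith [hfix1]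
  have hu1' : deriv u 1 = v₁ := by
    rw [husol] at hud ⊢
    rw [hud 1, ← hr, ← hsdef]
    linarith [hfix2]
  -- u is 1-periodic
  have hkkper : ∀ t, kk (t + 1) = kk t := by
    intro t; rw [hkk]; simp [hper t]
  obtain ⟨hshift, hshiftd⟩ := jacShift hkkc hkkper hu
  have huper : ∀ t, u (t + 1) = u t := by
    have := jacUniq (C := L) hkkbnd hshift hu (t₀ := 0) ?_ ?_
    · intro t
      exact congrFun this t
    · simp only [zero_add]
      rw [hu1, hu0]
    · rw [hshiftd 0]
      simp only [zero_add]
      rw [hu1', hu0']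
  -- stability contradiction
  have hC1 : ContDiff ℝ 1 u := hu.1.of_le (by norm_num)
  have hstabu := hstab u hC1 huper
  have henergy := energyId hkkc hu (by rw [hu1, hu0]) (by rw [hu1', hu0'])
  have hsplit : ∫ t in (0:ℝ)..1, kk t * (u t)^2
      = (∫ t in (0:ℝ)..1, K t * (u t)^2) + μs * ∫ t in (0:ℝ)..1, (u t)^2 := by
    have hc1 : Continuous fun t => K t * (u t)^2 := hK.mul (hu.cont.pow 2)
    have hc2 : Continuous fun t => μs * (u t)^2 := continuous_const.mul (hu.cont.pow 2)
    have e : ∀ t, kk t * (u t)^2 = K t * (u t)^2 + μs * (u t)^2 := by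
      intro t; rw [hkk]; ring
    have : ∫ t in (0:ℝ)..1, kk t * (u t)^2
        = ∫ t in (0:ℝ)..1, (K t * (u t)^2 + μs * (u t)^2) := by
      congr 1
      funext t
      exact e t
    rw [this, integral_add (hc1.intervalIntegrable (μ := volume) _ _)
      (hc2.intervalIntegrable (μ := volume) _ _), intervalIntegral.integral_const_mul]
  have hpos : 0 < ∫ t in (0:ℝ)..1, (u t)^2 := by
    apply intPos hkkc hkkbnd hu
    rw [hu0, hu0']
    rcases hv with hv | hv
    · exact fun hc => hv hc.1
    · exact fun hc => hv hc.2
  have hμsle : μs ≤ 0 := hμs.2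
  rw [henergy, hsplit] at hstabu
  nlinarith [hpos, hstabu, hμsle, hδ]

end P8

lemma quad_roots {D : ℝ} (hD : 2 < D) :
    ∃ lam : ℝ, 0 < lam ∧ lam < 1 ∧ lam ^ 2 - D * lam + 1 = 0 ∧
      (lam⁻¹) ^ 2 - D * lam⁻¹ + 1 = 0 := by
  have h4 : (0:ℝ) ≤ D^2 - 4 := by nlinarith
  set sq : ℝ := Real.sqrt (D^2 - 4) with hsq
  have hsqnn : 0 ≤ sq := Real.sqrt_nonneg _
  have hsq2 : sq^2 = D^2 - 4 := Real.sq_sqrt h4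
  have hsqltD : sq < D := by nlinarith
  refine ⟨(D - sq)/2, by linarith, ?_, ?_, ?_⟩
  · rw [div_lt_one (by norm_num : (0:ℝ) < 2)]
    nlinarith
  · field_simp
    nlinarith
  · have hinv : ((D - sq)/2)⁻¹ = (D + sq)/2 := by
      apply inv_eq_of_mul_eq_one_right
      field_simp
      nlinarith
    rw [hinv]
    field_simp
    nlinarith

/-- The linear Poincaré map of a strictly stable simple closed geodesic has
real eigenvalues λ and 1/λ with 0 < λ < 1. -/
theorem stmt6 (K : ℝ → ℝ) (hK : Continuous K) (hper : ∀ t, K (t + 1) = K t)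
    (δ : ℝ) (hδ : 0 < δ)
    (hstab : ∀ f : ℝ → ℝ, ContDiff ℝ 1 f → (∀ t, f (t + 1) = f t) →
      δ * ∫ t in (0:ℝ)..1, (f t) ^ 2 ≤
        (∫ t in (0:ℝ)..1, (deriv f t) ^ 2) - ∫ t in (0:ℝ)..1, K t * (f t) ^ 2)
    (M : Matrix (Fin 2) (Fin 2) ℝ)
    (hM : ∀ u : ℝ → ℝ, ContDiff ℝ 2 u → (∀ t, deriv (deriv u) t + K t * u t = 0) →
      ∀ t, ![u (t + 1), deriv u (t + 1)] = M.mulVec ![u t, deriv u t]) :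
    ∃ lam : ℝ, 0 < lam ∧ lam < 1 ∧
      (∃ v : Fin 2 → ℝ, v ≠ 0 ∧ M.mulVec v = lam • v) ∧
      (∃ w : Fin 2 → ℝ, w ≠ 0 ∧ M.mulVec w = lam⁻¹ • w) := by
  obtain ⟨CK, hCK0, hCK⟩ := periodicBound hK hper
  obtain ⟨u1, h1, h10, h10'⟩ := existsJac hK hCK 1 0
  obtain ⟨u2, h2, h20, h20'⟩ := existsJac hK hCK 0 1
  have hode : ∀ {u : ℝ → ℝ}, IsJac K u → ∀ t, deriv (deriv u) t + K t * u t = 0 := by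
    intro u h t
    rw [h.2 t]
    ring
  have hm1 := hM u1 h1.1 (hode h1) 0
  have hm2 := hM u2 h2.1 (hode h2) 0
  rw [h10, h10'] at hm1
  rw [h20, h20'] at hm2
  simp only [zero_add] at hm1 hm2
  have e00 : M 0 0 = u1 1 := by
    have := congrFun hm1 0
    simp [Matrix.mulVec, dotProduct, Fin.sum_univ_two] at this
    linarith [this]
  have e10 : M 1 0 = deriv u1 1 := by
    have := congrFun hm1 1
    simp [Matrix.mulVec, dotProduct, Fin.sum_univ_two] at this
    linarith [this]
  have e01 : M 0 1 = u2 1 := by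
    have := congrFun hm2 0
    simp [Matrix.mulVec, dotProduct, Fin.sum_univ_two] at this
    linarith [this]
  have e11 : M 1 1 = deriv u2 1 := by
    have := congrFun hm2 1
    simp [Matrix.mulVec, dotProduct, Fin.sum_univ_two] at this
    linarith [this]
  set D : ℝ := M 0 0 + M 1 1 with hD
  have hD2 : 2 < D := by
    rw [hD, e00, e11]
    exact discriminant_gt hK hper hδ hstab h1 h2 h10 h10' h20 h20'
  have hdet : M 0 0 * M 1 1 - M 0 1 * M 1 0 = 1 := by
    rw [e00, e01, e10, e11]
    have := wronskian h1 h2 1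
    rw [h10, h10', h20, h20'] at this
    linarith [this]
  obtain ⟨lam, hlampos, hlamlt, hq1, hq2⟩ := quad_roots hD2
  have hchar1 : (M 0 0 - lam) * (M 1 1 - lam) - M 0 1 * M 1 0 = 0 := by
    rw [hD] at hq1
    linear_combination hdet + hq1
  have hchar2 : (M 0 0 - lam⁻¹) * (M 1 1 - lam⁻¹) - M 0 1 * M 1 0 = 0 := by
    rw [hD] at hq2
    linear_combination hdet + hq2
  have build : ∀ c : ℝ, (M 0 0 - c) * (M 1 1 - c) - M 0 1 * M 1 0 = 0 →
      ∃ v : Fin 2 → ℝ, v ≠ 0 ∧ M.mulVec v = c • v := by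
    intro c hc
    obtain ⟨v₀, v₁, hv, hf1, hf2⟩ := solve2 (p := M 0 0) (q := M 0 1) (r := M 1 0)
      (s := M 1 1) (lam := c) hc
    refine ⟨![v₀, v₁], ?_, ?_⟩
    · intro hzero
      rcases hv with hv | hv
      · exact hv (congrFun hzero 0)
      · exact hv (congrFun hzero 1)
    · funext i
      fin_cases i
      · simpa [Matrix.mulVec, dotProduct, Fin.sum_univ_two] using hf1
      · simpa [Matrix.mulVec, dotProduct, Fin.sum_univ_two] using hf2
  exact ⟨lam, hlampos, hlamlt, build lam hchar1, build lam⁻¹ hchar2⟩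
end

section
/- Let K : ℝ → ℝ be continuous and let u : ℝ → ℝ be a C² solution of u'' + K u = 0, not identically zero, with u(a) = u(b) = 0 for some a < b. Then for every ε > 0 there exists a C¹ function f : ℝ → ℝ with compact support contained in (a − ε, b + ε) such that ∫ (f')² < ∫ K f². (A Jacobi field with two zeros forces the index form to be negative on some compactly supported variation.) -/
open MeasureTheory Real Set Filter

noncomputable section Stmt7Aux

local notation "T" => Real.smoothTransition

lemma derivT_of_nonpos {x : ℝ} (hx : x ≤ 0) : deriv T x = 0 := by
  rcases lt_or_eq_of_le hx with hx | hx
  · have h : T =ᶠ[nhds x] fun _ => (0:ℝ) :=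
      Filter.eventuallyEq_of_mem (Iio_mem_nhds hx)
        (fun y hy => Real.smoothTransition.zero_of_nonpos (le_of_lt hy))
    rw [h.deriv_eq, deriv_const]
  · subst hx
    have hd : HasDerivAt T (deriv T 0) 0 :=
      (Real.smoothTransition.contDiff (n := 1)).differentiable (by norm_num) |>.differentiableAt.hasDerivAt
    have h1 : HasDerivWithinAt T (deriv T 0) (Iic (0:ℝ)) 0 := hd.hasDerivWithinAt
    have h2 : HasDerivWithinAt T 0 (Iic (0:ℝ)) 0 := by
      have hc : HasDerivWithinAt (fun _ : ℝ => (0:ℝ)) 0 (Iic (0:ℝ)) 0 := hasDerivWithinAt_const _ _ _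
      exact hc.congr (fun y hy => (Real.smoothTransition.zero_of_nonpos hy))
        (Real.smoothTransition.zero_of_nonpos le_rfl)
    have := h1.derivWithin ((uniqueDiffOn_Iic 0 0 (by simp))) ▸ h2.derivWithin ((uniqueDiffOn_Iic 0 0 (by simp)))
    rw [← h1.derivWithin ((uniqueDiffOn_Iic 0 0 (by simp))), h2.derivWithin ((uniqueDiffOn_Iic 0 0 (by simp)))]

lemma derivT_of_one_le {x : ℝ} (hx : 1 ≤ x) : deriv T x = 0 := by
  rcases lt_or_eq_of_le hx with hx | hx
  · have h : T =ᶠ[nhds x] fun _ => (1:ℝ) :=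
      Filter.eventuallyEq_of_mem (Ioi_mem_nhds hx)
        (fun y hy => Real.smoothTransition.one_of_one_le (le_of_lt hy))
    rw [h.deriv_eq, deriv_const]
  · subst hx
    have hd : HasDerivAt T (deriv T 1) 1 :=
      (Real.smoothTransition.contDiff (n := 1)).differentiable (by norm_num) |>.differentiableAt.hasDerivAt
    have h1 : HasDerivWithinAt T (deriv T 1) (Ici (1:ℝ)) 1 := hd.hasDerivWithinAt
    have h2 : HasDerivWithinAt T 0 (Ici (1:ℝ)) 1 := by
      have hc : HasDerivWithinAt (fun _ : ℝ => (1:ℝ)) 0 (Ici (1:ℝ)) 1 := hasDerivWithinAt_const _ _ _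
      exact hc.congr (fun y hy => (Real.smoothTransition.one_of_one_le hy))
        (Real.smoothTransition.one_of_one_le le_rfl)
    rw [← h1.derivWithin ((uniqueDiffOn_Ici 1 1 (by simp))), h2.derivWithin ((uniqueDiffOn_Ici 1 1 (by simp)))]

/-- A smooth plateau bump. -/
def bump (l m d : ℝ) : ℝ → ℝ := fun t => T ((t - l) / d) * T ((m - t) / d)

/-- Its derivative. -/
def bump' (l m d : ℝ) : ℝ → ℝ := fun t =>
  deriv T ((t - l) / d) * (1 / d) * T ((m - t) / d)
    + T ((t - l) / d) * (deriv T ((m - t) / d) * (-1 / d))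

lemma T_hasDerivAt (y : ℝ) : HasDerivAt T (deriv T y) y :=
  ((Real.smoothTransition.contDiff (n := 1)).differentiable (by norm_num)).differentiableAt.hasDerivAt

lemma bump_hasDerivAt (l m d : ℝ) (t : ℝ) :
    HasDerivAt (bump l m d) (bump' l m d t) t := by
  have h1 : HasDerivAt (fun t : ℝ => (t - l) / d) (1 / d) t := by
    simpa using ((hasDerivAt_id t).sub_const l).div_const d
  have h2 : HasDerivAt (fun t : ℝ => (m - t) / d) (-1 / d) t := by
    simpa using ((hasDerivAt_const t m).sub (hasDerivAt_id t)).div_const d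
  have g1 : HasDerivAt (fun t : ℝ => T ((t - l) / d)) (deriv T ((t - l) / d) * (1 / d)) t :=
    (T_hasDerivAt _).comp t h1
  have g2 : HasDerivAt (fun t : ℝ => T ((m - t) / d)) (deriv T ((m - t) / d) * (-1 / d)) t :=
    (T_hasDerivAt _).comp t h2
  have := g1.mul g2
  unfold bump bump'
  exact this

lemma bump_contDiff (l m d : ℝ) (hd : d ≠ 0) {n : ℕ∞} : ContDiff ℝ n (bump l m d) := by
  apply ContDiff.mul
  · exact Real.smoothTransition.contDiff.comp ((contDiff_id.sub contDiff_const).div_const d)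
  · exact Real.smoothTransition.contDiff.comp ((contDiff_const.sub contDiff_id).div_const d)

lemma deriv_bump (l m d : ℝ) : deriv (bump l m d) = bump' l m d :=
  deriv_eq (bump_hasDerivAt l m d)

lemma bump'_continuous (l m d : ℝ) : Continuous (bump' l m d) := by
  have hT' : Continuous (deriv T) :=
    (Real.smoothTransition.contDiff (n := (2:ℕ∞))).continuous_deriv (by norm_num)
  have hT : Continuous T := Real.smoothTransition.continuous
  unfold bump'
  fun_prop

lemma bump_eq_one {l m d t : ℝ} (hd : 0 < d) (h1 : l + d ≤ t) (h2 : t ≤ m - d) :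
    bump l m d t = 1 := by
  have a1 : (1:ℝ) ≤ (t - l) / d := (le_div_iff₀ hd).2 (by linarith)
  have a2 : (1:ℝ) ≤ (m - t) / d := (le_div_iff₀ hd).2 (by linarith)
  simp [bump, Real.smoothTransition.one_of_one_le a1, Real.smoothTransition.one_of_one_le a2]

lemma bump_eq_zero {l m d t : ℝ} (hd : 0 < d) (h : t ≤ l ∨ m ≤ t) : bump l m d t = 0 := by
  rcases h with h | h
  · have : (t - l) / d ≤ 0 := div_nonpos_of_nonpos_of_nonneg (by linarith) hd.le
    simp [bump, Real.smoothTransition.zero_of_nonpos this]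
  · have : (m - t) / d ≤ 0 := div_nonpos_of_nonpos_of_nonneg (by linarith) hd.le
    simp [bump, Real.smoothTransition.zero_of_nonpos this]

lemma bump'_eq_zero_plateau {l m d t : ℝ} (hd : 0 < d) (h1 : l + d ≤ t) (h2 : t ≤ m - d) :
    bump' l m d t = 0 := by
  have a1 : (1:ℝ) ≤ (t - l) / d := (le_div_iff₀ hd).2 (by linarith)
  have a2 : (1:ℝ) ≤ (m - t) / d := (le_div_iff₀ hd).2 (by linarith)
  simp [bump', derivT_of_one_le a1, derivT_of_one_le a2]

lemma bump'_eq_zero_outside {l m d t : ℝ} (hd : 0 < d) (h : t ≤ l ∨ m ≤ t) :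
    bump' l m d t = 0 := by
  rcases h with h | h
  · have : (t - l) / d ≤ 0 := div_nonpos_of_nonpos_of_nonneg (by linarith) hd.le
    simp [bump', derivT_of_nonpos this, Real.smoothTransition.zero_of_nonpos this]
  · have : (m - t) / d ≤ 0 := div_nonpos_of_nonpos_of_nonneg (by linarith) hd.le
    simp [bump', derivT_of_nonpos this, Real.smoothTransition.zero_of_nonpos this]

lemma bump'_abs_le {l m d : ℝ} (hd : 0 < d) {M : ℝ} (hM : ∀ x, |deriv T x| ≤ M) (t : ℝ) :
    |bump' l m d t| ≤ 2 * M / d := by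
  have hM0 : 0 ≤ M := le_trans (abs_nonneg _) (hM 0)
  have hb1 : |deriv T ((t - l) / d) * (1 / d) * T ((m - t) / d)| ≤ M / d := by
    rw [abs_mul, abs_mul]
    have := hM ((t - l) / d)
    have hT1 : |T ((m - t) / d)| ≤ 1 := by
      rw [abs_of_nonneg (Real.smoothTransition.nonneg _)]
      exact Real.smoothTransition.le_one _
    calc |deriv T ((t - l) / d)| * |1 / d| * |T ((m - t) / d)|
        ≤ M * (1 / d) * 1 := by
          apply mul_le_mul _ hT1 (abs_nonneg _) (by positivity)
          apply mul_le_mul this (le_of_eq (abs_of_pos (by positivity))) (abs_nonneg _) hM0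
      _ = M / d := by ring
  have hb2 : |T ((t - l) / d) * (deriv T ((m - t) / d) * (-1 / d))| ≤ M / d := by
    rw [abs_mul, abs_mul]
    have := hM ((m - t) / d)
    have hT1 : |T ((t - l) / d)| ≤ 1 := by
      rw [abs_of_nonneg (Real.smoothTransition.nonneg _)]
      exact Real.smoothTransition.le_one _
    have habs : |(-1 : ℝ) / d| = 1 / d := by
      rw [abs_div, abs_neg, abs_one, abs_of_pos hd]
    calc |T ((t - l) / d)| * (|deriv T ((m - t) / d)| * |(-1) / d|)
        ≤ 1 * (M * (1 / d)) := by
          apply mul_le_mul hT1 _ (by positivity) one_pos.le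
          rw [habs]
          exact mul_le_mul this le_rfl (by positivity) hM0
      _ = M / d := by ring
  calc |bump' l m d t| ≤ _ + _ := abs_add_le _ _
    _ ≤ M / d + M / d := add_le_add hb1 hb2
    _ = 2 * M / d := by ring

lemma exists_M : ∃ M : ℝ, 0 < M ∧ ∀ x, |deriv T x| ≤ M := by
  have hT' : Continuous (deriv T) :=
    (Real.smoothTransition.contDiff (n := (2:ℕ∞))).continuous_deriv (by norm_num)
  obtain ⟨C, hC⟩ := (isCompact_Icc (a := (-1:ℝ)) (b := 2)).exists_bound_of_continuousOn
    hT'.continuousOn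
  refine ⟨max C 0 + 1, by positivity, fun x => ?_⟩
  by_cases hx : x ∈ Icc (-1:ℝ) 2
  · calc |deriv T x| ≤ C := by simpa using hC x hx
      _ ≤ max C 0 + 1 := by linarith [le_max_left C 0]
  · have : deriv T x = 0 := by
      simp only [mem_Icc, not_and_or, not_le] at hx
      rcases hx with hx | hx
      · exact derivT_of_nonpos (by linarith)
      · exact derivT_of_one_le (by linarith)
    rw [this, abs_zero]; positivity

/-- Integrability of continuous functions vanishing off a compact interval. -/
lemma integrable_helper {F : ℝ → ℝ} (hF : Continuous F) {A B : ℝ}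
    (h0 : ∀ t, t ∉ Icc A B → F t = 0) : Integrable F := by
  apply hF.integrable_of_hasCompactSupport
  exact HasCompactSupport.intro isCompact_Icc h0

lemma integral_eq_intervalIntegral {F : ℝ → ℝ} {A B : ℝ} (hAB : A ≤ B)
    (h0 : ∀ t, t ∉ Icc A B → F t = 0) : ∫ t, F t = ∫ t in A..B, F t := by
  rw [intervalIntegral.integral_of_le hAB, ← MeasureTheory.integral_Icc_eq_integral_Ioc]
  exact (setIntegral_eq_integral_of_forall_compl_eq_zero h0).symm

lemma integral_deriv_zero {W W' : ℝ → ℝ} (hW : ∀ t, HasDerivAt W (W' t) t)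
    (hW' : Continuous W') {A B : ℝ} (hAB : A ≤ B)
    (h0 : ∀ t, t ∉ Icc A B → W t = 0) : ∫ t, W' t = 0 := by
  have hz : ∀ t, t ∉ Icc (A - 1) (B + 1) → W' t = 0 := by
    intro t ht
    simp only [mem_Icc, not_and_or, not_le] at ht
    have hev : W =ᶠ[nhds t] fun _ => (0:ℝ) := by
      rcases ht with ht | ht
      · exact Filter.eventuallyEq_of_mem (Iio_mem_nhds (show t < A by linarith))
          (fun y hy => h0 y (by simp only [mem_Icc, not_and_or, not_le]; left; exact hy))
      · exact Filter.eventuallyEq_of_mem (Ioi_mem_nhds (show B < t by linarith))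
          (fun y hy => h0 y (by simp only [mem_Icc, not_and_or, not_le]; right; exact hy))
    have h2 : HasDerivAt W 0 t := by
      have := (hasDerivAt_const t (0:ℝ)).congr_of_eventuallyEq hev
      simpa using this
    exact (hW t).unique h2
  rw [integral_eq_intervalIntegral (by linarith) hz]
  rw [intervalIntegral.integral_eq_sub_of_hasDerivAt (fun x _ => hW x)
    (hW'.intervalIntegrable _ _)]
  rw [h0 _ (by simp only [mem_Icc, not_and_or, not_le]; right; linarith),
    h0 _ (by simp only [mem_Icc, not_and_or, not_le]; left; linarith)]
  ring


lemma contDiff_one_deriv {u : ℝ → ℝ} (hu : ContDiff ℝ 2 u) : ContDiff ℝ 1 (deriv u) := by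
  have h2 : ContDiff ℝ (1 + 1) u := by norm_num at hu ⊢; exact hu
  exact ((contDiff_succ_iff_deriv).mp h2).2.2

lemma key_calc (K u χ χd ψ ψd : ℝ → ℝ) (δ A₀ B₀ : ℝ) (hA₀B₀ : A₀ ≤ B₀)
    (hK : Continuous K) (hu : ContDiff ℝ 2 u)
    (hJ : ∀ t, deriv (deriv u) t + K t * u t = 0)
    (hχ : ∀ t, HasDerivAt χ (χd t) t) (hχc : Continuous χ) (hχdc : Continuous χd)
    (hψ : ∀ t, HasDerivAt ψ (ψd t) t) (hψc : Continuous ψ) (hψdc : Continuous ψd)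
    (hχ0 : ∀ t, t ∉ Icc A₀ B₀ → χ t = 0) (hχd0 : ∀ t, t ∉ Icc A₀ B₀ → χd t = 0)
    (hψ0 : ∀ t, t ∉ Icc A₀ B₀ → ψ t = 0) (hψd0 : ∀ t, t ∉ Icc A₀ B₀ → ψd t = 0)
    (horth : ∀ t, χd t * ψd t = 0) :
    (∫ t, (deriv (fun t => u t * χ t - δ * ψ t) t) ^ 2)
      - ∫ t, K t * (u t * χ t - δ * ψ t) ^ 2
    = (∫ t, (u t * χd t) ^ 2) + 2 * δ * (∫ t, deriv u t * χd t * ψ t)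
      + δ ^ 2 * ((∫ t, (ψd t) ^ 2) - ∫ t, K t * (ψ t) ^ 2) := by
  have hud : Differentiable ℝ u := hu.differentiable (by norm_num)
  have hu'cd : ContDiff ℝ 1 (deriv u) := contDiff_one_deriv hu
  have hu'c : Continuous (deriv u) := hu'cd.continuous
  have hu'd : Differentiable ℝ (deriv u) := hu'cd.differentiable (by norm_num)
  have hu''c : Continuous (deriv (deriv u)) := hu'cd.continuous_deriv le_rfl
  have huc : Continuous u := hud.continuous
  -- derivative of f
  have hf : ∀ t, HasDerivAt (fun t => u t * χ t - δ * ψ t)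
      (deriv u t * χ t + u t * χd t - δ * ψd t) t := fun t =>
    (((hud t).hasDerivAt).mul (hχ t)).sub ((hψ t).const_mul δ)
  have hderiv : deriv (fun t => u t * χ t - δ * ψ t)
      = fun t => deriv u t * χ t + u t * χd t - δ * ψd t := deriv_eq hf
  -- integrability
  have i1 : Integrable (fun t => (deriv u t * χ t + u t * χd t) ^ 2) := by
    refine integrable_helper (by fun_prop) (A := A₀) (B := B₀) (fun t ht => ?_)
    simp [hχ0 t ht, hχd0 t ht]
  have i2 : Integrable (fun t => (deriv u t * χ t + u t * χd t) * ψd t) := by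
    refine integrable_helper (by fun_prop) (A := A₀) (B := B₀) (fun t ht => ?_)
    simp [hψd0 t ht]
  have i3 : Integrable (fun t => (ψd t) ^ 2) := by
    refine integrable_helper (by fun_prop) (A := A₀) (B := B₀) (fun t ht => ?_)
    simp [hψd0 t ht]
  have i4 : Integrable (fun t => K t * (u t * χ t) ^ 2) := by
    refine integrable_helper (by fun_prop) (A := A₀) (B := B₀) (fun t ht => ?_)
    simp [hχ0 t ht]
  have i5 : Integrable (fun t => K t * (u t * χ t) * ψ t) := by
    refine integrable_helper (by fun_prop) (A := A₀) (B := B₀) (fun t ht => ?_)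
    simp [hψ0 t ht]
  have i6 : Integrable (fun t => K t * (ψ t) ^ 2) := by
    refine integrable_helper (by fun_prop) (A := A₀) (B := B₀) (fun t ht => ?_)
    simp [hψ0 t ht]
  have i7 : Integrable (fun t => (u t * χd t) ^ 2) := by
    refine integrable_helper (by fun_prop) (A := A₀) (B := B₀) (fun t ht => ?_)
    simp [hχd0 t ht]
  have i8 : Integrable (fun t => deriv u t * χd t * ψ t) := by
    refine integrable_helper (by fun_prop) (A := A₀) (B := B₀) (fun t ht => ?_)
    simp [hχd0 t ht]
  -- expansion of the LHS integrals
  have eqL : (∫ t, (deriv (fun t => u t * χ t - δ * ψ t) t) ^ 2)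
      = (∫ t, (deriv u t * χ t + u t * χd t) ^ 2)
        - 2 * δ * (∫ t, (deriv u t * χ t + u t * χd t) * ψd t)
        + δ ^ 2 * ∫ t, (ψd t) ^ 2 := by
    rw [hderiv]
    have hexp : (fun t => (deriv u t * χ t + u t * χd t - δ * ψd t) ^ 2)
        = fun t => ((deriv u t * χ t + u t * χd t) ^ 2
            - 2 * δ * ((deriv u t * χ t + u t * χd t) * ψd t))
          + δ ^ 2 * (ψd t) ^ 2 := by
      funext t; ring
    have ia : Integrable (fun t => (deriv u t * χ t + u t * χd t) ^ 2
        - 2 * δ * ((deriv u t * χ t + u t * χd t) * ψd t)) := i1.sub (i2.const_mul (2 * δ))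
    have ib : Integrable (fun t => δ ^ 2 * (ψd t) ^ 2) := i3.const_mul (δ ^ 2)
    rw [hexp, integral_add ia ib, integral_sub i1 (i2.const_mul (2 * δ)),
      integral_const_mul, integral_const_mul]
  have eqR : (∫ t, K t * (u t * χ t - δ * ψ t) ^ 2)
      = (∫ t, K t * (u t * χ t) ^ 2)
        - 2 * δ * (∫ t, K t * (u t * χ t) * ψ t)
        + δ ^ 2 * ∫ t, K t * (ψ t) ^ 2 := by
    have hexp : (fun t => K t * (u t * χ t - δ * ψ t) ^ 2)
        = fun t => (K t * (u t * χ t) ^ 2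
            - 2 * δ * (K t * (u t * χ t) * ψ t))
          + δ ^ 2 * (K t * (ψ t) ^ 2) := by
      funext t; ring
    have ia : Integrable (fun t => K t * (u t * χ t) ^ 2
        - 2 * δ * (K t * (u t * χ t) * ψ t)) := i4.sub (i5.const_mul (2 * δ))
    have ib : Integrable (fun t => δ ^ 2 * (K t * (ψ t) ^ 2)) := i6.const_mul (δ ^ 2)
    rw [hexp, integral_add ia ib, integral_sub i4 (i5.const_mul (2 * δ)),
      integral_const_mul, integral_const_mul]
  -- first integration by parts identity
  have E3 : ∫ t, ((deriv u t * χ t + u t * χd t) ^ 2 - K t * (u t * χ t) ^ 2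
      - (u t * χd t) ^ 2) = 0 := by
    apply integral_deriv_zero (W := fun t => u t * deriv u t * (χ t * χ t))
      (fun t => ?_) (by fun_prop) hA₀B₀ (fun t ht => by simp [hχ0 t ht])
    have h1 := (((hud t).hasDerivAt).mul ((hu'd t).hasDerivAt)).mul ((hχ t).mul (hχ t))
    have h2 : deriv (deriv u) t = -(K t * u t) := by linarith [hJ t]
    have h3 : (deriv u t * χ t + u t * χd t) ^ 2 - K t * (u t * χ t) ^ 2
        - (u t * χd t) ^ 2
        = (deriv u t * deriv u t + u t * deriv (deriv u) t) * (χ t * χ t)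
          + u t * deriv u t * (χd t * χ t + χ t * χd t) := by
      rw [h2]; ring
    rw [h3]; exact h1
  -- second integration by parts identity
  have E4 : ∫ t, ((deriv u t * χ t + u t * χd t) * ψd t - K t * (u t * χ t) * ψ t
      + deriv u t * χd t * ψ t) = 0 := by
    apply integral_deriv_zero (W := fun t => deriv u t * χ t * ψ t)
      (fun t => ?_) (by fun_prop) hA₀B₀ (fun t ht => by simp [hχ0 t ht])
    have h1 := (((hu'd t).hasDerivAt).mul (hχ t)).mul (hψ t)
    have h2 : deriv (deriv u) t = -(K t * u t) := by linarith [hJ t]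
    have h3 : (deriv u t * χ t + u t * χd t) * ψd t - K t * (u t * χ t) * ψ t
        + deriv u t * χd t * ψ t
        = (deriv (deriv u) t * χ t + deriv u t * χd t) * ψ t
          + deriv u t * χ t * ψd t := by
      rw [h2]; linear_combination (u t) * horth t
    rw [h3]; exact h1
  have v1 : (∫ t, (deriv u t * χ t + u t * χd t) ^ 2)
      = (∫ t, K t * (u t * χ t) ^ 2) + ∫ t, (u t * χd t) ^ 2 := by
    have := E3
    have ia : Integrable (fun t => (deriv u t * χ t + u t * χd t) ^ 2
        - K t * (u t * χ t) ^ 2) := i1.sub i4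
    rw [integral_sub ia i7, integral_sub i1 i4] at this
    linarith
  have v2 : (∫ t, (deriv u t * χ t + u t * χd t) * ψd t)
      = (∫ t, K t * (u t * χ t) * ψ t) - ∫ t, deriv u t * χd t * ψ t := by
    have := E4
    have ia : Integrable (fun t => (deriv u t * χ t + u t * χd t) * ψd t
        - K t * (u t * χ t) * ψ t) := i2.sub i5
    rw [integral_add ia i8, integral_sub i2 i5] at this
    linarith
  rw [eqL, eqR, v1, v2]
  ring

set_option maxHeartbeats 1000000 in
lemma main_pos (K u : ℝ → ℝ) (hK : Continuous K) (hu : ContDiff ℝ 2 u)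
    (hJ : ∀ t, deriv (deriv u) t + K t * u t = 0)
    (a b : ℝ) (hab : a < b) (ha : u a = 0) (hb : u b = 0)
    (hs : 0 < deriv u b) :
    ∀ ε > 0, ∃ f : ℝ → ℝ, ContDiff ℝ 1 f ∧ HasCompactSupport f ∧
      tsupport f ⊆ Set.Ioo (a - ε) (b + ε) ∧
      (∫ t, (deriv f t) ^ 2) < ∫ t, K t * (f t) ^ 2 := by
  intro ε hε
  obtain ⟨M, hM0, hM⟩ := exists_M
  have hud : Differentiable ℝ u := hu.differentiable (by norm_num)
  have hu'c : Continuous (deriv u) := hu.continuous_deriv (by norm_num)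
  have huc : Continuous u := hud.continuous
  set s := deriv u b with hsdef
  have hmin : 0 < min ε (b - a) := lt_min hε (by linarith)
  set r := min ε (b - a) / 3 with hrdef
  have hr : 0 < r := by positivity
  have hr3ε : 3 * r ≤ ε := by rw [hrdef]; have := min_le_left ε (b - a); linarith
  have hr3ba : 3 * r ≤ b - a := by rw [hrdef]; have := min_le_right ε (b - a); linarith
  -- bound on deriv u
  obtain ⟨L₀, hL₀⟩ := (isCompact_Icc (a := a - 1) (b := b + 1)).exists_bound_of_continuousOn
      hu'c.continuousOn
  set L := max L₀ 1 with hLdef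
  have hL1 : (0:ℝ) < L := lt_of_lt_of_le one_pos (le_max_right _ _)
  have hL : ∀ x ∈ Icc (a - 1) (b + 1), |deriv u x| ≤ L := fun x hx =>
    le_trans (by simpa using hL₀ x hx) (le_max_left _ _)
  -- MVT estimate
  have hmvt : ∀ x ∈ Icc (a - 1) (b + 1), ∀ y ∈ Icc (a - 1) (b + 1),
      |u y - u x| ≤ L * |y - x| := by
    intro x hx y hy
    have := Convex.norm_image_sub_le_of_norm_hasDerivWithin_le
      (f := u) (f' := deriv u) (s := Icc (a - 1) (b + 1))
      (fun z _ => (hud z).hasDerivAt.hasDerivWithinAt)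
      (fun z hz => by simpa using hL z hz) (convex_Icc _ _) hx hy
    simpa using this
  -- the outer bump ψ
  set ψ := bump (b - 2*r) (b + 2*r) r with hψdef
  set ψd := bump' (b - 2*r) (b + 2*r) r with hψddef
  have hψ_da : ∀ t, HasDerivAt ψ (ψd t) t := bump_hasDerivAt _ _ _
  have hψc : Continuous ψ := (bump_contDiff _ _ _ hr.ne' (n := 1)).continuous
  have hψdc : Continuous ψd := bump'_continuous _ _ _
  have hψ1 : ∀ t ∈ Icc (b - r) (b + r), ψ t = 1 := fun t ht =>
    bump_eq_one hr (by linarith [ht.1]) (by linarith [ht.2])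
  have hψd_pl : ∀ t ∈ Icc (b - r) (b + r), ψd t = 0 := fun t ht =>
    bump'_eq_zero_plateau hr (by linarith [ht.1]) (by linarith [ht.2])
  have hψ_out : ∀ t, t ≤ b - 2*r ∨ b + 2*r ≤ t → ψ t = 0 := fun t ht => bump_eq_zero hr ht
  have hψd_out : ∀ t, t ≤ b - 2*r ∨ b + 2*r ≤ t → ψd t = 0 := fun t ht =>
    bump'_eq_zero_outside hr ht
  -- Qg and δ
  set Qg := (∫ t, (ψd t) ^ 2) - ∫ t, K t * (ψ t) ^ 2 with hQg
  set δ := min 1 (s / (2 * (|Qg| + 1))) with hδdef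
  have hδ0 : 0 < δ := lt_min one_pos (div_pos hs (by positivity))
  have hδ1 : δ ≤ 1 := min_le_left _ _
  have hδQ : δ ^ 2 * Qg ≤ δ * (s / 2) := by
    have h2 : δ ≤ s / (2 * (|Qg| + 1)) := min_le_right _ _
    have h3 : (0:ℝ) ≤ |Qg| := abs_nonneg _
    have h1 : δ * |Qg| ≤ s / 2 := by
      calc δ * |Qg| ≤ (s / (2 * (|Qg| + 1))) * |Qg| := by nlinarith
        _ ≤ s / 2 := by
          rw [div_mul_eq_mul_div, div_le_div_iff₀ (by positivity) (by norm_num)]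
          nlinarith
    calc δ ^ 2 * Qg ≤ δ ^ 2 * |Qg| := by nlinarith [le_abs_self Qg, sq_nonneg δ]
      _ = δ * (δ * |Qg|) := by ring
      _ ≤ δ * (s / 2) := by nlinarith
  -- continuity of deriv u at b
  have hcont := hu'c.continuousAt (x := b)
  rw [Metric.continuousAt_iff] at hcont
  obtain ⟨η, hη0, hη⟩ := hcont (s / (8 * M)) (div_pos hs (by positivity))
  rw [← hsdef] at hη
  -- choice of h
  set CA := 2 * (2 * L * M) ^ 2 + 1 with hCA
  have hCA0 : 0 < CA := by positivity
  set h := min (min (r/2) 1) (min (η/2) (δ * s / (4 * CA))) with hhdef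
  have hh0 : 0 < h := lt_min (lt_min (by positivity) one_pos)
    (lt_min (by positivity) (div_pos (mul_pos hδ0 hs) (by positivity)))
  have hhr : h ≤ r / 2 := le_trans (min_le_left _ _) (min_le_left _ _)
  have hh1 : h ≤ 1 := le_trans (min_le_left _ _) (min_le_right _ _)
  have hhη : h ≤ η / 2 := le_trans (min_le_right _ _) (min_le_left _ _)
  have hhA : h ≤ δ * s / (4 * CA) := le_trans (min_le_right _ _) (min_le_right _ _)
  -- the inner cutoff χ
  set χ := bump (a - h) (b + h) h with hχdef
  set χd := bump' (a - h) (b + h) h with hχddef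
  have hχ_da : ∀ t, HasDerivAt χ (χd t) t := bump_hasDerivAt _ _ _
  have hχc : Continuous χ := (bump_contDiff _ _ _ hh0.ne' (n := 1)).continuous
  have hχdc : Continuous χd := bump'_continuous _ _ _
  have hχ1 : ∀ t ∈ Icc a b, χ t = 1 := fun t ht =>
    bump_eq_one hh0 (by linarith [ht.1]) (by linarith [ht.2])
  have hχd_pl : ∀ t ∈ Icc a b, χd t = 0 := fun t ht =>
    bump'_eq_zero_plateau hh0 (by linarith [ht.1]) (by linarith [ht.2])
  have hχ_out : ∀ t, t ≤ a - h ∨ b + h ≤ t → χ t = 0 := fun t ht => bump_eq_zero hh0 ht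
  have hχd_out : ∀ t, t ≤ a - h ∨ b + h ≤ t → χd t = 0 := fun t ht =>
    bump'_eq_zero_outside hh0 ht
  -- orthogonality of the two derivative regions
  have horth : ∀ t, χd t * ψd t = 0 := by
    intro t
    rcases le_or_gt t (b - 2*r) with h1 | h1
    · rw [hψd_out t (Or.inl h1)]; ring
    rcases le_or_gt t b with h2 | h2
    · rw [hχd_pl t ⟨by linarith, h2⟩]; ring
    rcases le_or_gt t (b + r) with h3 | h3
    · rw [hψd_pl t ⟨by linarith, h3⟩]; ring
    · rw [hχd_out t (Or.inr (by linarith))]; ring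
  -- the test function
  set f := fun t => u t * χ t - δ * ψ t with hfdef
  -- support bounds
  have hfsupp : ∀ t, t ∉ Icc (a - h) (b + 2*r) → f t = 0 := by
    intro t ht
    simp only [mem_Icc, not_and_or, not_le] at ht
    rcases ht with ht | ht
    · rw [hfdef]; simp only
      rw [hχ_out t (Or.inl ht.le), hψ_out t (Or.inl (by linarith))]; ring
    · rw [hfdef]; simp only
      rw [hχ_out t (Or.inr (by linarith)), hψ_out t (Or.inr (by linarith))]; ring
  have hC1 : ContDiff ℝ 1 f := by
    rw [hfdef, hχdef, hψdef]
    exact ((hu.of_le (by norm_num)).mul (bump_contDiff _ _ _ hh0.ne')).sub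
      (contDiff_const.mul (bump_contDiff _ _ _ hr.ne'))
  have hCS : HasCompactSupport f := HasCompactSupport.intro isCompact_Icc hfsupp
  have hts : tsupport f ⊆ Set.Ioo (a - ε) (b + ε) := by
    have h1 : tsupport f ⊆ Icc (a - h) (b + 2*r) := by
      apply closure_minimal _ isClosed_Icc
      intro t ht
      by_contra hn
      exact ht (hfsupp t hn)
    refine subset_trans h1 (fun t ht => ⟨?_, ?_⟩)
    · have := ht.1; linarith
    · have := ht.2; linarith
  -- the key identity
  have hkey := key_calc K u χ χd ψ ψd δ (a - h) (b + 2*r) (by linarith) hK hu hJ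
    hχ_da hχc hχdc hψ_da hψc hψdc
    (fun t ht => by
      simp only [mem_Icc, not_and_or, not_le] at ht
      rcases ht with ht | ht
      · exact hχ_out t (Or.inl ht.le)
      · exact hχ_out t (Or.inr (by linarith)))
    (fun t ht => by
      simp only [mem_Icc, not_and_or, not_le] at ht
      rcases ht with ht | ht
      · exact hχd_out t (Or.inl ht.le)
      · exact hχd_out t (Or.inr (by linarith)))
    (fun t ht => by
      simp only [mem_Icc, not_and_or, not_le] at ht
      rcases ht with ht | ht
      · exact hψ_out t (Or.inl (by linarith))
      · exact hψ_out t (Or.inr (by linarith)))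
    (fun t ht => by
      simp only [mem_Icc, not_and_or, not_le] at ht
      rcases ht with ht | ht
      · exact hψd_out t (Or.inl (by linarith))
      · exact hψd_out t (Or.inr (by linarith)))
    horth
  -- Estimate 1 : the corner term
  have hAbound : (∫ t, (u t * χd t) ^ 2) ≤ 2 * (2 * L * M) ^ 2 * h := by
    have hvan : ∀ t, t ∉ Icc (a - h) (b + h) → (u t * χd t) ^ 2 = 0 := by
      intro t ht
      simp only [mem_Icc, not_and_or, not_le] at ht
      rcases ht with ht | ht
      · rw [hχd_out t (Or.inl ht.le)]; ring
      · rw [hχd_out t (Or.inr ht.le)]; ring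
    rw [integral_eq_intervalIntegral (by linarith) hvan]
    have hcont2 : Continuous (fun t => (u t * χd t) ^ 2) := by fun_prop
    have iInt : ∀ c d : ℝ, IntervalIntegrable (fun t => (u t * χd t) ^ 2) volume c d :=
      fun c d => hcont2.intervalIntegrable _ _
    rw [← intervalIntegral.integral_add_adjacent_intervals (iInt (a-h) a) (iInt a (b+h)),
      ← intervalIntegral.integral_add_adjacent_intervals (iInt a b) (iInt b (b+h))]
    have hmid : (∫ t in a..b, (u t * χd t) ^ 2) = 0 := by
      rw [intervalIntegral.integral_congr (g := fun _ => (0:ℝ))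
        (fun t ht => by
          rw [uIcc_of_le hab.le] at ht
          rw [hχd_pl t ht]; ring)]
      simp
    -- left piece
    have hleft : (∫ t in (a-h)..a, (u t * χd t) ^ 2) ≤ (2*L*M)^2 * h := by
      have hbd : ∀ x ∈ Set.uIoc (a-h) a, ‖(u x * χd x) ^ 2‖ ≤ (2*L*M)^2 := by
        intro x hx
        rw [uIoc_of_le (by linarith)] at hx
        have hx1 : x ∈ Icc (a-1) (b+1) := ⟨by linarith [hx.1], by linarith [hx.2]⟩
        have hux : |u x| ≤ L * h := by
          have := hmvt a ⟨by linarith, by linarith⟩ x hx1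
          rw [ha, sub_zero] at this
          have habs : |x - a| ≤ h := by
            rw [abs_le]; constructor <;> [linarith [hx.1]; linarith [hx.2]]
          calc |u x| ≤ L * |x - a| := this
            _ ≤ L * h := mul_le_mul_of_nonneg_left habs hL1.le
        have hχdx : |χd x| ≤ 2 * M / h := bump'_abs_le hh0 hM x
        have hprod : |u x * χd x| ≤ 2 * L * M := by
          rw [abs_mul]
          calc |u x| * |χd x| ≤ (L * h) * (2 * M / h) :=
              mul_le_mul hux hχdx (abs_nonneg _) (by positivity)
            _ = 2 * L * M := by field_simp
        rw [Real.norm_eq_abs, abs_pow]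
        exact pow_le_pow_left₀ (abs_nonneg _) hprod 2
      have := intervalIntegral.norm_integral_le_of_norm_le_const hbd
      rw [Real.norm_eq_abs] at this
      have habs : |a - (a - h)| = h := by rw [abs_of_nonneg (by linarith)]; ring
      calc (∫ t in (a-h)..a, (u t * χd t) ^ 2) ≤ |∫ t in (a-h)..a, (u t * χd t) ^ 2| :=
          le_abs_self _
        _ ≤ (2*L*M)^2 * |a - (a-h)| := this
        _ = (2*L*M)^2 * h := by rw [habs]
    have hright : (∫ t in b..(b+h), (u t * χd t) ^ 2) ≤ (2*L*M)^2 * h := by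
      have hbd : ∀ x ∈ Set.uIoc b (b+h), ‖(u x * χd x) ^ 2‖ ≤ (2*L*M)^2 := by
        intro x hx
        rw [uIoc_of_le (by linarith)] at hx
        have hx1 : x ∈ Icc (a-1) (b+1) := ⟨by linarith [hx.1], by linarith [hx.2]⟩
        have hux : |u x| ≤ L * h := by
          have := hmvt b ⟨by linarith, by linarith⟩ x hx1
          rw [hb, sub_zero] at this
          have habs : |x - b| ≤ h := by
            rw [abs_le]; constructor <;> [linarith [hx.1]; linarith [hx.2]]
          calc |u x| ≤ L * |x - b| := this
            _ ≤ L * h := mul_le_mul_of_nonneg_left habs hL1.le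
        have hχdx : |χd x| ≤ 2 * M / h := bump'_abs_le hh0 hM x
        have hprod : |u x * χd x| ≤ 2 * L * M := by
          rw [abs_mul]
          calc |u x| * |χd x| ≤ (L * h) * (2 * M / h) :=
              mul_le_mul hux hχdx (abs_nonneg _) (by positivity)
            _ = 2 * L * M := by field_simp
        rw [Real.norm_eq_abs, abs_pow]
        exact pow_le_pow_left₀ (abs_nonneg _) hprod 2
      have := intervalIntegral.norm_integral_le_of_norm_le_const hbd
      rw [Real.norm_eq_abs] at this
      have habs : |b + h - b| = h := by rw [abs_of_nonneg (by linarith)]; ring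
      calc (∫ t in b..(b+h), (u t * χd t) ^ 2) ≤ |∫ t in b..(b+h), (u t * χd t) ^ 2| :=
          le_abs_self _
        _ ≤ (2*L*M)^2 * |b + h - b| := this
        _ = (2*L*M)^2 * h := by rw [habs]
    linarith
  -- Estimate 2 : the cross term
  have hXbound : (∫ t, deriv u t * χd t * ψ t) ≤ -(3/4) * s := by
    have hvan : ∀ t, t ∉ Icc b (b + h) → deriv u t * χd t * ψ t = 0 := by
      intro t ht
      simp only [mem_Icc, not_and_or, not_le] at ht
      rcases ht with ht | ht
      · rcases lt_or_ge t a with h1 | h1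
        · rw [hψ_out t (Or.inl (by linarith))]; ring
        · rw [hχd_pl t ⟨h1, ht.le⟩]; ring
      · rw [hχd_out t (Or.inr ht.le)]; ring
    rw [integral_eq_intervalIntegral (by linarith) hvan]
    have hcongr : (∫ t in b..(b+h), deriv u t * χd t * ψ t)
        = ∫ t in b..(b+h), deriv u t * χd t := by
      apply intervalIntegral.integral_congr
      intro t ht
      rw [uIcc_of_le (by linarith)] at ht
      show deriv u t * χd t * ψ t = deriv u t * χd t
      rw [hψ1 t ⟨by linarith [ht.1], by linarith [ht.2]⟩]
      ring
    rw [hcongr]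
    have heq : (∫ t in b..(b+h), deriv u t * χd t)
        = (∫ t in b..(b+h), s * χd t) + ∫ t in b..(b+h), (deriv u t - s) * χd t := by
      rw [← intervalIntegral.integral_add (f := fun t => s * χd t) (g := fun t => (deriv u t - s) * χd t) ((continuous_const.mul hχdc).intervalIntegrable _ _)
        (((hu'c.sub continuous_const).mul hχdc).intervalIntegrable _ _)]
      apply intervalIntegral.integral_congr
      intro t _
      show deriv u t * χd t = s * χd t + (deriv u t - s) * χd t
      ring
    have hFTC : (∫ t in b..(b+h), χd t) = χ (b+h) - χ b :=
      intervalIntegral.integral_eq_sub_of_hasDerivAt (fun t _ => hχ_da t)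
        (hχdc.intervalIntegrable _ _)
    have hχbh : χ (b+h) = 0 := hχ_out (b+h) (Or.inr le_rfl)
    have hχb : χ b = 1 := hχ1 b ⟨hab.le, le_rfl⟩
    have h2 : (∫ t in b..(b+h), s * χd t) = -s := by
      rw [intervalIntegral.integral_const_mul, hFTC, hχbh, hχb]; ring
    have h3 : |∫ t in b..(b+h), (deriv u t - s) * χd t| ≤ s / 4 := by
      have hbd : ∀ x ∈ Set.uIoc b (b+h), ‖(deriv u x - s) * χd x‖ ≤ s/(8*M) * (2*M/h) := by
        intro x hx
        rw [uIoc_of_le (by linarith)] at hx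
        have hdist : dist x b < η := by
          rw [Real.dist_eq, abs_of_nonneg (by linarith [hx.1])]
          linarith [hx.2]
        have h4 : |deriv u x - s| ≤ s/(8*M) := by
          have := hη hdist
          rw [Real.dist_eq] at this
          exact this.le
        have h5 : |χd x| ≤ 2*M/h := bump'_abs_le hh0 hM x
        rw [Real.norm_eq_abs, abs_mul]
        exact mul_le_mul h4 h5 (abs_nonneg _) (by positivity)
      have := intervalIntegral.norm_integral_le_of_norm_le_const hbd
      rw [Real.norm_eq_abs] at this
      have habs : |b + h - b| = h := by rw [abs_of_nonneg (by linarith)]; ring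
      rw [habs] at this
      calc |∫ t in b..(b+h), (deriv u t - s) * χd t| ≤ s/(8*M) * (2*M/h) * h := this
        _ = s / 4 := by field_simp; ring
    have h6 : (∫ t in b..(b+h), (deriv u t - s) * χd t) ≤ s / 4 :=
      le_trans (le_abs_self _) h3
    linarith
  -- final assembly
  refine ⟨f, hC1, hCS, hts, ?_⟩
  have hc2 : δ ^ 2 * ((∫ t, (ψd t) ^ 2) - ∫ t, K t * (ψ t) ^ 2) ≤ δ * (s / 2) := by
    rw [← hQg]; exact hδQ
  have hc1 : 2 * δ * (∫ t, deriv u t * χd t * ψ t) ≤ 2 * δ * (-(3/4) * s) :=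
    mul_le_mul_of_nonneg_left hXbound (by positivity)
  have hc3 : (∫ t, (u t * χd t) ^ 2) < δ * s / 4 := by
    have hlt : 2 * (2*L*M)^2 * h < CA * h := by
      rw [hCA]; nlinarith
    have hle : CA * h ≤ δ * s / 4 := by
      have := mul_le_mul_of_nonneg_left hhA hCA0.le
      calc CA * h ≤ CA * (δ * s / (4 * CA)) := this
        _ = δ * s / 4 := by field_simp
    linarith
  have hδs : 0 < δ * s := mul_pos hδ0 hs
  have hQlt : (∫ t, (deriv (fun t => u t * χ t - δ * ψ t) t) ^ 2)
      - (∫ t, K t * (u t * χ t - δ * ψ t) ^ 2) < 0 := by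
    rw [hkey]
    nlinarith
  simp only [hfdef]
  linarith [hQlt]

lemma ode_zero (K u : ℝ → ℝ) (hK : Continuous K) (hu : ContDiff ℝ 2 u)
    (hJ : ∀ t, deriv (deriv u) t + K t * u t = 0) (b : ℝ) (hb : u b = 0)
    (hb' : deriv u b = 0) : ∀ c, u c = 0 := by
  have hud : Differentiable ℝ u := hu.differentiable (by norm_num)
  have hu'cd : ContDiff ℝ 1 (deriv u) := contDiff_one_deriv hu
  have hu'd : Differentiable ℝ (deriv u) := hu'cd.differentiable (by norm_num)
  have hFc : Continuous (fun t => (u t, deriv u t)) := hud.continuous.prodMk hu'cd.continuous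
  have hF : ∀ t, HasDerivAt (fun t => (u t, deriv u t)) (deriv u t, deriv (deriv u) t) t :=
    fun t => ((hud t).hasDerivAt).prodMk ((hu'd t).hasDerivAt)
  intro c
  rcases le_total b c with hbc | hbc
  · obtain ⟨CK, hCK⟩ := (isCompact_Icc (a := b) (b := c)).exists_bound_of_continuousOn
      hK.continuousOn
    have hCK1 : ∀ x ∈ Icc b c, |K x| ≤ max 1 CK := fun x hx =>
      le_trans (by simpa using hCK x hx) (le_max_right _ _)
    set v : ℝ → ℝ × ℝ → ℝ × ℝ := fun t p => (p.2, -(K (max b (min t c)) * p.1)) with hv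
    have hmax0 : (0:ℝ) ≤ max 1 CK := le_trans zero_le_one (le_max_left _ _)
    have hlip : ∀ t, LipschitzOnWith (Real.toNNReal (max 1 CK)) (v t) Set.univ := by
      intro t
      apply LipschitzWith.lipschitzOnWith
      apply LipschitzWith.of_dist_le_mul
      intro p q
      have hcl : max b (min t c) ∈ Icc b c := ⟨le_max_left _ _, max_le hbc (min_le_right _ _)⟩
      have hk : |K (max b (min t c))| ≤ max 1 CK := hCK1 _ hcl
      rw [Real.coe_toNNReal _ hmax0, Prod.dist_eq, Prod.dist_eq]
      simp only [hv]
      simp only [Real.dist_eq]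
      have e1 : |-(K (max b (min t c)) * p.1) - -(K (max b (min t c)) * q.1)|
          = |K (max b (min t c))| * |p.1 - q.1| := by
        rw [show -(K (max b (min t c)) * p.1) - -(K (max b (min t c)) * q.1)
          = K (max b (min t c)) * (q.1 - p.1) from by ring, abs_mul, abs_sub_comm q.1 p.1]
      apply max_le
      · calc |p.2 - q.2| ≤ max |p.1 - q.1| |p.2 - q.2| := le_max_right _ _
          _ ≤ max 1 CK * max |p.1 - q.1| |p.2 - q.2| :=
            le_mul_of_one_le_left (le_trans (abs_nonneg _) (le_max_right _ _)) (le_max_left _ _)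
      · rw [e1]
        calc |K (max b (min t c))| * |p.1 - q.1| ≤ max 1 CK * |p.1 - q.1| :=
            mul_le_mul_of_nonneg_right hk (abs_nonneg _)
          _ ≤ max 1 CK * max |p.1 - q.1| |p.2 - q.2| :=
            mul_le_mul_of_nonneg_left (le_max_left _ _) hmax0
    have hsol : ∀ t ∈ Ico b c, HasDerivWithinAt (fun t => (u t, deriv u t))
        (v t (u t, deriv u t)) (Ici t) t := by
      intro t ht
      have hclamp : max b (min t c) = t := by rw [min_eq_left ht.2.le, max_eq_right ht.1]
      have hval : v t (u t, deriv u t) = (deriv u t, deriv (deriv u) t) := by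
        simp only [hv, hclamp]
        rw [show deriv (deriv u) t = -(K t * u t) from by linarith [hJ t]]
      rw [hval]
      exact (hF t).hasDerivWithinAt
    have hzero' : ∀ t ∈ Ico b c, HasDerivWithinAt (fun _ : ℝ => ((0:ℝ), (0:ℝ)))
        (v t ((0:ℝ), (0:ℝ))) (Ici t) t := by
      intro t _
      have : v t ((0:ℝ), (0:ℝ)) = ((0:ℝ), (0:ℝ)) := by simp [hv]
      rw [this]
      exact hasDerivWithinAt_const _ _ _
    have heq := ODE_solution_unique_of_mem_Icc_right (v := v) (s := fun _ => Set.univ) (fun t _ => hlip t)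
      hFc.continuousOn hsol (fun _ _ => trivial) continuousOn_const hzero' (fun _ _ => trivial)
      (show (u b, deriv u b) = ((0:ℝ), (0:ℝ)) by rw [hb, hb'])
    have hc := heq ⟨hbc, le_rfl⟩
    exact (Prod.ext_iff.mp hc).1
  · obtain ⟨CK, hCK⟩ := (isCompact_Icc (a := c) (b := b)).exists_bound_of_continuousOn
      hK.continuousOn
    have hCK1 : ∀ x ∈ Icc c b, |K x| ≤ max 1 CK := fun x hx =>
      le_trans (by simpa using hCK x hx) (le_max_right _ _)
    set v : ℝ → ℝ × ℝ → ℝ × ℝ := fun t p => (p.2, -(K (max c (min t b)) * p.1)) with hv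
    have hmax0 : (0:ℝ) ≤ max 1 CK := le_trans zero_le_one (le_max_left _ _)
    have hlip : ∀ t, LipschitzOnWith (Real.toNNReal (max 1 CK)) (v t) Set.univ := by
      intro t
      apply LipschitzWith.lipschitzOnWith
      apply LipschitzWith.of_dist_le_mul
      intro p q
      have hcl : max c (min t b) ∈ Icc c b := ⟨le_max_left _ _, max_le hbc (min_le_right _ _)⟩
      have hk : |K (max c (min t b))| ≤ max 1 CK := hCK1 _ hcl
      rw [Real.coe_toNNReal _ hmax0, Prod.dist_eq, Prod.dist_eq]
      simp only [hv]
      simp only [Real.dist_eq]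
      have e1 : |-(K (max c (min t b)) * p.1) - -(K (max c (min t b)) * q.1)|
          = |K (max c (min t b))| * |p.1 - q.1| := by
        rw [show -(K (max c (min t b)) * p.1) - -(K (max c (min t b)) * q.1)
          = K (max c (min t b)) * (q.1 - p.1) from by ring, abs_mul, abs_sub_comm q.1 p.1]
      apply max_le
      · calc |p.2 - q.2| ≤ max |p.1 - q.1| |p.2 - q.2| := le_max_right _ _
          _ ≤ max 1 CK * max |p.1 - q.1| |p.2 - q.2| :=
            le_mul_of_one_le_left (le_trans (abs_nonneg _) (le_max_right _ _)) (le_max_left _ _)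
      · rw [e1]
        calc |K (max c (min t b))| * |p.1 - q.1| ≤ max 1 CK * |p.1 - q.1| :=
            mul_le_mul_of_nonneg_right hk (abs_nonneg _)
          _ ≤ max 1 CK * max |p.1 - q.1| |p.2 - q.2| :=
            mul_le_mul_of_nonneg_left (le_max_left _ _) hmax0
    have hsol : ∀ t ∈ Ioc c b, HasDerivWithinAt (fun t => (u t, deriv u t))
        (v t (u t, deriv u t)) (Iic t) t := by
      intro t ht
      have hclamp : max c (min t b) = t := by rw [min_eq_left ht.2, max_eq_right ht.1.le]
      have hval : v t (u t, deriv u t) = (deriv u t, deriv (deriv u) t) := by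
        simp only [hv, hclamp]
        rw [show deriv (deriv u) t = -(K t * u t) from by linarith [hJ t]]
      rw [hval]
      exact (hF t).hasDerivWithinAt
    have hzero' : ∀ t ∈ Ioc c b, HasDerivWithinAt (fun _ : ℝ => ((0:ℝ), (0:ℝ)))
        (v t ((0:ℝ), (0:ℝ))) (Iic t) t := by
      intro t _
      have : v t ((0:ℝ), (0:ℝ)) = ((0:ℝ), (0:ℝ)) := by simp [hv]
      rw [this]
      exact hasDerivWithinAt_const _ _ _
    have heq := ODE_solution_unique_of_mem_Icc_left (v := v) (s := fun _ => Set.univ) (fun t _ => hlip t)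
      hFc.continuousOn hsol (fun _ _ => trivial) continuousOn_const hzero' (fun _ _ => trivial)
      (show (u b, deriv u b) = ((0:ℝ), (0:ℝ)) by rw [hb, hb'])
    have hc := heq ⟨le_rfl, hbc⟩
    exact (Prod.ext_iff.mp hc).1

end Stmt7Aux

open MeasureTheory

/-- A Jacobi field with two zeros forces the index form to be negative on
a compactly supported variation supported near the two zeros. -/
theorem stmt7 (K u : ℝ → ℝ) (hK : Continuous K) (hu : ContDiff ℝ 2 u)
    (hJ : ∀ t, deriv (deriv u) t + K t * u t = 0) (hne : u ≠ 0)
    (a b : ℝ) (hab : a < b) (ha : u a = 0) (hb : u b = 0) :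
    ∀ ε > 0, ∃ f : ℝ → ℝ, ContDiff ℝ 1 f ∧ HasCompactSupport f ∧
      tsupport f ⊆ Set.Ioo (a - ε) (b + ε) ∧
      (∫ t, (deriv f t) ^ 2) < ∫ t, K t * (f t) ^ 2 := by
  rcases lt_trichotomy (deriv u b) 0 with hneg | hzero | hpos
  · have hu2 : ContDiff ℝ 2 (fun t => -u t) := hu.neg
    have hd1 : (deriv fun t => -u t) = fun t => -deriv u t := by
      funext t; exact deriv.neg
    have hJ2 : ∀ t, deriv (deriv (fun t => -u t)) t + K t * (-u t) = 0 := by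
      intro t
      rw [hd1, show deriv (fun t => -deriv u t) t = -deriv (deriv u) t from deriv.neg]
      linarith [hJ t]
    have hs2 : 0 < deriv (fun t => -u t) b := by
      rw [hd1]; simp only; linarith
    intro ε hε
    exact main_pos K _ hK hu2 hJ2 a b hab (by simp [ha]) (by simp [hb]) hs2 ε hε
  · exact absurd (funext fun t => ode_zero K u hK hu hJ b hb hzero t) hne
  · exact main_pos K u hK hu hJ a b hab ha hb hpos
end

section
/- Let K : ℝ → ℝ be continuous. Suppose that no C² solution u of u'' + K u = 0 other than the zero solution has two distinct zeros. Then for every C¹ function f : ℝ → ℝ with compact support, ∫ K f² ≤ ∫ (f')². (A complete geodesic with no Jacobi field having more than one zero is stable.) -/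
open MeasureTheory

open Set

noncomputable def Vf (K : ℝ → ℝ) : ℝ → ℝ × ℝ → ℝ × ℝ := fun t x => (x.2, -K t * x.1)

lemma Vf_lip (K : ℝ → ℝ) {M : ℝ} (t : ℝ) (hM : 0 ≤ M) (ht : |K t| ≤ M) :
    LipschitzWith ⟨M + 1, by linarith⟩ (Vf K t) := by
  refine LipschitzWith.of_dist_le_mul fun x y => ?_
  have h1 : dist (Vf K t x) (Vf K t y) = max (dist x.2 y.2) (dist (-K t * x.1) (-K t * y.1)) :=
    Prod.dist_eq
  have h2 : dist x y = max (dist x.1 y.1) (dist x.2 y.2) := Prod.dist_eq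
  rw [h1, h2]
  have hd : dist (-K t * x.1) (-K t * y.1) = |K t| * dist x.1 y.1 := by
    rw [Real.dist_eq, Real.dist_eq, ← mul_sub, abs_mul, abs_neg]
  push_cast
  change max (dist x.2 y.2) (dist (-K t * x.1) (-K t * y.1)) ≤ (M + 1) * max (dist x.1 y.1) (dist x.2 y.2)
  have d1 : (0:ℝ) ≤ dist x.1 y.1 := dist_nonneg
  have d2 : (0:ℝ) ≤ dist x.2 y.2 := dist_nonneg
  rw [hd]
  rcases le_total (dist x.1 y.1) (dist x.2 y.2) with h | h <;>
  · rw [max_le_iff]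
    constructor <;> nlinarith [le_max_left (dist x.1 y.1) (dist x.2 y.2),
      le_max_right (dist x.1 y.1) (dist x.2 y.2), abs_nonneg (K t)]

lemma Vf_cont (K : ℝ → ℝ) (hK : Continuous K) (x : ℝ × ℝ) :
    Continuous fun t => Vf K t x :=
  continuous_const.prodMk ((hK.neg).mul continuous_const)

lemma Vf_norm (K : ℝ → ℝ) {M : ℝ} (t : ℝ) (hM : 0 ≤ M) (ht : |K t| ≤ M) (x : ℝ × ℝ) :
    ‖Vf K t x‖ ≤ (M + 1) * ‖x‖ := by
  have h1 : ‖Vf K t x‖ = max ‖x.2‖ ‖-K t * x.1‖ := Prod.norm_def _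
  have h2 : ‖x‖ = max ‖x.1‖ ‖x.2‖ := Prod.norm_def _
  rw [h1]
  have e : ‖-K t * x.1‖ = |K t| * ‖x.1‖ := by
    rw [norm_mul, norm_neg]; rfl
  rw [e, max_le_iff]
  have n1 : ‖x.1‖ ≤ ‖x‖ := by rw [h2]; exact le_max_left _ _
  have n2 : ‖x.2‖ ≤ ‖x‖ := by rw [h2]; exact le_max_right _ _
  have hx : 0 ≤ ‖x‖ := norm_nonneg _
  constructor <;> nlinarith [abs_nonneg (K t)]

/-- One Picard–Lindelöf step of uniform length `1/(2*(M+1))`. -/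
lemma step (K : ℝ → ℝ) (hK : Continuous K) (M : ℝ) (hM : 0 ≤ M) (t₀ : ℝ)
    (hbd : ∀ t ∈ Icc (t₀ - 1/(2*(M+1))) (t₀ + 1/(2*(M+1))), |K t| ≤ M) (x₀ : ℝ × ℝ) :
    ∃ F : ℝ → ℝ × ℝ, F t₀ = x₀ ∧ ∀ t ∈ Icc (t₀ - 1/(2*(M+1))) (t₀ + 1/(2*(M+1))),
      HasDerivWithinAt F (Vf K t (F t)) (Icc (t₀ - 1/(2*(M+1))) (t₀ + 1/(2*(M+1)))) t := by
  set δ : ℝ := 1/(2*(M+1)) with hδ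
  have hM1 : (0:ℝ) < M + 1 := by linarith
  have hδ0 : 0 < δ := by positivity
  have hpl : IsPicardLindelof (Vf K) (tmin := t₀ - δ) (tmax := t₀ + δ)
      ⟨t₀, by constructor <;> linarith⟩ x₀ (⟨‖x₀‖ + 1, by positivity⟩ : NNReal) 0
      (⟨(M + 1) * (2 * ‖x₀‖ + 2), by positivity⟩ : NNReal) (⟨M+1, by linarith⟩ : NNReal) := by
    constructor
    · exact fun t ht => (Vf_lip K t hM (hbd t ht)).lipschitzOnWith
    · exact fun x _ => (Vf_cont K hK x).continuousOn
    · intro t ht x hx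
      have hxn : ‖x‖ ≤ 2 * ‖x₀‖ + 2 := by
        have : ‖x - x₀‖ ≤ ‖x₀‖ + 1 := mem_closedBall_iff_norm.mp hx
        have := norm_sub_norm_le x x₀
        linarith
      show ‖Vf K t x‖ ≤ (M + 1) * (2 * ‖x₀‖ + 2)
      calc ‖Vf K t x‖ ≤ (M + 1) * ‖x‖ := Vf_norm K t hM (hbd t ht) x
        _ ≤ (M + 1) * (2 * ‖x₀‖ + 2) := by nlinarith
    · show (M + 1) * (2 * ‖x₀‖ + 2) * max (t₀ + δ - t₀) (t₀ - (t₀ - δ)) ≤ (‖x₀‖ + 1) - 0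
      rw [sub_zero]
      have h1 : max (t₀ + δ - t₀) (t₀ - (t₀ - δ)) = δ := by
        have : t₀ + δ - t₀ = δ := by ring
        have : t₀ - (t₀ - δ) = δ := by ring
        simp_all
      rw [h1, hδ]
      rw [eq_comm] at hδ
      have : (M + 1) * (2 * ‖x₀‖ + 2) * (1 / (2 * (M + 1))) = ‖x₀‖ + 1 := by
        field_simp
      rw [this]
  exact hpl.exists_eq_forall_mem_Icc_hasDerivWithinAt₀

/-- Gluing two solutions at a common point. -/
lemma glue (K : ℝ → ℝ) (F G : ℝ → ℝ × ℝ) (a b c : ℝ) (hab : a ≤ b) (hbc : b ≤ c)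
    (hF : ∀ t ∈ Icc a b, HasDerivWithinAt F (Vf K t (F t)) (Icc a b) t)
    (hG : ∀ t ∈ Icc b c, HasDerivWithinAt G (Vf K t (G t)) (Icc b c) t)
    (hFG : F b = G b) :
    ∀ t ∈ Icc a c, HasDerivWithinAt (fun t => if t ≤ b then F t else G t)
      (Vf K t ((fun t => if t ≤ b then F t else G t) t)) (Icc a c) t := by
  set H : ℝ → ℝ × ℝ := fun t => if t ≤ b then F t else G t with hH
  have eqF : EqOn H F (Icc a b) := fun t ht => if_pos ht.2
  have eqG : EqOn H G (Icc b c) := by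
    intro t ht
    by_cases h : t ≤ b
    · have : t = b := le_antisymm h ht.1
      simp [hH, this, hFG]
    · exact if_neg h
  intro t ht
  have hunion : Icc a b ∪ Icc b c = Icc a c := Icc_union_Icc_eq_Icc hab hbc
  rw [← hunion]
  by_cases h : t ≤ b
  · have htab : t ∈ Icc a b := ⟨ht.1, h⟩
    have hHt : H t = F t := eqF htab
    have p1 : HasDerivWithinAt H (Vf K t (H t)) (Icc a b) t := by
      rw [hHt]; exact (hF t htab).congr eqF hHt
    have p2 : HasDerivWithinAt H (Vf K t (H t)) (Icc b c) t := by
      rcases eq_or_lt_of_le h with rfl | hlt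
      · have hbm : t ∈ Icc t c := ⟨le_rfl, hbc⟩
        rw [hHt, hFG]
        exact (hG t hbm).congr eqG (eqG hbm)
      · rw [hasDerivWithinAt_iff_hasFDerivWithinAt]
        apply HasFDerivWithinAt.of_notMem_closure
        rw [closure_Icc]
        intro hmem
        exact absurd hmem.1 (not_le.mpr hlt)
    exact p1.union p2
  · push_neg at h
    have htbc : t ∈ Icc b c := ⟨le_of_lt h, ht.2⟩
    have hHt : H t = G t := eqG htbc
    have p2 : HasDerivWithinAt H (Vf K t (H t)) (Icc b c) t := by
      rw [hHt]; exact (hG t htbc).congr eqG hHt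
    have p1 : HasDerivWithinAt H (Vf K t (H t)) (Icc a b) t := by
      rw [hasDerivWithinAt_iff_hasFDerivWithinAt]
      apply HasFDerivWithinAt.of_notMem_closure
      rw [closure_Icc]
      intro hmem
      exact absurd hmem.2 (not_le.mpr h)
    exact p1.union p2

lemma sol_Icc (K : ℝ → ℝ) (hK : Continuous K) (N : ℝ) (hN : 0 ≤ N) (x₀ : ℝ × ℝ) :
    ∃ F : ℝ → ℝ × ℝ, F 0 = x₀ ∧ ∀ t ∈ Icc (-N) N,
      HasDerivWithinAt F (Vf K t (F t)) (Icc (-N) N) t := by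
  obtain ⟨C, hC⟩ := (isCompact_Icc (a := -N-1) (b := N+1)).exists_bound_of_continuousOn
    hK.continuousOn
  set M : ℝ := max C 0 with hMdef
  have hM : 0 ≤ M := le_max_right _ _
  set δ : ℝ := 1/(2*(M+1)) with hδdef
  have hδ0 : 0 < δ := by positivity
  have hδhalf : δ ≤ 1/2 := by
    rw [hδdef]
    rw [div_le_div_iff₀ (by positivity) (by norm_num)]
    linarith
  have hbdM : ∀ t ∈ Icc (-N-1) (N+1), |K t| ≤ M := fun t ht =>
    le_trans (hC t ht) (le_max_left _ _)
  have claim : ∀ k : ℕ, (k:ℝ) * δ ≤ N + 1 → ∃ F : ℝ → ℝ × ℝ, F 0 = x₀ ∧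
      ∀ t ∈ Icc (-((k:ℝ)*δ)) ((k:ℝ)*δ),
        HasDerivWithinAt F (Vf K t (F t)) (Icc (-((k:ℝ)*δ)) ((k:ℝ)*δ)) t := by
    intro k
    induction k with
    | zero =>
      intro _
      have hbd0 : ∀ t ∈ Icc ((0:ℝ) - δ) (0 + δ), |K t| ≤ M := by
        intro t ht
        apply hbdM
        have h1 := ht.1; have h2 := ht.2
        constructor <;> [linarith; linarith]
      obtain ⟨G, hG0, hG⟩ := step K hK M hM 0 hbd0 x₀
      refine ⟨G, hG0, ?_⟩
      intro t ht
      have e : -((0:ℕ):ℝ) * δ = 0 := by norm_num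
      simp only [Nat.cast_zero, zero_mul, neg_zero] at ht ⊢
      have hsub : Icc (0:ℝ) 0 ⊆ Icc (0 - δ) (0 + δ) := Icc_subset_Icc (by linarith) (by linarith)
      exact (hG t (hsub ht)).mono hsub
    | succ k ih =>
      intro hk1
      have hkδ : (k:ℝ) * δ ≤ N + 1 := by
        push_cast at hk1 ⊢
        nlinarith
      obtain ⟨F, hF0, hF⟩ := ih hkδ
      set b : ℝ := (k:ℝ) * δ with hbdef
      have hb0 : 0 ≤ b := by positivity
      -- forward step at b
      have hbd1 : ∀ t ∈ Icc (b - δ) (b + δ), |K t| ≤ M := by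
        intro t ht
        apply hbdM
        constructor
        · have : -N - 1 ≤ b - δ := by
            have : (0:ℝ) ≤ b := hb0
            linarith
          linarith [ht.1]
        · have : b + δ ≤ N + 1 := by
            push_cast at hk1
            nlinarith
          linarith [ht.2]
      obtain ⟨G, hG0, hG⟩ := step K hK M hM b hbd1 (F b)
      have hGr : ∀ t ∈ Icc b (b + δ), HasDerivWithinAt G (Vf K t (G t)) (Icc b (b+δ)) t := by
        intro t ht
        have hsub : Icc b (b+δ) ⊆ Icc (b-δ) (b+δ) := Icc_subset_Icc (by linarith) le_rfl
        exact (hG t (hsub ht)).mono hsub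
      have hH1 := glue K F G (-b) b (b+δ) (by linarith) (by linarith) hF hGr hG0.symm
      set H1 : ℝ → ℝ × ℝ := fun t => if t ≤ b then F t else G t with hH1def
      have hH10 : H1 0 = x₀ := by
        rw [hH1def]
        simp only [if_pos hb0]
        exact hF0
      -- backward step at -b
      have hbd2 : ∀ t ∈ Icc (-b - δ) (-b + δ), |K t| ≤ M := by
        intro t ht
        apply hbdM
        constructor
        · have : -(N+1) ≤ -b - δ := by
            push_cast at hk1
            nlinarith
          have := ht.1; linarith
        · have : -b + δ ≤ N + 1 := by nlinarith
          linarith [ht.2]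
      obtain ⟨G₂, hG₂0, hG₂⟩ := step K hK M hM (-b) hbd2 (H1 (-b))
      have hG₂r : ∀ t ∈ Icc (-b-δ) (-b), HasDerivWithinAt G₂ (Vf K t (G₂ t)) (Icc (-b-δ) (-b)) t := by
        intro t ht
        have hsub : Icc (-b-δ) (-b) ⊆ Icc (-b-δ) (-b+δ) := Icc_subset_Icc le_rfl (by linarith)
        exact (hG₂ t (hsub ht)).mono hsub
      have hH2 := glue K G₂ H1 (-b-δ) (-b) (b+δ) (by linarith) (by linarith) hG₂r
        (fun t ht => (hH1 t (Icc_subset_Icc (by linarith) le_rfl ht)).mono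
          (Icc_subset_Icc (by linarith) le_rfl)) hG₂0
      refine ⟨fun t => if t ≤ -b then G₂ t else H1 t, ?_, ?_⟩
      · by_cases h : (0:ℝ) ≤ -b
        · have hnb : -b = 0 := le_antisymm (by linarith) h
          simp only [if_pos h]
          rw [← hnb, hG₂0, hnb, ← hnb]
          have : -b ≤ b := by linarith
          rw [hnb]
          exact hH10
        · simp only [if_neg h]
          exact hH10
      · have hcast : -(((k:ℕ)+1:ℝ) * δ) = -b - δ ∧ (((k:ℕ)+1:ℝ) * δ) = b + δ := by
          constructor <;> (rw [hbdef]; ring)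
        push_cast
        rw [hcast.1, hcast.2]
        exact hH2
  -- choose k with N ≤ k δ ≤ N + 1
  set k : ℕ := ⌈N/δ⌉₊ with hkdef
  have hk1 : (k:ℝ) * δ ≤ N + 1 := by
    have h1 : (k:ℝ) < N/δ + 1 := Nat.ceil_lt_add_one (by positivity)
    have := mul_lt_mul_of_pos_right h1 hδ0
    rw [add_mul, div_mul_cancel₀ _ (ne_of_gt hδ0)] at this
    nlinarith
  have hk2 : N ≤ (k:ℝ) * δ := by
    have := Nat.le_ceil (N/δ)
    calc N = N/δ * δ := by field_simp
    _ ≤ (k:ℝ) * δ := by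
        apply mul_le_mul_of_nonneg_right _ (le_of_lt hδ0)
        exact this
  obtain ⟨F, hF0, hF⟩ := claim k hk1
  refine ⟨F, hF0, fun t ht => ?_⟩
  have hsub : Icc (-N) N ⊆ Icc (-((k:ℝ)*δ)) ((k:ℝ)*δ) := Icc_subset_Icc (by linarith) hk2
  exact (hF t (hsub ht)).mono hsub

lemma sol_global (K : ℝ → ℝ) (hK : Continuous K) (x₀ : ℝ × ℝ) :
    ∃ U : ℝ → ℝ × ℝ, U 0 = x₀ ∧ ∀ t, HasDerivAt U (Vf K t (U t)) t := by
  choose F hF0 hF using fun n : ℕ => sol_Icc K hK n (Nat.cast_nonneg n) x₀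
  have hFint : ∀ n : ℕ, ∀ t ∈ Ioo (-(n:ℝ)) n, HasDerivAt (F n) (Vf K t (F n t)) t := by
    intro n t ht
    exact (hF n t (Ioo_subset_Icc_self ht)).hasDerivAt (Icc_mem_nhds ht.1 ht.2)
  have agree : ∀ m n : ℕ, 1 ≤ m → m ≤ n → EqOn (F m) (F n) (Icc (-(m:ℝ)) m) := by
    intro m n hm hmn
    obtain ⟨C, hC⟩ := (isCompact_Icc (a := -(m:ℝ)) (b := m)).exists_bound_of_continuousOn
      hK.continuousOn
    set M : ℝ := max C 0 with hMdef
    have hM : 0 ≤ M := le_max_right _ _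
    set s : ℝ → Set (ℝ × ℝ) := fun t => if t ∈ Icc (-(m:ℝ)) m then univ else ∅ with hsdef
    have hv : ∀ t, LipschitzOnWith (⟨M+1, by linarith⟩ : NNReal) (Vf K t) (s t) := by
      intro t
      by_cases h : t ∈ Icc (-(m:ℝ)) m
      · rw [hsdef]
        simp only [if_pos h]
        apply LipschitzWith.lipschitzOnWith
        exact Vf_lip K t hM (le_trans (hC t h) (le_max_left _ _))
      · rw [hsdef]
        simp only [if_neg h]
        exact lipschitzOnWith_empty _ _
    have hm0 : (0:ℝ) < m := by exact_mod_cast Nat.lt_of_lt_of_le Nat.zero_lt_one hm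
    have hmn' : (m:ℝ) ≤ n := by exact_mod_cast hmn
    apply ODE_solution_unique_of_mem_Icc (fun t _ => hv t) (t₀ := 0) ⟨by linarith, hm0⟩
    · exact fun t ht => (hF m t ht).continuousWithinAt
    · exact hFint m
    · intro t ht
      rw [hsdef]
      simp only [if_pos (Ioo_subset_Icc_self ht)]
      exact mem_univ _
    · exact fun t ht => ((hF n t (Icc_subset_Icc (by linarith) hmn' ht)).continuousWithinAt).mono
        (Icc_subset_Icc (by linarith) hmn')
    · exact fun t ht => hFint n t ⟨by linarith [ht.1], by linarith [ht.2]⟩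
    · intro t ht
      rw [hsdef]
      simp only [if_pos (Ioo_subset_Icc_self ht)]
      exact mem_univ _
    · rw [hF0 m, hF0 n]
  refine ⟨fun t => F (⌈|t|⌉₊ + 1) t, by simpa using hF0 1, ?_⟩
  intro t
  set n : ℕ := ⌈|t|⌉₊ + 2 with hndef
  have key : ∀ s : ℝ, |s - t| < 1/2 → F (⌈|s|⌉₊ + 1) s = F n s := by
    intro s hs
    have habs : |s| ≤ |t| + 1/2 := by
      calc |s| = |s - t + t| := by ring_nf
      _ ≤ |s - t| + |t| := abs_add_le _ _
      _ ≤ |t| + 1/2 := by linarith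
    have h1 : (⌈|s|⌉₊ + 1 : ℕ) ≤ n := by
      have hcl : ⌈|s|⌉₊ ≤ ⌈|t|⌉₊ + 1 := by
        apply Nat.ceil_le.mpr
        push_cast
        have := Nat.le_ceil |t|
        linarith
      omega
    have h2 : s ∈ Icc (-((⌈|s|⌉₊ + 1 : ℕ):ℝ)) ((⌈|s|⌉₊ + 1 : ℕ):ℝ) := by
      have : |s| ≤ ((⌈|s|⌉₊ + 1 : ℕ):ℝ) := by
        push_cast
        linarith [Nat.le_ceil |s|]
      exact ⟨by linarith [abs_le.mp this |>.1, abs_le.mp this |>.2, (abs_le.mp this).1],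
        (abs_le.mp this).2⟩
    exact agree _ n (Nat.le_add_left 1 _) h1 h2
  have heq : (fun s => F (⌈|s|⌉₊ + 1) s) =ᶠ[nhds t] F n := by
    filter_upwards [Metric.ball_mem_nhds t (by norm_num : (0:ℝ) < 1/2)] with s hs
    exact key s (by rw [Metric.mem_ball, Real.dist_eq] at hs; exact hs)
  have htmem : t ∈ Ioo (-(n:ℝ)) n := by
    have : |t| < n := by
      rw [hndef]
      push_cast
      linarith [Nat.le_ceil |t|]
    rcases abs_lt.mp this with ⟨h1, h2⟩
    exact ⟨h1, h2⟩
  have hvalue : (fun s => F (⌈|s|⌉₊ + 1) s) t = F n t := key t (by simp)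
  have hd := hFint n t htmem
  have := hd.congr_of_eventuallyEq heq
  rwa [hvalue]

lemma hasDerivAt_fst' {U : ℝ → ℝ × ℝ} {d : ℝ × ℝ} {t : ℝ} (h : HasDerivAt U d t) :
    HasDerivAt (fun s => (U s).1) d.1 t := by
  have := HasFDerivAt.comp_hasDerivAt t ((ContinuousLinearMap.fst ℝ ℝ ℝ).hasFDerivAt) h
  exact this

lemma hasDerivAt_snd' {U : ℝ → ℝ × ℝ} {d : ℝ × ℝ} {t : ℝ} (h : HasDerivAt U d t) :
    HasDerivAt (fun s => (U s).2) d.2 t := by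
  have := HasFDerivAt.comp_hasDerivAt t ((ContinuousLinearMap.snd ℝ ℝ ℝ).hasFDerivAt) h
  exact this

/-- A scalar Jacobi field with prescribed initial data at an arbitrary point. -/
lemma scalar_sol (K : ℝ → ℝ) (hK : Continuous K) (a₀ : ℝ) :
    ∃ u w : ℝ → ℝ, ContDiff ℝ 2 u ∧ (∀ t, deriv (deriv u) t + K t * u t = 0) ∧
      u a₀ = 0 ∧ w a₀ = 1 ∧ (∀ t, HasDerivAt u (w t) t) ∧
      (∀ t, HasDerivAt w (-K t * u t) t) := by
  set K' : ℝ → ℝ := fun t => K (t + a₀) with hK'def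
  have hK' : Continuous K' := hK.comp (continuous_id.add continuous_const)
  obtain ⟨U, hU0, hU⟩ := sol_global K' hK' (0, 1)
  set u : ℝ → ℝ := fun t => (U (t - a₀)).1 with hudef
  set w : ℝ → ℝ := fun t => (U (t - a₀)).2 with hwdef
  have hUshift : ∀ t : ℝ, HasDerivAt (fun s => U (s - a₀)) (Vf K' (t - a₀) (U (t - a₀))) t := by
    intro t
    have h1 : HasDerivAt (fun s : ℝ => s - a₀) 1 t := (hasDerivAt_id t).sub_const a₀
    have := (hU (t - a₀)).scomp t h1
    rw [one_smul] at this
    exact this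
  have hu : ∀ t, HasDerivAt u (w t) t := by
    intro t
    have h := hasDerivAt_fst' (hUshift t)
    simpa [Vf, hudef, hwdef] using h
  have hw : ∀ t, HasDerivAt w (-K t * u t) t := by
    intro t
    have h := hasDerivAt_snd' (hUshift t)
    simp only [Vf] at h
    have e : K' (t - a₀) = K t := by rw [hK'def]; norm_num
    rw [e] at h
    exact h
  have hud : Differentiable ℝ u := fun t => (hu t).differentiableAt
  have hwd : Differentiable ℝ w := fun t => (hw t).differentiableAt
  have hderivu : deriv u = w := funext fun t => (hu t).deriv
  have hderivw : deriv w = fun t => -K t * u t := funext fun t => (hw t).deriv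
  refine ⟨u, w, ?_, ?_, ?_, ?_, hu, hw⟩
  · have h2 : (2 : WithTop ℕ∞) = 1 + 1 := by norm_num
    rw [h2, contDiff_succ_iff_deriv]
    refine ⟨hud, by simp, ?_⟩
    rw [hderivu, contDiff_one_iff_deriv]
    exact ⟨hwd, by rw [hderivw]; exact (hK.neg.mul (hud.continuous))⟩
  · intro t
    rw [hderivu, hderivw]
    ring
  · simp [hudef, hU0]
  · simp [hwdef, hU0]

/-- A complete geodesic with no Jacobi field having more than one zero is stable. -/
theorem stmt8 (K : ℝ → ℝ) (hK : Continuous K)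
    (hnozeros : ∀ u : ℝ → ℝ, ContDiff ℝ 2 u →
      (∀ t, deriv (deriv u) t + K t * u t = 0) →
      ∀ a b : ℝ, a ≠ b → u a = 0 → u b = 0 → u = 0) :
    ∀ f : ℝ → ℝ, ContDiff ℝ 1 f → HasCompactSupport f →
      (∫ t, K t * (f t) ^ 2) ≤ ∫ t, (deriv f t) ^ 2 := by
  intro f hf hsupp
  obtain ⟨R0, hR0⟩ := hsupp.isCompact.isBounded.subset_closedBall 0
  set R : ℝ := max R0 0 with hRdef
  have hR : 0 ≤ R := le_max_right _ _
  have hsub : tsupport f ⊆ Icc (-R) R := by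
    intro x hx
    have := hR0 hx
    rw [Real.closedBall_eq_Icc] at this
    constructor
    · have h1 := this.1
      have : R0 ≤ R := le_max_left _ _
      linarith [h1]
    · have h2 := this.2
      have : R0 ≤ R := le_max_left _ _
      linarith [h2]
  set a₀ : ℝ := -R - 2 with ha₀def
  obtain ⟨u, w, hC2, hODE, hu0, hw1, hu, hw⟩ := scalar_sol K hK a₀
  have hne : u ≠ 0 := by
    intro h
    have h1 : HasDerivAt (fun _ : ℝ => (0:ℝ)) (w a₀) a₀ := by
      have := hu a₀
      rwa [h] at this
    have h2 : w a₀ = 0 := h1.unique (hasDerivAt_const _ _)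
    rw [hw1] at h2
    exact one_ne_zero h2
  have hnozero : ∀ b, b ≠ a₀ → u b ≠ 0 := fun b hb hub =>
    hne (hnozeros u hC2 hODE a₀ b (fun h => hb h.symm) hu0 hub)
  have hucont : Continuous u := hC2.continuous
  have hupos : ∀ b, a₀ < b → 0 < u b := by
    intro b hb
    rcases lt_trichotomy 0 (u b) with h | h | h
    · exact h
    · exact absurd h.symm (hnozero b (ne_of_gt hb))
    · exfalso
      have hd1 : HasDerivAt u 1 a₀ := hw1 ▸ hu a₀
      have hslope := hasDerivAt_iff_tendsto_slope.mp hd1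
      have hev : ∀ᶠ t in nhdsWithin a₀ (Ioi a₀), 0 < slope u a₀ t := by
        have hle : nhdsWithin a₀ (Ioi a₀) ≤ nhdsWithin a₀ {a₀}ᶜ :=
          nhdsWithin_mono _ (fun x hx => ne_of_gt hx)
        exact (hslope.mono_left hle).eventually (eventually_gt_nhds zero_lt_one)
      have hIoo : Ioo a₀ b ∈ nhdsWithin a₀ (Ioi a₀) := Ioo_mem_nhdsGT_of_mem ⟨le_rfl, hb⟩
      obtain ⟨t₁, ht₁s, ht₁m⟩ := (hev.and (Filter.eventually_of_mem hIoo
        (fun x (hx : x ∈ Ioo a₀ b) => hx))).exists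
      have hut₁ : 0 < u t₁ := by
        have hsl : slope u a₀ t₁ = u t₁ / (t₁ - a₀) := by
          rw [slope_def_field, hu0, sub_zero]
        rw [hsl] at ht₁s
        have htpos : 0 < t₁ - a₀ := sub_pos.mpr ht₁m.1
        have := mul_pos ht₁s htpos
        rwa [div_mul_cancel₀ _ (ne_of_gt htpos)] at this
      have hmem : (0:ℝ) ∈ Icc (u b) (u t₁) := ⟨le_of_lt h, le_of_lt hut₁⟩
      obtain ⟨z, hz, huz⟩ := intermediate_value_Icc' (le_of_lt ht₁m.2)
        hucont.continuousOn hmem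
      exact hnozero z (ne_of_gt (lt_of_lt_of_le ht₁m.1 hz.1)) huz
  -- setup the interval
  set c : ℝ := -R - 1 with hcdef
  set d : ℝ := R + 1 with hddef
  have hcd : c ≤ d := by rw [hcdef, hddef]; linarith
  have hupos' : ∀ t ∈ Icc c d, 0 < u t := fun t ht => hupos t (by
    have := ht.1; rw [hcdef] at this; rw [ha₀def]; linarith)
  have hfd : Differentiable ℝ f := hf.differentiable (by norm_num)
  have hf'c : Continuous (deriv f) := hf.continuous_deriv le_rfl
  have hwcont : Continuous w :=
    continuous_iff_continuousAt.mpr fun t => ((hw t).differentiableAt).continuousAt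
  set φ : ℝ → ℝ := fun t => w t * f t ^ 2 / u t with hφdef
  set E : ℝ → ℝ := fun t => (deriv f t)^2 - K t * f t^2 - (deriv f t - w t / u t * f t)^2
    with hEdef
  have hEderiv : ∀ t ∈ Icc c d, HasDerivAt φ (E t) t := by
    intro t ht
    have hut : u t ≠ 0 := ne_of_gt (hupos' t ht)
    have h1 : HasDerivAt (fun s => f s ^ 2) (2 * f t ^ 1 * deriv f t) t := by
      have := ((hfd t).hasDerivAt).pow 2
      norm_num at this ⊢
      exact this
    have h2 := (hw t).mul h1
    have h3 := h2.div (hu t) hut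
    refine HasDerivAt.congr_deriv (f := φ) h3 ?_
    rw [hEdef]
    simp only [Pi.mul_apply]
    field_simp
    ring
  have hint1 : IntervalIntegrable (fun t => (deriv f t)^2) volume c d :=
    (hf'c.pow 2).intervalIntegrable c d
  have hint2 : IntervalIntegrable (fun t => K t * f t^2) volume c d :=
    (hK.mul (hf.continuous.pow 2)).intervalIntegrable c d
  have hcontq : ContinuousOn (fun t => (deriv f t - w t / u t * f t)^2) (Icc c d) := by
    apply ContinuousOn.pow
    apply ContinuousOn.sub hf'c.continuousOn
    exact (ContinuousOn.div hwcont.continuousOn hucont.continuousOn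
      (fun t ht => ne_of_gt (hupos' t ht))).mul hf.continuous.continuousOn
  have hint3 : IntervalIntegrable (fun t => (deriv f t - w t / u t * f t)^2) volume c d := by
    apply ContinuousOn.intervalIntegrable
    rwa [uIcc_of_le hcd]
  have hfc0 : f c = 0 := by
    apply image_eq_zero_of_notMem_tsupport
    intro hmem
    have := (hsub hmem).1
    rw [hcdef] at this
    linarith
  have hfd0 : f d = 0 := by
    apply image_eq_zero_of_notMem_tsupport
    intro hmem
    have := (hsub hmem).2
    rw [hddef] at this
    linarith
  have hEzero : ∫ t in c..d, E t = 0 := by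
    rw [intervalIntegral.integral_eq_sub_of_hasDerivAt
      (fun t ht => hEderiv t (by rwa [uIcc_of_le hcd] at ht))
      (by apply ContinuousOn.intervalIntegrable
          rw [uIcc_of_le hcd, hEdef]
          apply ContinuousOn.sub
          apply ContinuousOn.sub (hf'c.pow 2).continuousOn
            ((hK.mul (hf.continuous.pow 2)).continuousOn)
          exact hcontq)]
    rw [hφdef]
    simp [hfc0, hfd0]
  have hsplit : ∫ t in c..d, E t = (∫ t in c..d, (deriv f t)^2) - (∫ t in c..d, K t * f t^2)
      - ∫ t in c..d, (deriv f t - w t / u t * f t)^2 := by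
    rw [hEdef]
    rw [intervalIntegral.integral_sub (hint1.sub hint2) hint3,
      intervalIntegral.integral_sub hint1 hint2]
  have hq : 0 ≤ ∫ t in c..d, (deriv f t - w t / u t * f t)^2 :=
    intervalIntegral.integral_nonneg hcd (fun t _ => sq_nonneg _)
  have hineq : (∫ t in c..d, K t * f t^2) ≤ ∫ t in c..d, (deriv f t)^2 := by
    have := hEzero ▸ hsplit
    linarith [this]
  -- convert the goal to interval integrals
  have hg1 : (∫ t, K t * f t ^ 2) = ∫ t in c..d, K t * f t ^ 2 := by
    rw [intervalIntegral.integral_eq_integral_of_support_subset]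
    intro x hx
    have hfx : f x ≠ 0 := by
      intro h0
      apply hx
      simp [h0]
    have : x ∈ tsupport f := subset_tsupport f hfx
    have h1 := (hsub this).1
    have h2 := (hsub this).2
    constructor
    · rw [hcdef]; linarith
    · rw [hddef]; linarith
  have hg2 : (∫ t, (deriv f t) ^ 2) = ∫ t in c..d, (deriv f t) ^ 2 := by
    rw [intervalIntegral.integral_eq_integral_of_support_subset]
    intro x hx
    have hfx : deriv f x ≠ 0 := by
      intro h0
      apply hx
      simp [h0]
    have : x ∈ tsupport f := support_deriv_subset hfx
    have h1 := (hsub this).1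
    have h2 := (hsub this).2
    constructor
    · rw [hcdef]; linarith
    · rw [hddef]; linarith
  rw [hg1, hg2]
  exact hineq
end
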